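/- arXiv:2012.15844 — 11 statements merged into one kernel-verified Lean document; each statement's English description precedes it below -/
import Mathlib

section
/- Let rk be a Sylvester matrix rank function on a ring R, let a ∈ R, and set b_i = rk(a^i) − rk(a^{i+1}). Then b_i ≥ b_{i+1} for every i ≥ 0; equivalently, rk(a^n) + rk(a^{n+2}) ≥ 2·rk(a^{n+1}) for all n ≥ 0. -/
/-- A Sylvester matrix rank function on a ring `R`: it assigns a non-negative real number
to each matrix over `R` satisfying (SMat1)-(SMat4). -/
structure SylvesterMatrixRank (R : Type) [Ring R] where
  rk : ∀ {n m : ℕ}, Matrix (Fin n) (Fin m) R → ℝ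
  rk_nonneg : ∀ {n m : ℕ} (A : Matrix (Fin n) (Fin m) R), 0 ≤ rk A
  rk_zero : ∀ {n m : ℕ}, rk (0 : Matrix (Fin n) (Fin m) R) = 0
  rk_one : rk (1 : Matrix (Fin 1) (Fin 1) R) = 1
  rk_mul_left : ∀ {n m k : ℕ} (A : Matrix (Fin n) (Fin m) R) (B : Matrix (Fin m) (Fin k) R),
    rk (A * B) ≤ rk A
  rk_mul_right : ∀ {n m k : ℕ} (A : Matrix (Fin n) (Fin m) R) (B : Matrix (Fin m) (Fin k) R),
    rk (A * B) ≤ rk B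
  rk_diag : ∀ {n m n' m' : ℕ} (A : Matrix (Fin n) (Fin m) R) (B : Matrix (Fin n') (Fin m') R),
    rk ((Matrix.fromBlocks A 0 0 B).submatrix finSumFinEquiv.symm finSumFinEquiv.symm)
      = rk A + rk B
  rk_triangle : ∀ {n m n' m' : ℕ} (A : Matrix (Fin n) (Fin m) R) (B : Matrix (Fin n') (Fin m') R)
      (C : Matrix (Fin n) (Fin m') R),
    rk A + rk B ≤
      rk ((Matrix.fromBlocks A C 0 B).submatrix finSumFinEquiv.symm finSumFinEquiv.symm)

lemma reindex_two {R : Type} [Ring R] (x y z w : R) :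
    ((Matrix.fromBlocks !![x] !![y] !![z] !![w]).submatrix finSumFinEquiv.symm finSumFinEquiv.symm)
      = !![x,y;z,w] := by
  ext i j
  fin_cases i <;> fin_cases j <;>
    simp [finSumFinEquiv, Fin.addCases, Fin.subNat, Matrix.fromBlocks]

lemma rk_diag2 {R : Type} [Ring R] (rk : SylvesterMatrixRank R) (x w : R) :
    rk.rk !![x,(0:R);0,w] = rk.rk !![x] + rk.rk !![w] := by
  have h := rk.rk_diag !![x] !![w]
  rw [show (0 : Matrix (Fin 1) (Fin 1) R) = !![(0:R)] by ext i j; fin_cases i; fin_cases j; rfl]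
    at h
  rw [reindex_two] at h
  exact h

lemma rk_tri2 {R : Type} [Ring R] (rk : SylvesterMatrixRank R) (x y w : R) :
    rk.rk !![x] + rk.rk !![w] ≤ rk.rk !![x,y;(0:R),w] := by
  have h := rk.rk_triangle !![x] !![w] !![y]
  rw [show (0 : Matrix (Fin 1) (Fin 1) R) = !![(0:R)] by ext i j; fin_cases i; fin_cases j; rfl]
    at h
  rw [reindex_two] at h
  exact h

lemma rk_neg1 {R : Type} [Ring R] (rk : SylvesterMatrixRank R) (x : R) :
    rk.rk !![-x] = rk.rk !![x] := by
  have h1 : !![-x] = !![x] * !![(-1 : R)] := by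
    ext i j; fin_cases i; fin_cases j; simp [Matrix.mul_apply]
  have h2 : !![x] = !![-x] * !![(-1 : R)] := by
    ext i j; fin_cases i; fin_cases j; simp [Matrix.mul_apply]
  refine le_antisymm ?_ ?_
  · rw [h1] at *; nth_rewrite 1 [h1]; exact rk.rk_mul_left _ _
  · nth_rewrite 1 [h2]; exact rk.rk_mul_left _ _

/-- For a Sylvester matrix rank function `rk` and `a ∈ R`, the differences
`b i = rk (a^i) - rk (a^(i+1))` are non-increasing; equivalently
`rk (a^n) + rk (a^(n+2)) ≥ 2 * rk (a^(n+1))` for all `n`. -/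
theorem rk_pow_differences_antitone {R : Type} [Ring R] (rk : SylvesterMatrixRank R)
    (a : R) (b : ℕ → ℝ) (hb : ∀ i : ℕ, b i = rk.rk !![a ^ i] - rk.rk !![a ^ (i + 1)]) :
    (∀ i : ℕ, b (i + 1) ≤ b i) ∧
      (∀ n : ℕ, 2 * rk.rk !![a ^ (n + 1)] ≤ rk.rk !![a ^ n] + rk.rk !![a ^ (n + 2)]) := by
  have key : ∀ n : ℕ, 2 * rk.rk !![a ^ (n + 1)] ≤ rk.rk !![a ^ n] + rk.rk !![a ^ (n + 2)] := by
    intro n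
    have hc : ∀ m : ℕ, a * a ^ m = a ^ m * a := fun m => (pow_succ' a m).symm.trans (pow_succ a m)
    set X : Matrix (Fin 2) (Fin 2) R := !![0, a^(n+1); a^(n+1), a^n] with hX
    -- lower bound
    have hlow : 2 * rk.rk !![a ^ (n + 1)] ≤ rk.rk X := by
      have hPX : !![(0:R),1;1,0] * X = !![a^(n+1), a^n; 0, a^(n+1)] := by
        ext i j; fin_cases i <;> fin_cases j <;> simp [hX, Matrix.mul_apply, Fin.sum_univ_two]
      have h1 := rk_tri2 rk (a^(n+1)) (a^n) (a^(n+1))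
      have h2 : rk.rk (!![(0:R),1;1,0] * X) ≤ rk.rk X := rk.rk_mul_right _ _
      rw [hPX] at h2
      linarith
    -- upper bound
    have hEXF : !![(1:R),-a;0,1] * X * !![(1:R),0;-a,1] = !![-(a^(n+2)), 0; 0, a^n] := by
      ext i j; fin_cases i <;> fin_cases j <;>
        (simp [hX, Matrix.mul_apply, Fin.sum_univ_two, pow_succ, mul_assoc, hc] <;> (try simp [← mul_assoc, hc]))
    have hXeq : X = !![(1:R),a;0,1] * (!![(1:R),-a;0,1] * X * !![(1:R),0;-a,1]) * !![(1:R),0;a,1] := by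
      ext i j; fin_cases i <;> fin_cases j <;>
        (simp [hX, Matrix.mul_apply, Fin.sum_univ_two, pow_succ, mul_assoc, hc] <;> (try simp [← mul_assoc, hc]))
    have hup : rk.rk X ≤ rk.rk !![a ^ n] + rk.rk !![a ^ (n + 2)] := by
      have h3 : rk.rk X ≤ rk.rk (!![(1:R),-a;0,1] * X * !![(1:R),0;-a,1]) := by
        calc rk.rk X = rk.rk (!![(1:R),a;0,1] * ((!![(1:R),-a;0,1] * X * !![(1:R),0;-a,1]) * !![(1:R),0;a,1])) := by
              rw [← Matrix.mul_assoc]; exact congrArg _ hXeq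
          _ ≤ rk.rk ((!![(1:R),-a;0,1] * X * !![(1:R),0;-a,1]) * !![(1:R),0;a,1]) := rk.rk_mul_right _ _
          _ ≤ _ := rk.rk_mul_left _ _
      rw [hEXF] at h3
      rw [rk_diag2, rk_neg1] at h3
      linarith
    linarith
  refine ⟨fun i => ?_, key⟩
  have h := key i
  have h1 := hb i
  have h2 := hb (i+1)
  simp only [show i + 1 + 1 = i + 2 from rfl] at h2
  linarith
end

section
/- Let rk be a Sylvester matrix rank function on a ring R, let a ∈ R be nilpotent with a^{n+2} = 0. Then rk(a^n) ≥ 2·rk(a^{n+1}). -/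
/-- The 2×2 block matrix `[[a^(n+1), a^n], [0, a^(n+1)]]` factors through `!![a^n]`
via elementary matrices, using `a^(n+2) = 0`. -/
theorem aux_factor {R : Type} [Ring R] (a : R) (n : ℕ) (h : a ^ (n + 2) = 0) :
    (!![a^(n+1), a^n; 0, a^(n+1)] : Matrix (Fin 2) (Fin 2) R)
      = !![1,0;a,1] * ((!![(1:R);0] * !![a^n]) * !![(0:R),1]) * !![1,0;a,1] := by
  have h2 : a * a ^ n * a = 0 := by
    rw [← pow_succ' a n, ← pow_succ, h]
  have h3 : a ^ n * a = a ^ (n+1) := (pow_succ a n).symm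
  have h4 : a * a ^ n = a ^ (n+1) := (pow_succ' a n).symm
  have h5 : a ^ (n+1) * a = 0 := by rw [← pow_succ, h]
  ext i j
  fin_cases i <;> fin_cases j <;>
    simp [Matrix.mul_apply, Matrix.vecMul, Matrix.vecHead, Matrix.vecTail,
      Fin.sum_univ_succ, h2, h3, h4, h5, mul_assoc]

theorem aux_submatrix {R : Type} [Ring R] (a : R) (n : ℕ) :
    ((Matrix.fromBlocks !![a^(n+1)] !![a^n] 0 !![a^(n+1)]).submatrix
        finSumFinEquiv.symm finSumFinEquiv.symm)
      = (!![a^(n+1), a^n; 0, a^(n+1)] : Matrix (Fin 2) (Fin 2) R) := by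
  ext i j
  fin_cases i <;> fin_cases j <;>
    simp [Matrix.fromBlocks, finSumFinEquiv, Matrix.submatrix, Fin.addCases]

/-- If `a` is nilpotent with `a^(n+2) = 0`, then `rk (a^n) ≥ 2 * rk (a^(n+1))` for any
Sylvester matrix rank function `rk`. -/
theorem rk_nilpotent_pow {R : Type} [Ring R] (rk : SylvesterMatrixRank R)
    (a : R) (hnil : IsNilpotent a) (n : ℕ) (h : a ^ (n + 2) = 0) :
    2 * rk.rk !![a ^ (n + 1)] ≤ rk.rk !![a ^ n] := by
  have h1 : rk.rk !![a^(n+1)] + rk.rk !![a^(n+1)]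
      ≤ rk.rk (!![a^(n+1), a^n; 0, a^(n+1)] : Matrix (Fin 2) (Fin 2) R) := by
    have := rk.rk_triangle !![a^(n+1)] !![a^(n+1)] !![a^n]
    rwa [aux_submatrix a n] at this
  have h2 : rk.rk (!![a^(n+1), a^n; 0, a^(n+1)] : Matrix (Fin 2) (Fin 2) R)
      ≤ rk.rk !![a^n] := by
    rw [aux_factor a n h]
    calc rk.rk (!![1,0;a,1] * ((!![(1:R);0] * !![a^n]) * !![(0:R),1]) * !![1,0;a,1])
        ≤ rk.rk (!![1,0;a,1] * ((!![(1:R);0] * !![a^n]) * !![(0:R),1])) :=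
          rk.rk_mul_left _ _
      _ ≤ rk.rk ((!![(1:R);0] * !![a^n]) * !![(0:R),1]) := rk.rk_mul_right _ _
      _ ≤ rk.rk (!![(1:R);0] * !![a^n]) := rk.rk_mul_left _ _
      _ ≤ rk.rk !![a^n] := rk.rk_mul_right _ _
  linarith
end

section
/- Let rk be a Sylvester matrix rank function on a ring R and let A, B be n×m matrices over R. If there exist an n×n matrix C and an m×m matrix D over R with C·A = A, B·D = B, A·D = 0 and C·B = 0, then rk(A+B) = rk(A) + rk(B). -/
/-- Sandwiching: `rk ((P * X * Q).submatrix e e) ≤ rk X` when outer index types are sums. -/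
lemma rk_sandwich_outer {R : Type} [Ring R] (rk : SylvesterMatrixRank R)
    {a b n n' m m' : ℕ} (P : Matrix (Fin n ⊕ Fin n') (Fin a) R)
    (X : Matrix (Fin a) (Fin b) R) (Q : Matrix (Fin b) (Fin m ⊕ Fin m') R) :
    rk.rk ((P * X * Q).submatrix (⇑finSumFinEquiv.symm) (⇑finSumFinEquiv.symm)) ≤ rk.rk X := by
  have h : (P * X * Q).submatrix (⇑finSumFinEquiv.symm) (⇑finSumFinEquiv.symm)
      = (P.submatrix (⇑finSumFinEquiv.symm) id) * X * (Q.submatrix id (⇑finSumFinEquiv.symm)) := by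
    ext i j
    simp [Matrix.mul_apply]
  rw [h]
  exact le_trans (rk.rk_mul_left _ _) (rk.rk_mul_right _ _)

/-- Sandwiching: `rk (P * X * Q) ≤ rk (X.submatrix e e)` when middle index types are sums. -/
lemma rk_sandwich_inner {R : Type} [Ring R] (rk : SylvesterMatrixRank R)
    {a b n n' m m' : ℕ} (P : Matrix (Fin a) (Fin n ⊕ Fin n') R)
    (X : Matrix (Fin n ⊕ Fin n') (Fin m ⊕ Fin m') R) (Q : Matrix (Fin m ⊕ Fin m') (Fin b) R) :
    rk.rk (P * X * Q) ≤
      rk.rk (X.submatrix (⇑finSumFinEquiv.symm) (⇑finSumFinEquiv.symm)) := by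
  have h : P * X * Q
      = (P.submatrix id (⇑finSumFinEquiv.symm)) *
          X.submatrix (⇑finSumFinEquiv.symm) (⇑finSumFinEquiv.symm) *
          (Q.submatrix (⇑finSumFinEquiv.symm) id) := by
    rw [Matrix.submatrix_mul_equiv, Matrix.submatrix_mul_equiv, Matrix.submatrix_id_id]
  rw [h]
  exact le_trans (rk.rk_mul_left _ _) (rk.rk_mul_right _ _)

/-- If `C * A = A`, `B * D = B`, `A * D = 0` and `C * B = 0`, then
`rk (A + B) = rk A + rk B` for any Sylvester matrix rank function `rk`. -/
theorem rk_additivity {R : Type} [Ring R] (rk : SylvesterMatrixRank R)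
    {n m : ℕ} (A B : Matrix (Fin n) (Fin m) R)
    (C : Matrix (Fin n) (Fin n) R) (D : Matrix (Fin m) (Fin m) R)
    (hCA : C * A = A) (hBD : B * D = B) (hAD : A * D = 0) (hCB : C * B = 0) :
    rk.rk (A + B) = rk.rk A + rk.rk B := by
  apply le_antisymm
  · -- upper bound: A + B = [1 1] * diag(A,B) * [1;1]
    have key : Matrix.fromCols (1 : Matrix (Fin n) (Fin n) R) (1 : Matrix (Fin n) (Fin n) R) *
        Matrix.fromBlocks A 0 0 B * Matrix.fromRows (1 : Matrix (Fin m) (Fin m) R) (1 : Matrix (Fin m) (Fin m) R)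
        = A + B := by
      rw [Matrix.fromCols_mul_fromBlocks, Matrix.fromCols_mul_fromRows]
      simp
    calc rk.rk (A + B)
        ≤ rk.rk ((Matrix.fromBlocks A 0 0 B).submatrix
            (⇑finSumFinEquiv.symm) (⇑finSumFinEquiv.symm)) := by
          rw [← key]; exact rk_sandwich_inner rk _ _ _
      _ = rk.rk A + rk.rk B := rk.rk_diag A B
  · -- lower bound: [1;C] * (A+B) * [D 1] = [[B, A+B],[0, A]]
    have key : Matrix.fromRows (1 : Matrix (Fin n) (Fin n) R) C * (A + B) *
        Matrix.fromCols D (1 : Matrix (Fin m) (Fin m) R)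
        = Matrix.fromBlocks B (A + B) 0 A := by
      rw [Matrix.fromRows_mul, Matrix.fromRows_mul_fromCols]
      have h1 : (1 : Matrix (Fin n) (Fin n) R) * (A + B) * D = B := by
        rw [Matrix.one_mul, Matrix.add_mul, hAD, hBD, zero_add]
      have h2 : (1 : Matrix (Fin n) (Fin n) R) * (A + B) * (1 : Matrix (Fin m) (Fin m) R)
          = A + B := by rw [Matrix.one_mul, Matrix.mul_one]
      have h3 : C * (A + B) * D = 0 := by
        rw [Matrix.mul_add, hCA, hCB, add_zero, hAD]
      have h4 : C * (A + B) * (1 : Matrix (Fin m) (Fin m) R) = A := by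
        rw [Matrix.mul_one, Matrix.mul_add, hCA, hCB, add_zero]
      rw [h1, h2, h3, h4]
    calc rk.rk A + rk.rk B
        = rk.rk B + rk.rk A := add_comm _ _
      _ ≤ rk.rk ((Matrix.fromBlocks B (A + B) 0 A).submatrix
            (⇑finSumFinEquiv.symm) (⇑finSumFinEquiv.symm)) := rk.rk_triangle B A (A + B)
      _ ≤ rk.rk (A + B) := by rw [← key]; exact rk_sandwich_outer rk _ _ _
end

section
/- Let rk be a Sylvester matrix rank function on the cartesian product ring R = R₁ × R₂. Then rk((1,0)) + rk((0,1)) = 1, and for any matrix A over R, writing A = A₁ + A₂ where A₁ has entries with second coordinate 0 (obtained by projecting entries to R₁) and A₂ has entries with first coordinate 0, we have rk(A) = rk(A₁) + rk(A₂). -/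
open Matrix

/-- For a Sylvester matrix rank function on `R₁ × R₂`, `rk (1,0) + rk (0,1) = 1`, and for
any matrix `A`, `rk A = rk A₁ + rk A₂` where `A₁` (resp. `A₂`) is obtained by projecting
the entries of `A` to the first (resp. second) coordinate. -/
theorem rk_prod_ring {R₁ R₂ : Type} [Ring R₁] [Ring R₂]
    (rk : SylvesterMatrixRank (R₁ × R₂)) :
    rk.rk !![((1, 0) : R₁ × R₂)] + rk.rk !![((0, 1) : R₁ × R₂)] = 1 ∧
    ∀ {n m : ℕ} (A : Matrix (Fin n) (Fin m) (R₁ × R₂)),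
      rk.rk A = rk.rk (A.map fun x => ((x.1, 0) : R₁ × R₂))
        + rk.rk (A.map fun x => ((0, x.2) : R₁ × R₂)) := by
  have key : ∀ {n m : ℕ} (A : Matrix (Fin n) (Fin m) (R₁ × R₂)),
      rk.rk A = rk.rk (A.map fun x => ((x.1, 0) : R₁ × R₂))
        + rk.rk (A.map fun x => ((0, x.2) : R₁ × R₂)) := by
    intro n m A
    set e₁ : R₁ × R₂ := (1, 0) with he₁
    set e₂ : R₁ × R₂ := (0, 1) with he₂
    set A₁ := A.map (fun x => ((x.1, 0) : R₁ × R₂)) with hA₁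
    set A₂ := A.map (fun x => ((0, x.2) : R₁ × R₂)) with hA₂
    -- basic entrywise facts
    have hs1 : e₁ • A = A₁ := by
      ext i j <;> simp [hA₁, he₁, Matrix.smul_apply, smul_eq_mul, Matrix.map_apply, Prod.mk_mul_mk, Prod.ext_iff]
    have hs2 : e₂ • A = A₂ := by
      ext i j <;> simp [hA₂, he₂, Matrix.smul_apply, smul_eq_mul, Matrix.map_apply, Prod.mk_mul_mk, Prod.ext_iff]
    have hr : ∀ {k : ℕ} (B : Matrix (Fin n) (Fin k) (R₁ × R₂)) (c : R₁ × R₂),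
        B * (c • (1 : Matrix (Fin k) (Fin k) (R₁ × R₂))) = B.map (· * c) := by
      intro k B c; ext i j <;>
      simp [Matrix.mul_apply, Matrix.one_apply, Matrix.smul_apply, smul_eq_mul, Matrix.map_apply, mul_ite, ite_mul, mul_assoc]
    have h11 : A₁ * (e₁ • (1 : Matrix (Fin m) (Fin m) (R₁ × R₂))) = A₁ := by
      rw [hr]; ext i j <;> simp [hA₁, he₁, Matrix.map_apply, Prod.mk_mul_mk, Prod.ext_iff]
    have h12 : A₁ * (e₂ • (1 : Matrix (Fin m) (Fin m) (R₁ × R₂))) = 0 := by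
      rw [hr]; ext i j <;> simp [hA₁, he₂, Matrix.map_apply, Prod.mk_mul_mk, Prod.ext_iff]
    have h21 : A₂ * (e₁ • (1 : Matrix (Fin m) (Fin m) (R₁ × R₂))) = 0 := by
      rw [hr]; ext i j <;> simp [hA₂, he₁, Matrix.map_apply, Prod.mk_mul_mk, Prod.ext_iff]
    have h22 : A₂ * (e₂ • (1 : Matrix (Fin m) (Fin m) (R₁ × R₂))) = A₂ := by
      rw [hr]; ext i j <;> simp [hA₂, he₂, Matrix.map_apply, Prod.mk_mul_mk, Prod.ext_iff]
    -- the two factorizations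
    have hM : (fromRows (e₁ • 1) (e₂ • 1) : Matrix (Fin n ⊕ Fin n) (Fin n) (R₁ × R₂)) * A *
        (fromCols (e₁ • 1) (e₂ • 1) : Matrix (Fin m) (Fin m ⊕ Fin m) (R₁ × R₂)) =
        fromBlocks A₁ 0 0 A₂ := by
      rw [fromRows_mul, Matrix.smul_mul, Matrix.smul_mul, Matrix.one_mul, hs1, hs2,
        fromRows_mul_fromCols, h11, h12, h21, h22]
    have hA : (fromCols 1 1 : Matrix (Fin n) (Fin n ⊕ Fin n) (R₁ × R₂)) *
        (fromBlocks A₁ 0 0 A₂) *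
        (fromRows 1 1 : Matrix (Fin m ⊕ Fin m) (Fin m) (R₁ × R₂)) = A := by
      rw [fromCols_mul_fromBlocks]
      simp only [Matrix.one_mul, Matrix.zero_mul, Matrix.mul_zero, add_zero, zero_add, Matrix.mul_one]
      rw [fromCols_mul_fromRows]
      ext i j <;> simp [hA₁, hA₂, Prod.ext_iff]
    set σn : Fin (n + n) → Fin n ⊕ Fin n := ⇑(finSumFinEquiv (m := n) (n := n)).symm with hσn
    set σm : Fin (m + m) → Fin m ⊕ Fin m := ⇑(finSumFinEquiv (m := m) (n := m)).symm with hσm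
    have hbn : Function.Bijective σn := (finSumFinEquiv (m := n) (n := n)).symm.bijective
    have hbm : Function.Bijective σm := (finSumFinEquiv (m := m) (n := m)).symm.bijective
    set M : Matrix (Fin (n + n)) (Fin (m + m)) (R₁ × R₂) :=
      (fromBlocks A₁ 0 0 A₂).submatrix σn σm with hMdef
    have le1 : rk.rk M ≤ rk.rk A := by
      have e1 : M = ((fromRows (e₁ • 1) (e₂ • 1) :
            Matrix (Fin n ⊕ Fin n) (Fin n) (R₁ × R₂)).submatrix σn id) *
          ((A * fromCols (e₁ • 1) (e₂ • 1)).submatrix id σm) := by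
        rw [hMdef, ← hM, Matrix.mul_assoc,
          Matrix.submatrix_mul _ _ σn (id : Fin n → Fin n) σm Function.bijective_id]
        rfl
      have e2 : (A * (fromCols (e₁ • 1) (e₂ • 1) :
            Matrix (Fin m) (Fin m ⊕ Fin m) (R₁ × R₂))).submatrix id σm =
          A * ((fromCols (e₁ • 1) (e₂ • 1)).submatrix id σm) := by
        rw [Matrix.submatrix_mul _ _ id (id : Fin m → Fin m) σm Function.bijective_id,
          Matrix.submatrix_id_id]
        rfl
      calc rk.rk M ≤ rk.rk ((A * fromCols (e₁ • 1) (e₂ • 1)).submatrix id σm) := by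
            rw [e1]; exact rk.rk_mul_right _ _
        _ ≤ rk.rk A := by exact (congrArg (fun X => rk.rk X) e2).trans_le (rk.rk_mul_left _ _)
    have le2 : rk.rk A ≤ rk.rk M := by
      have e1 : A = ((fromCols 1 1 :
            Matrix (Fin n) (Fin n ⊕ Fin n) (R₁ × R₂)).submatrix id σn) *
          (((fromBlocks A₁ 0 0 A₂) * (fromRows 1 1 :
            Matrix (Fin m ⊕ Fin m) (Fin m) (R₁ × R₂))).submatrix σn id) := by
        rw [← Matrix.submatrix_mul _ _ id σn id hbn, ← Matrix.mul_assoc, hA, Matrix.submatrix_id_id]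
      have e2 : ((fromBlocks A₁ 0 0 A₂) * (fromRows 1 1 :
            Matrix (Fin m ⊕ Fin m) (Fin m) (R₁ × R₂))).submatrix σn id =
          M * ((fromRows 1 1).submatrix σm id) := by
        rw [hMdef, Matrix.submatrix_mul _ _ σn σm id hbm]
        rfl
      calc rk.rk A ≤ rk.rk (((fromBlocks A₁ 0 0 A₂) * (fromRows 1 1 :
            Matrix (Fin m ⊕ Fin m) (Fin m) (R₁ × R₂))).submatrix σn id) := by
            rw [e1]; exact rk.rk_mul_right _ _
        _ ≤ rk.rk M := by rw [e2]; exact rk.rk_mul_left _ _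
      -- done
    have hdiag : rk.rk M = rk.rk A₁ + rk.rk A₂ := rk.rk_diag A₁ A₂
    have : rk.rk A = rk.rk M := le_antisymm le2 le1
    rw [this, hdiag]
  refine ⟨?_, key⟩
  have h := key (1 : Matrix (Fin 1) (Fin 1) (R₁ × R₂))
  rw [rk.rk_one] at h
  have h1 : (1 : Matrix (Fin 1) (Fin 1) (R₁ × R₂)).map (fun x => ((x.1, 0) : R₁ × R₂)) =
      !![((1, 0) : R₁ × R₂)] := by
    ext i j <;> fin_cases i <;> fin_cases j <;> simp [Matrix.one_apply]
  have h2 : (1 : Matrix (Fin 1) (Fin 1) (R₁ × R₂)).map (fun x => ((0, x.2) : R₁ × R₂)) =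
      !![((0, 1) : R₁ × R₂)] := by
    ext i j <;> fin_cases i <;> fin_cases j <;> simp [Matrix.one_apply]
  rw [h1, h2] at h
  exact h.symm
end

section
/- Let O be a Dedekind domain and dim a Sylvester module rank function on O. Then dim(I) = 1 for every non-zero ideal I of O. -/
open FractionalIdeal
open scoped nonZeroDivisors

/-- A Sylvester module rank function on a ring `R`: it assigns a non-negative real number
to each finitely presented left `R`-module (invariantly under isomorphism) satisfying
(SMod1)-(SMod3). -/
structure SylvesterModuleRank (R : Type) [Ring R] where
  d : (M : Type) → [AddCommGroup M] → [Module R M] → ℝ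
  d_nonneg : ∀ (M : Type) [AddCommGroup M] [Module R M],
    Module.FinitePresentation R M → 0 ≤ d M
  d_congr : ∀ (M N : Type) [AddCommGroup M] [Module R M] [AddCommGroup N] [Module R N],
    Module.FinitePresentation R M → (M ≃ₗ[R] N) → d M = d N
  d_bot : d PUnit = 0
  d_self : d R = 1
  d_add : ∀ (M N : Type) [AddCommGroup M] [Module R M] [AddCommGroup N] [Module R N],
    Module.FinitePresentation R M → Module.FinitePresentation R N →
      d (M × N) = d M + d N
  d_exact : ∀ (M₁ M₂ M₃ : Type) [AddCommGroup M₁] [Module R M₁] [AddCommGroup M₂]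
      [Module R M₂] [AddCommGroup M₃] [Module R M₃],
    Module.FinitePresentation R M₁ → Module.FinitePresentation R M₂ →
    Module.FinitePresentation R M₃ →
    ∀ (f : M₁ →ₗ[R] M₂) (g : M₂ →ₗ[R] M₃), Function.Exact f g → Function.Surjective g →
      d M₃ ≤ d M₂ ∧ d M₂ ≤ d M₁ + d M₃

section Aux

variable {O : Type} [CommRing O] [IsDedekindDomain O]

lemma fp_ideal (I : Ideal O) : Module.FinitePresentation O I := by
  haveI : Module.Finite O I := Module.Finite.iff_fg.mpr (IsNoetherian.noetherian I)
  exact Module.finitePresentation_of_finite O I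

noncomputable def coprimeSplit (A B : Ideal O) (a b : O) (ha : a ∈ A) (hb : b ∈ B)
    (hab : a + b = 1) : (A × B) ≃ₗ[O] O × (A * B) where
  toFun p := (p.1 + p.2, ⟨(p.1 : O) * b - a * (p.2 : O),
    sub_mem (Ideal.mul_mem_mul p.1.2 hb) (Ideal.mul_mem_mul ha p.2.2)⟩)
  map_add' p q := by
    refine Prod.ext ?_ (Subtype.ext ?_) <;> dsimp <;> ring
  map_smul' c p := by
    refine Prod.ext ?_ (Subtype.ext ?_) <;> dsimp <;> ring
  invFun q := (⟨a * q.1 + (q.2 : O), add_mem (Ideal.mul_mem_right _ _ ha)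
      (Ideal.mul_le_left q.2.2)⟩,
    ⟨b * q.1 - (q.2 : O), sub_mem (Ideal.mul_mem_right _ _ hb) (Ideal.mul_le_right q.2.2)⟩)
  left_inv p := by
    refine Prod.ext (Subtype.ext ?_) (Subtype.ext ?_) <;> dsimp
    · linear_combination (p.1 : O) * hab
    · linear_combination (p.2 : O) * hab
  right_inv q := by
    refine Prod.ext ?_ (Subtype.ext ?_) <;> dsimp
    · linear_combination q.1 * hab
    · linear_combination (q.2 : O) * hab

variable (dim : SylvesterModuleRank O)

lemma d_eq_of_iso (A B : Ideal O) (h : Nonempty ((A : Type) ≃ₗ[O] (B : Type))) :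
    dim.d A = dim.d B :=
  dim.d_congr _ _ (fp_ideal A) h.some

lemma d_span_singleton {b : O} (hb : b ≠ 0) : dim.d (Ideal.span {b}) = 1 := by
  have e : O ≃ₗ[O] ↥(Ideal.span {b} : Ideal O) := LinearEquiv.toSpanNonzeroSingleton O O b hb
  have h := dim.d_congr O (Ideal.span {b} : Ideal O) (Module.finitePresentation_of_finite O O) e
  rw [← h, dim.d_self]

lemma d_mul_coprime (A B : Ideal O) (h : A ⊔ B = ⊤) :
    dim.d A + dim.d B = 1 + dim.d (A * B) := by
  have h1 : (1 : O) ∈ A ⊔ B := h ▸ Submodule.mem_top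
  obtain ⟨a, ha, b, hb, hab⟩ := Submodule.mem_sup.mp h1
  have e := coprimeSplit A B a b ha hb hab
  haveI : Module.Finite O A := Module.Finite.iff_fg.mpr (IsNoetherian.noetherian A)
  haveI : Module.Finite O B := Module.Finite.iff_fg.mpr (IsNoetherian.noetherian B)
  have fpProd : Module.FinitePresentation O (↥A × ↥B) :=
    Module.finitePresentation_of_finite O _
  calc dim.d A + dim.d B = dim.d (↥A × ↥B) :=
        (dim.d_add _ _ (fp_ideal A) (fp_ideal B)).symm
    _ = dim.d (O × ↥(A * B : Ideal O)) := dim.d_congr _ _ fpProd e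
    _ = 1 + dim.d (A * B) := by
        rw [dim.d_add _ _ (Module.finitePresentation_of_finite O O) (fp_ideal (A * B)),
          dim.d_self]

lemma exists_avoid (K : Ideal O) (hK : K ≠ ⊥) (s : Finset (Ideal O))
    (hs : ∀ P ∈ s, P.IsPrime ∧ P ≠ ⊥) :
    ∃ b, b ∈ K ∧ b ≠ 0 ∧ ∀ P ∈ s, b ∉ K * P := by
  classical
  induction s using Finset.induction_on with
  | empty =>
    obtain ⟨b, hb, h0⟩ := Submodule.exists_mem_ne_zero_of_ne_bot hK
    exact ⟨b, hb, h0, by simp⟩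
  | @insert P₀ s hP₀s ih =>
    obtain ⟨hP₀p, hP₀b⟩ := hs P₀ (Finset.mem_insert_self _ _)
    have hs' : ∀ P ∈ s, P.IsPrime ∧ P ≠ ⊥ := fun P hP => hs P (Finset.mem_insert_of_mem hP)
    obtain ⟨b, hbK, hb0, hbav⟩ := ih hs'
    by_cases hbP : b ∈ K * P₀
    · have hK0 : K ≠ 0 := by rwa [Ne, Ideal.zero_eq_bot]
      have hne : ¬ (K * ∏ Q ∈ s, Q ≤ K * P₀) := by
        intro hle
        have h1 : K * P₀ ∣ K * ∏ Q ∈ s, Q := Ideal.dvd_iff_le.mpr hle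
        have h2 : P₀ ∣ ∏ Q ∈ s, Q := (mul_dvd_mul_iff_left hK0).mp h1
        obtain ⟨Q, hQs, hQle⟩ := hP₀p.prod_le.mp (Ideal.le_of_dvd h2)
        have hQmax : Q.IsMaximal := Ideal.IsPrime.isMaximal (hs' Q hQs).1 (hs' Q hQs).2
        exact hP₀s ((hQmax.eq_of_le hP₀p.ne_top hQle) ▸ hQs)
      obtain ⟨c, hcmem, hcnot⟩ := SetLike.not_le_iff_exists.mp hne
      refine ⟨b + c, K.add_mem hbK (Ideal.mul_le_left hcmem), ?_, ?_⟩
      · intro h0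
        exact hcnot ((eq_neg_of_add_eq_zero_right h0) ▸ neg_mem hbP)
      · intro P hP
        rcases Finset.mem_insert.mp hP with rfl | hPs
        · intro hmem
          exact hcnot (by simpa using Submodule.sub_mem _ hmem hbP)
        · intro hmem
          apply hbav P hPs
          have hprodle : (∏ Q ∈ s, Q : Ideal O) ≤ P := by
            rw [← Finset.mul_prod_erase s _ hPs]
            exact Ideal.mul_le_left
          have hcP : c ∈ K * P := Ideal.mul_mono le_rfl hprodle hcmem
          simpa using Submodule.sub_mem _ hmem hcP
    · refine ⟨b, hbK, hb0, fun P hP => ?_⟩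
      rcases Finset.mem_insert.mp hP with rfl | hPs
      · exact hbP
      · exact hbav P hPs

end Aux

section Aux2

variable {O : Type} [CommRing O] [IsDedekindDomain O]

local notation "𝕂" => FractionRing O

lemma map_mul_left_eq (u : 𝕂) (M : Submodule O 𝕂) :
    Submodule.map (LinearMap.mul O 𝕂 u) M = Submodule.span O {u} * M := by
  apply le_antisymm
  · rw [Submodule.map_le_iff_le_comap]
    intro m hm
    simp only [Submodule.mem_comap, LinearMap.mul_apply']
    exact Submodule.mul_mem_mul (Submodule.mem_span_singleton_self u) hm
  · rw [Submodule.mul_le]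
    intro y hy m hm
    obtain ⟨c, rfl⟩ := Submodule.mem_span_singleton.mp hy
    exact Submodule.mem_map.mpr ⟨c • m, M.smul_mem c hm, by
      simp only [LinearMap.mul_apply', smul_mul_assoc, mul_smul_comm]⟩

noncomputable def mulEquiv (u : 𝕂) (hu : u ≠ 0) : 𝕂 ≃ₗ[O] 𝕂 :=
  LinearEquiv.ofLinear (LinearMap.mul O 𝕂 u) (LinearMap.mul O 𝕂 u⁻¹)
    (by ext x; simp [LinearMap.mul_apply', ← mul_assoc, mul_inv_cancel₀ hu])
    (by ext x; simp [LinearMap.mul_apply', ← mul_assoc, inv_mul_cancel₀ hu])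

lemma iso_of_span_mul (I B : Ideal O) {u : 𝕂} (hu : u ≠ 0)
    (h : (B : FractionalIdeal O⁰ 𝕂) = spanSingleton O⁰ u * (I : FractionalIdeal O⁰ 𝕂)) :
    Nonempty ((B : Type) ≃ₗ[O] (I : Type)) := by
  set f := Algebra.linearMap O 𝕂 with hf
  have hinj : Function.Injective f := IsFractionRing.injective O 𝕂
  have key : Submodule.map (LinearMap.mul O 𝕂 u) (Submodule.map f (I : Submodule O O))
      = Submodule.map f (B : Submodule O O) := by
    rw [map_mul_left_eq]
    have h2 := congrArg (fun J : FractionalIdeal O⁰ 𝕂 => (J : Submodule O 𝕂)) h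
    simp only [coe_mul, coe_spanSingleton, coe_coeIdeal, IsLocalization.coeSubmodule] at h2
    exact h2.symm
  have e1 : (I : Type) ≃ₗ[O] ↥(Submodule.map f (I : Submodule O O)) :=
    Submodule.equivMapOfInjective f hinj I
  have e2 : ↥(Submodule.map f (I : Submodule O O)) ≃ₗ[O]
      ↥(Submodule.map (LinearMap.mul O 𝕂 u) (Submodule.map f (I : Submodule O O))) :=
    Submodule.equivMapOfInjective (LinearMap.mul O 𝕂 u) (mulEquiv u hu).injective _
  have e3 : (B : Type) ≃ₗ[O] ↥(Submodule.map f (B : Submodule O O)) :=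
    Submodule.equivMapOfInjective f hinj B
  exact ⟨e3.trans ((LinearEquiv.ofEq _ _ key).symm.trans (e2.symm.trans e1.symm))⟩

lemma exists_inv (I : Ideal O) (hI : I ≠ ⊥) :
    ∃ (J : Ideal O) (a : O), a ≠ 0 ∧ J ≠ ⊥ ∧
      (J : FractionalIdeal O⁰ 𝕂) =
        spanSingleton O⁰ (algebraMap O 𝕂 a) * (I : FractionalIdeal O⁰ 𝕂)⁻¹ := by
  obtain ⟨a, haI, ha0⟩ := Submodule.exists_mem_ne_zero_of_ne_bot hI
  have hInz : (I : FractionalIdeal O⁰ 𝕂) ≠ 0 := coeIdeal_ne_zero.mpr hI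
  have hane : (algebraMap O 𝕂) a ≠ 0 :=
    fun h => ha0 (IsFractionRing.injective O 𝕂 (h.trans (_root_.map_zero _).symm))
  have h1 : spanSingleton O⁰ (algebraMap O 𝕂 a) ≤ (I : FractionalIdeal O⁰ 𝕂) := by
    rw [← coeIdeal_span_singleton]
    exact (coeIdeal_le_coeIdeal _).mpr ((Ideal.span_singleton_le_iff_mem _).mpr haI)
  have hle : spanSingleton O⁰ (algebraMap O 𝕂 a) * (I : FractionalIdeal O⁰ 𝕂)⁻¹ ≤ 1 := by
    calc spanSingleton O⁰ (algebraMap O 𝕂 a) * (I : FractionalIdeal O⁰ 𝕂)⁻¹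
        ≤ (I : FractionalIdeal O⁰ 𝕂) * (I : FractionalIdeal O⁰ 𝕂)⁻¹ :=
          mul_le_mul_left h1 _
      _ = 1 := mul_inv_cancel₀ hInz
  obtain ⟨J, hJ⟩ := le_one_iff_exists_coeIdeal.mp hle
  refine ⟨J, a, ha0, ?_, hJ⟩
  refine (coeIdeal_ne_zero (K := 𝕂)).mp ?_
  rw [hJ]
  exact mul_ne_zero (spanSingleton_ne_zero_iff.mpr hane) (inv_ne_zero hInz)

lemma exists_coprime_rep (I C : Ideal O) (hI : I ≠ ⊥) (hC : C ≠ ⊥) :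
    ∃ B : Ideal O, B ≠ ⊥ ∧ B ⊔ C = ⊤ ∧ Nonempty ((B : Type) ≃ₗ[O] (I : Type)) ∧
      ∃ u : 𝕂, u ≠ 0 ∧
        (B : FractionalIdeal O⁰ 𝕂) = spanSingleton O⁰ u * (I : FractionalIdeal O⁰ 𝕂) := by
  classical
  obtain ⟨J, a, ha0, hJ0, hJeq⟩ := exists_inv I hI
  have hfin : {P : Ideal O | P.IsPrime ∧ P ≠ ⊥ ∧ C ≤ P}.Finite := by
    have h1 := Ideal.finite_factors (show C ≠ 0 from hC)
    refine Set.Finite.subset (h1.image (fun v => v.asIdeal)) ?_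
    rintro P ⟨hp, hb, hle⟩
    exact ⟨⟨P, hp, hb⟩, Ideal.dvd_iff_le.mpr hle, rfl⟩
  set s := hfin.toFinset with hsdef
  have hs : ∀ P ∈ s, P.IsPrime ∧ P ≠ ⊥ := fun P hP => by
    have := hfin.mem_toFinset.mp hP; exact ⟨this.1, this.2.1⟩
  obtain ⟨b, hbJ, hb0, hbav⟩ := exists_avoid J hJ0 s hs
  have hane : (algebraMap O 𝕂) a ≠ 0 :=
    fun h => ha0 (IsFractionRing.injective O 𝕂 (h.trans (_root_.map_zero _).symm))
  have hbne : (algebraMap O 𝕂) b ≠ 0 :=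
    fun h => hb0 (IsFractionRing.injective O 𝕂 (h.trans (_root_.map_zero _).symm))
  set u : 𝕂 := (algebraMap O 𝕂 b) * (algebraMap O 𝕂 a)⁻¹ with hudef
  have hu : u ≠ 0 := mul_ne_zero hbne (inv_ne_zero hane)
  have hIcoe : (I : FractionalIdeal O⁰ 𝕂) ≠ 0 := coeIdeal_ne_zero.mpr hI
  have hsane : spanSingleton O⁰ ((algebraMap O 𝕂) a) ≠ 0 := spanSingleton_ne_zero_iff.mpr hane
  have hspanu : spanSingleton O⁰ u = spanSingleton O⁰ (algebraMap O 𝕂 b) *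
      (spanSingleton O⁰ (algebraMap O 𝕂 a))⁻¹ := by
    rw [spanSingleton_inv, spanSingleton_mul_spanSingleton]
  have hb_le : spanSingleton O⁰ (algebraMap O 𝕂 b) ≤ (J : FractionalIdeal O⁰ 𝕂) := by
    rw [← coeIdeal_span_singleton]
    exact (coeIdeal_le_coeIdeal _).mpr ((Ideal.span_singleton_le_iff_mem _).mpr hbJ)
  have hle1 : spanSingleton O⁰ u * (I : FractionalIdeal O⁰ 𝕂) ≤ 1 := by
    rw [hspanu]
    calc spanSingleton O⁰ (algebraMap O 𝕂 b) * (spanSingleton O⁰ (algebraMap O 𝕂 a))⁻¹ *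
          (I : FractionalIdeal O⁰ 𝕂)
        ≤ (J : FractionalIdeal O⁰ 𝕂) * (spanSingleton O⁰ (algebraMap O 𝕂 a))⁻¹ *
          (I : FractionalIdeal O⁰ 𝕂) :=
          mul_le_mul_left (mul_le_mul_left hb_le _) _
      _ = (spanSingleton O⁰ (algebraMap O 𝕂 a) * (spanSingleton O⁰ (algebraMap O 𝕂 a))⁻¹) *
          ((I : FractionalIdeal O⁰ 𝕂)⁻¹ * (I : FractionalIdeal O⁰ 𝕂)) := by
          rw [hJeq]; ring
      _ = 1 := by
          rw [mul_inv_cancel₀ hsane, mul_comm ((I : FractionalIdeal O⁰ 𝕂)⁻¹),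
            mul_inv_cancel₀ hIcoe, one_mul]
  obtain ⟨B, hB⟩ := le_one_iff_exists_coeIdeal.mp hle1
  have hBne : B ≠ ⊥ := by
    refine (coeIdeal_ne_zero (K := 𝕂)).mp ?_
    rw [hB]
    exact mul_ne_zero (spanSingleton_ne_zero_iff.mpr hu) hIcoe
  have hiso := iso_of_span_mul I B hu hB
  refine ⟨B, hBne, ?_, hiso, u, hu, hB⟩
  by_contra hsup
  obtain ⟨P, hPmax, hPge⟩ := Ideal.exists_le_maximal _ hsup
  have hPC : C ≤ P := le_trans le_sup_right hPge
  have hPB : B ≤ P := le_trans le_sup_left hPge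
  have hP0 : P ≠ ⊥ := fun h => hC (le_bot_iff.mp (h ▸ hPC))
  have hPs : P ∈ s := hfin.mem_toFinset.mpr ⟨hPmax.isPrime, hP0, hPC⟩
  apply hbav P hPs
  have h1 : (B : FractionalIdeal O⁰ 𝕂) ≤ (P : FractionalIdeal O⁰ 𝕂) :=
    (coeIdeal_le_coeIdeal _).mpr hPB
  rw [hB, hspanu] at h1
  have h2 := mul_le_mul_left h1
    (spanSingleton O⁰ (algebraMap O 𝕂 a) * (I : FractionalIdeal O⁰ 𝕂)⁻¹)
  have hLHS : spanSingleton O⁰ (algebraMap O 𝕂 b) * (spanSingleton O⁰ (algebraMap O 𝕂 a))⁻¹ *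
      (I : FractionalIdeal O⁰ 𝕂) *
      (spanSingleton O⁰ (algebraMap O 𝕂 a) * (I : FractionalIdeal O⁰ 𝕂)⁻¹)
      = spanSingleton O⁰ (algebraMap O 𝕂 b) := by
    have e1 : spanSingleton O⁰ (algebraMap O 𝕂 b) * (spanSingleton O⁰ (algebraMap O 𝕂 a))⁻¹ *
        (I : FractionalIdeal O⁰ 𝕂) *
        (spanSingleton O⁰ (algebraMap O 𝕂 a) * (I : FractionalIdeal O⁰ 𝕂)⁻¹)
        = spanSingleton O⁰ (algebraMap O 𝕂 b) *
          ((spanSingleton O⁰ (algebraMap O 𝕂 a))⁻¹ * spanSingleton O⁰ (algebraMap O 𝕂 a)) *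
          ((I : FractionalIdeal O⁰ 𝕂) * (I : FractionalIdeal O⁰ 𝕂)⁻¹) := by ring
    rw [e1, inv_mul_cancel₀ hsane, mul_inv_cancel₀ hIcoe, mul_one, mul_one]
  rw [hLHS, ← hJeq, ← coeIdeal_mul, ← coeIdeal_span_singleton,
    coeIdeal_le_coeIdeal (K := 𝕂)] at h2
  rw [mul_comm] at h2
  exact (Ideal.span_singleton_le_iff_mem _).mp h2

lemma one_le_d (dim : SylvesterModuleRank O) (I : Ideal O) (hI : I ≠ ⊥) : 1 ≤ dim.d I := by
  have key : ∀ n : ℕ, ∃ P : Ideal O, P ≠ ⊥ ∧ dim.d P = (n + 1) * dim.d I - n := by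
    intro n
    induction n with
    | zero => exact ⟨I, hI, by push_cast; ring⟩
    | succ n ih =>
      obtain ⟨P, hP, hdP⟩ := ih
      obtain ⟨B, hB, hcop, hiso, -⟩ := exists_coprime_rep I P hI hP
      refine ⟨B * P, ?_, ?_⟩
      · intro h
        rcases Ideal.mul_eq_bot.mp h with h' | h'
        · exact hB h'
        · exact hP h'
      · have hmul := d_mul_coprime dim B P hcop
        have hdB : dim.d B = dim.d I := d_eq_of_iso dim B I hiso
        have : dim.d (B * P : Ideal O) = dim.d B + dim.d P - 1 := by linarith
        rw [this, hdB, hdP]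
        push_cast
        ring
  by_contra hlt
  push_neg at hlt
  obtain ⟨n, hn⟩ := exists_nat_gt (dim.d I / (1 - dim.d I))
  obtain ⟨P, hP, hdP⟩ := key n
  have h0 := dim.d_nonneg _ (fp_ideal P)
  rw [hdP] at h0
  have h1 : (0 : ℝ) < 1 - dim.d I := by linarith
  rw [div_lt_iff₀ h1] at hn
  nlinarith

end Aux2

/-- If `dim` is a Sylvester module rank function on a Dedekind domain `O`, then
`dim I = 1` for every non-zero ideal `I` of `O`. -/
theorem d_ideal_eq_one {O : Type} [CommRing O] [IsDedekindDomain O]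
    (dim : SylvesterModuleRank O) (I : Ideal O) (hI : I ≠ ⊥) :
    dim.d I = 1 := by
  have hlow := one_le_d dim I hI
  have hup : dim.d I ≤ 1 := by
    obtain ⟨J, a, ha0, hJ0, hJeq⟩ := exists_inv I hI
    obtain ⟨B, hB0, hcop, hiso, u, hu, hBeq⟩ := exists_coprime_rep I J hI hJ0
    have hIcoe : (I : FractionalIdeal O⁰ (FractionRing O)) ≠ 0 := coeIdeal_ne_zero.mpr hI
    have hane : (algebraMap O (FractionRing O)) a ≠ 0 :=
      fun h => ha0 (IsFractionRing.injective O (FractionRing O) (h.trans (_root_.map_zero _).symm))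
    have hprod : ((B * J : Ideal O) : FractionalIdeal O⁰ (FractionRing O)) =
        spanSingleton O⁰ (u * algebraMap O (FractionRing O) a) := by
      rw [coeIdeal_mul, hBeq, hJeq, ← spanSingleton_mul_spanSingleton]
      have e1 : spanSingleton O⁰ u * (I : FractionalIdeal O⁰ (FractionRing O)) *
          (spanSingleton O⁰ (algebraMap O (FractionRing O) a) *
            (I : FractionalIdeal O⁰ (FractionRing O))⁻¹) =
          spanSingleton O⁰ u * spanSingleton O⁰ (algebraMap O (FractionRing O) a) *
          ((I : FractionalIdeal O⁰ (FractionRing O)) *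
            (I : FractionalIdeal O⁰ (FractionRing O))⁻¹) := by ring
      rw [e1, mul_inv_cancel₀ hIcoe, mul_one]
    have hmem : u * algebraMap O (FractionRing O) a ∈
        ((B * J : Ideal O) : FractionalIdeal O⁰ (FractionRing O)) := by
      rw [hprod]
      exact (mem_spanSingleton _).mpr ⟨1, one_smul _ _⟩
    have hle1 : ((B * J : Ideal O) : FractionalIdeal O⁰ (FractionRing O)) ≤ 1 :=
      coeIdeal_le_one
    obtain ⟨c, hc⟩ := (mem_one_iff _).mp (hle1 hmem)
    have hc0 : c ≠ 0 := by
      intro h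
      apply mul_ne_zero hu hane
      rw [← hc, h, _root_.map_zero]
    have hBJ : B * J = Ideal.span {c} := by
      refine coeIdeal_inj (K := FractionRing O).mp ?_
      rw [hprod, coeIdeal_span_singleton, hc]
    have h2 := d_mul_coprime dim B J hcop
    rw [hBJ, d_span_singleton dim hc0, d_eq_of_iso dim B I hiso] at h2
    have h3 := one_le_d dim J hJ0
    linarith
  linarith
end

section
/- Let O be a Dedekind domain, m a maximal ideal, and dim a Sylvester module rank function on O. Setting b_0 = dim(O/m) and b_k = dim(O/m^{k+1}) − dim(O/m^k) for k ≥ 1, we have b_k ≥ b_{k+1} ≥ 0 for every k ≥ 0. -/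
section Aux

variable {O : Type} [CommRing O] [IsDedekindDomain O]

lemma SylvRank.key_span (m : Ideal O) (hm : m.IsMaximal) (hbot : m ≠ ⊥) (n : ℕ) (hn : 2 ≤ n) :
    ∃ x, x ∈ m ∧ ∀ j : ℕ, m ^ j ≤ Ideal.span {x ^ j} ⊔ m ^ n := by
  haveI : m.IsPrime := hm.isPrime
  have hlt : m ^ 2 < m := by
    have := Ideal.pow_succ_lt_pow hbot 1
    simpa using this
  obtain ⟨x, hxm, hxm2⟩ := SetLike.exists_of_lt hlt
  have hIm : Ideal.span {x} ⊔ m ^ n ≤ m := by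
    refine sup_le ?_ (Ideal.pow_le_self (by omega))
    rwa [Ideal.span_singleton_le_iff_mem]
  have hdvd : Ideal.span {x} ⊔ m ^ n ∣ m ^ n := Ideal.dvd_iff_le.mpr le_sup_right
  have hprime : Prime m := Ideal.prime_of_isPrime hbot hm.isPrime
  obtain ⟨i, hin, hass⟩ := (dvd_prime_pow hprime n).mp hdvd
  rw [associated_iff_eq] at hass
  have hi1 : i = 1 := by
    rcases Nat.lt_or_ge i 2 with h | h
    · interval_cases i
      · exfalso
        rw [pow_zero, Ideal.one_eq_top] at hass
        have : (⊤ : Ideal O) ≤ m := hass ▸ hIm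
        exact hm.ne_top (top_unique this)
      · rfl
    · exfalso
      apply hxm2
      have : Ideal.span {x} ⊔ m ^ n ≤ m ^ 2 := hass ▸ Ideal.pow_le_pow_right h
      exact this (Submodule.mem_sup_left (Ideal.mem_span_singleton_self x))
  have hkey : Ideal.span {x} ⊔ m ^ n = m := by rw [hass, hi1, pow_one]
  refine ⟨x, hxm, ?_⟩
  intro j
  induction j with
  | zero => simp [Ideal.span_singleton_one]
  | succ j ih =>
    calc m ^ (j+1) = m ^ j * m := pow_succ m j
    _ ≤ (Ideal.span {x ^ j} ⊔ m ^ n) * (Ideal.span {x} ⊔ m ^ n) :=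
        Ideal.mul_mono ih hkey.ge
    _ ≤ Ideal.span {x ^ (j+1)} ⊔ m ^ n := by
        rw [Ideal.sup_mul, Ideal.mul_sup, Ideal.mul_sup]
        rw [Ideal.span_singleton_mul_span_singleton, ← pow_succ]
        refine sup_le (sup_le le_sup_left (le_sup_right.trans' Ideal.mul_le_right)) ?_
        exact le_sup_of_le_right (sup_le Ideal.mul_le_left Ideal.mul_le_left)

noncomputable def SylvRank.mulQ (x : O) (I J : Ideal O) (h : ∀ a ∈ I, x * a ∈ J) :
    (O ⧸ I) →ₗ[O] (O ⧸ J) :=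
  Submodule.mapQ I J (x • LinearMap.id) (fun a ha => by simpa [smul_eq_mul] using h a ha)

lemma SylvRank.mulQ_mk (x : O) (I J : Ideal O) (h) (a : O) :
    SylvRank.mulQ x I J h (Submodule.Quotient.mk a) = Submodule.Quotient.mk (x * a) := rfl

noncomputable def SylvRank.projQ (I J : Ideal O) (h : I ≤ J) : (O ⧸ I) →ₗ[O] (O ⧸ J) :=
  Submodule.mapQ I J LinearMap.id h

lemma SylvRank.projQ_mk (I J : Ideal O) (h) (a : O) :
    SylvRank.projQ I J h (Submodule.Quotient.mk a) = Submodule.Quotient.mk a := rfl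

open SylvRank in
lemma SylvRank.exact_main (m : Ideal O) (x : O) (hxm : x ∈ m) (k : ℕ)
    (hspan : ∀ j : ℕ, m ^ j ≤ Ideal.span {x ^ j} ⊔ m ^ (k + 2)) :
    ∃ (f : (O ⧸ m ^ (k+1)) →ₗ[O] (O ⧸ m ^ (k+2)) × (O ⧸ m ^ k))
      (g : (O ⧸ m ^ (k+2)) × (O ⧸ m ^ k) →ₗ[O] (O ⧸ m ^ (k+1))),
      Function.Exact f g ∧ Function.Surjective g := by
  have hmul1 : ∀ a ∈ m ^ (k+1), x * a ∈ m ^ (k+2) := fun a ha => by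
    rw [pow_succ, mul_comm x a]; exact Ideal.mul_mem_mul ha hxm
  have hmul2 : ∀ a ∈ m ^ k, x * a ∈ m ^ (k+1) := fun a ha => by
    rw [pow_succ, mul_comm x a]; exact Ideal.mul_mem_mul ha hxm
  have hle1 : m ^ (k+1) ≤ m ^ k := Ideal.pow_le_pow_right (by omega)
  have hle2 : m ^ (k+2) ≤ m ^ (k+1) := Ideal.pow_le_pow_right (by omega)
  set f := LinearMap.prod (mulQ x _ _ hmul1) (projQ _ _ hle1) with hf
  set g := LinearMap.coprod (projQ _ _ hle2) (-(mulQ x _ _ hmul2)) with hg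
  have hfapp : ∀ w : O, f (Submodule.Quotient.mk w) =
      (Submodule.Quotient.mk (x * w), Submodule.Quotient.mk w) := by
    intro w
    rw [hf, LinearMap.prod_apply]
    simp only [Function.prod, mulQ_mk, projQ_mk]
  have hgapp : ∀ (a c : O), g (Submodule.Quotient.mk a, Submodule.Quotient.mk c) =
      Submodule.Quotient.mk (a - x * c) := by
    intro a c
    rw [hg, LinearMap.coprod_apply, LinearMap.neg_apply, projQ_mk, mulQ_mk,
      ← sub_eq_add_neg, ← Submodule.Quotient.mk_sub]
  refine ⟨f, g, ?_, ?_⟩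
  · rintro ⟨u, v⟩
    obtain ⟨a, rfl⟩ := Submodule.Quotient.mk_surjective _ u
    obtain ⟨c, rfl⟩ := Submodule.Quotient.mk_surjective _ v
    constructor
    · intro h0
      rw [hgapp, Submodule.Quotient.mk_eq_zero] at h0
      obtain ⟨p, hp, r, hr, hpr⟩ := Submodule.mem_sup.mp (hspan (k+1) h0)
      obtain ⟨t, ht⟩ := Ideal.mem_span_singleton'.mp hp
      refine ⟨Submodule.Quotient.mk (c + x ^ k * t), ?_⟩
      rw [hfapp]
      refine Prod.ext ?_ ?_
      · show Submodule.Quotient.mk _ = Submodule.Quotient.mk a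
        rw [Submodule.Quotient.eq]
        have : x * (c + x ^ k * t) - a = -r := by
          linear_combination hpr + ht
        rw [this]
        exact neg_mem hr
      · show Submodule.Quotient.mk _ = Submodule.Quotient.mk c
        rw [Submodule.Quotient.eq]
        have : c + x ^ k * t - c = x ^ k * t := by ring
        rw [this]
        exact Ideal.mul_mem_right t _ (Ideal.pow_mem_pow hxm k)
    · rintro ⟨w', hw⟩
      rw [← hw]
      obtain ⟨w, rfl⟩ := Submodule.Quotient.mk_surjective _ w'
      rw [hfapp, hgapp, Submodule.Quotient.mk_eq_zero]
      simpa using zero_mem (m ^ (k+1))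
  · intro y
    obtain ⟨a, rfl⟩ := Submodule.Quotient.mk_surjective _ y
    exact ⟨(Submodule.Quotient.mk a, Submodule.Quotient.mk 0), by
      rw [hgapp]; congr 1; ring⟩

open SylvRank in
lemma SylvRank.exact_mono (m : Ideal O) (x : O) (hxm : x ∈ m) (k : ℕ)
    (hspan : ∀ j : ℕ, m ^ j ≤ Ideal.span {x ^ j} ⊔ m ^ (k + 2)) :
    ∃ (f : O →ₗ[O] (O ⧸ m ^ (k+2)))
      (g : (O ⧸ m ^ (k+2)) →ₗ[O] (O ⧸ m ^ (k+1))),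
      Function.Exact f g ∧ Function.Surjective g := by
  have hle2 : m ^ (k+2) ≤ m ^ (k+1) := Ideal.pow_le_pow_right (by omega)
  set f := (Submodule.mkQ (m ^ (k+2))) ∘ₗ (x ^ (k+1) • (LinearMap.id : O →ₗ[O] O)) with hf
  set g := projQ (m ^ (k+2)) (m ^ (k+1)) hle2 with hg
  have hfapp : ∀ a : O, f a = Submodule.Quotient.mk (x ^ (k+1) * a) := by
    intro a
    rw [hf]
    simp [smul_eq_mul]
  refine ⟨f, g, ?_, ?_⟩
  · intro u
    obtain ⟨a, rfl⟩ := Submodule.Quotient.mk_surjective _ u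
    rw [hg, projQ_mk, Submodule.Quotient.mk_eq_zero]
    constructor
    · intro ha
      obtain ⟨p, hp, r, hr, hpr⟩ := Submodule.mem_sup.mp (hspan (k+1) ha)
      obtain ⟨t, ht⟩ := Ideal.mem_span_singleton'.mp hp
      refine ⟨t, ?_⟩
      rw [hfapp, Submodule.Quotient.eq]
      have : x ^ (k+1) * t - a = -r := by linear_combination hpr + ht
      rw [this]
      exact neg_mem hr
    · rintro ⟨t, ht⟩
      rw [hfapp] at ht
      have hmem : x ^ (k+1) * t ∈ m ^ (k+1) :=
        Ideal.mul_mem_right t _ (Ideal.pow_mem_pow hxm (k+1))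
      have : a - x ^ (k+1) * t ∈ m ^ (k+2) := by
        rw [← Submodule.Quotient.eq]
        exact ht.symm
      exact (by simpa using add_mem (hle2 this) hmem : a ∈ m ^ (k+1))
  · intro y
    obtain ⟨a, rfl⟩ := Submodule.Quotient.mk_surjective _ y
    exact ⟨Submodule.Quotient.mk a, by rw [hg, projQ_mk]⟩

end Aux

/-- Let `O` be a Dedekind domain, `m` a maximal ideal and `dim` a Sylvester module rank
function on `O`. Setting `b 0 = dim (O ⧸ m)` and `b k = dim (O ⧸ m^(k+1)) - dim (O ⧸ m^k)`
for `k ≥ 1`, we have `b k ≥ b (k+1) ≥ 0` for every `k ≥ 0`. -/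
theorem d_differences_antitone {O : Type} [CommRing O] [IsDedekindDomain O]
    (dim : SylvesterModuleRank O) (m : Ideal O) (hm : m.IsMaximal)
    (b : ℕ → ℝ) (hb0 : b 0 = dim.d (O ⧸ m))
    (hb : ∀ k : ℕ, 1 ≤ k → b k = dim.d (O ⧸ m ^ (k + 1)) - dim.d (O ⧸ m ^ k)) :
    ∀ k : ℕ, b (k + 1) ≤ b k ∧ 0 ≤ b (k + 1) := by
  have fpq : ∀ I : Ideal O, Module.FinitePresentation O (O ⧸ I) := fun I =>
    Module.finitePresentation_of_finite O (O ⧸ I)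
  have fpm : Module.FinitePresentation O (O ⧸ m) := fpq m
  set D : ℕ → ℝ := fun j => dim.d (O ⧸ m ^ j) with hD
  have hDcongr : ∀ {I J : Ideal O}, I = J → dim.d (O ⧸ I) = dim.d (O ⧸ J) := by
    rintro I J rfl; rfl
  have hD1 : D 1 = dim.d (O ⧸ m) := hDcongr (pow_one m)
  have hDnonneg : ∀ j, 0 ≤ D j := fun j => dim.d_nonneg _ (fpq _)
  by_cases hbot : m = ⊥
  · -- degenerate case: O is a field
    have heq : ∀ j : ℕ, 1 ≤ j → D (j + 1) = D j := by
      intro j hj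
      refine hDcongr ?_
      rw [hbot, ← Ideal.zero_eq_bot, zero_pow (by omega), zero_pow (by omega)]
    intro k
    have hbk1 : b (k+1) = 0 := by
      rw [hb (k+1) (by omega)]
      show D (k+1+1) - D (k+1) = 0
      rw [heq (k+1) (by omega), sub_self]
    rcases Nat.eq_zero_or_pos k with rfl | hk
    · refine ⟨?_, by rw [hbk1]⟩
      rw [hbk1, hb0]
      exact dim.d_nonneg _ fpm
    · have hbk : b k = 0 := by
        rw [hb k hk]
        show D (k+1) - D k = 0
        rw [heq k hk, sub_self]
      rw [hbk1, hbk]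
      exact ⟨le_refl 0, le_refl 0⟩
  · -- main case
    have hconc : ∀ k : ℕ, D (k+2) + D k ≤ D (k+1) + D (k+1) := by
      intro k
      obtain ⟨x, hxm, hspan⟩ := SylvRank.key_span m hm hbot (k+2) (by omega)
      obtain ⟨f, g, hex, hsur⟩ := SylvRank.exact_main m x hxm k hspan
      have := (dim.d_exact _ _ _ (fpq _)
        (Module.finitePresentation_of_finite O ((O ⧸ m ^ (k+2)) × (O ⧸ m ^ k)))
        (fpq _) f g hex hsur).2
      rw [dim.d_add _ _ (fpq _) (fpq _)] at this
      exact this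
    have hmono : ∀ k : ℕ, D (k+1) ≤ D (k+2) := by
      intro k
      obtain ⟨x, hxm, hspan⟩ := SylvRank.key_span m hm hbot (k+2) (by omega)
      obtain ⟨f, g, hex, hsur⟩ := SylvRank.exact_mono m x hxm k hspan
      exact (dim.d_exact _ _ _ (Module.finitePresentation_of_finite O O)
        (fpq _) (fpq _) f g hex hsur).1
    intro k
    have hbk1 : b (k+1) = D (k+2) - D (k+1) := hb (k+1) (by omega)
    refine ⟨?_, by rw [hbk1]; linarith [hmono k]⟩
    rcases Nat.eq_zero_or_pos k with rfl | hk
    · rw [hbk1, hb0, ← hD1]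
      have h0 := hconc 0
      have h00 := hDnonneg 0
      linarith
    · rw [hbk1, hb k hk]
      have := hconc k
      linarith
end

section
/- Let R be a left Noetherian ring and M a non-zero finitely generated completely faithful left R-module with Krull dimension strictly less than the Krull dimension of R as a left module over itself. Then M contains a cyclic submodule N with Kdim(M/N) < Kdim(M). -/
/-- `KdimLE R α M` means that the (Rentschler–Gabriel) Krull dimension of the left
`R`-module `M` is at most the ordinal `α`: for every descending chain
`f 0 ≥ f 1 ≥ ⋯` of submodules of `M`, for all but finitely many `i` the factor
`f i / f (i+1)` is zero or has Krull dimension at most some `β < α`. -/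
def KdimLE (R : Type) [Ring R] (α : Ordinal) (M : Type) [AddCommGroup M]
    [Module R M] : Prop :=
  ∀ f : ℕ → Submodule R M, Antitone f →
    {i : ℕ | ¬ (Subsingleton (↥(f i) ⧸ (Submodule.comap (f i).subtype (f (i + 1)))) ∨
      ∃ β : Ordinal, ∃ _ : β < α,
        KdimLE R β (↥(f i) ⧸ (Submodule.comap (f i).subtype (f (i + 1)))))}.Finite
termination_by α
decreasing_by assumption

/-- `HasKdim R α M` means that the Krull dimension of the non-zero left `R`-module `M`
is exactly the ordinal `α`. -/
def HasKdim (R : Type) [Ring R] (α : Ordinal) (M : Type) [AddCommGroup M]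
    [Module R M] : Prop :=
  KdimLE R α M ∧ ∀ β : Ordinal, β < α → ¬ KdimLE R β M

section Aux

variable {R : Type} [Ring R]

/-- A subsingleton module has Krull dimension at most any ordinal. -/
lemma kdimle_of_subsingleton (α : Ordinal) (M : Type) [AddCommGroup M] [Module R M]
    [Subsingleton M] : KdimLE R α M := by
  rw [KdimLE]
  intro f hf
  refine Set.Finite.subset (Set.finite_empty) ?_
  intro i hi
  exact absurd (Or.inl ((Submodule.Quotient.mk_surjective _).subsingleton)) hi

/-- `KdimLE` is monotone in the ordinal. -/
lemma kdimle_mono {α β : Ordinal} (h : α ≤ β) (M : Type) [AddCommGroup M] [Module R M]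
    (hM : KdimLE R α M) : KdimLE R β M := by
  rw [KdimLE] at hM ⊢
  intro f hf
  refine (hM f hf).subset ?_
  intro i hi
  simp only [Set.mem_setOf_eq] at hi ⊢
  intro hgood
  apply hi
  rcases hgood with h1 | ⟨γ, hγ, hk⟩
  · exact Or.inl h1
  · exact Or.inr ⟨γ, lt_of_lt_of_le hγ h, hk⟩

/-- `KdimLE` transfers along injective linear maps. -/
lemma kdimle_of_injective : ∀ (α : Ordinal) (N M : Type) [AddCommGroup N] [Module R N]
    [AddCommGroup M] [Module R M] (φ : N →ₗ[R] M), Function.Injective φ →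
    KdimLE R α M → KdimLE R α N := by
  intro α
  induction α using Ordinal.induction with
  | h α IH =>
  intro N M _ _ _ _ φ hφ hM
  rw [KdimLE] at hM ⊢
  intro g hg
  have hmap : Antitone (fun i => (g i).map φ) := fun i j hij => Submodule.map_mono (hg hij)
  refine ((hM _ hmap).subset ?_)
  intro i hi
  simp only [Set.mem_setOf_eq] at hi ⊢
  intro hgood
  apply hi
  have hres : ∀ x ∈ g i, φ x ∈ (g i).map φ := fun x hx => Submodule.mem_map_of_mem hx
  set p : Submodule R ↥(g i) := Submodule.comap (g i).subtype (g (i+1)) with hp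
  set P : Submodule R ↥((g i).map φ) :=
    Submodule.comap ((g i).map φ).subtype ((g (i+1)).map φ) with hP
  let ψ0 : ↥(g i) →ₗ[R] (↥((g i).map φ) ⧸ P) := P.mkQ ∘ₗ (φ.restrict hres)
  have hker : p ≤ LinearMap.ker ψ0 := by
    intro x hx
    simp only [ψ0, LinearMap.mem_ker, LinearMap.comp_apply, Submodule.mkQ_apply,
      Submodule.Quotient.mk_eq_zero, hP, Submodule.mem_comap]
    exact Submodule.mem_map_of_mem hx
  let ψ : (↥(g i) ⧸ p) →ₗ[R] (↥((g i).map φ) ⧸ P) := Submodule.liftQ p ψ0 hker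
  have hψ : Function.Injective ψ := by
    rw [← LinearMap.ker_eq_bot]
    apply Submodule.ker_liftQ_eq_bot
    intro x hx
    simp only [ψ0, LinearMap.mem_ker, LinearMap.comp_apply, Submodule.mkQ_apply,
      Submodule.Quotient.mk_eq_zero, hP, Submodule.mem_comap, Submodule.subtype_apply,
      LinearMap.restrict_coe_apply] at hx
    obtain ⟨y, hy, hyx⟩ := hx
    have : y = (x : N) := hφ hyx
    simp only [hp, Submodule.mem_comap, Submodule.subtype_apply]
    exact this ▸ hy
  rcases hgood with h1 | ⟨γ, hγ, hk⟩
  · exact Or.inl (hψ.subsingleton)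
  · exact Or.inr ⟨γ, hγ, IH γ hγ _ _ ψ hψ hk⟩

/-- `KdimLE` transfers along linear equivalences. -/
lemma kdimle_of_equiv (α : Ordinal) (N M : Type) [AddCommGroup N] [Module R N]
    [AddCommGroup M] [Module R M] (e : N ≃ₗ[R] M) (hM : KdimLE R α M) : KdimLE R α N :=
  kdimle_of_injective α N M e.toLinearMap e.injective hM

/-- `KdimLE` transfers along surjective linear maps. -/
lemma kdimle_of_surjective (α : Ordinal) (M N : Type) [AddCommGroup N] [Module R N]
    [AddCommGroup M] [Module R M] (φ : M →ₗ[R] N) (hφ : Function.Surjective φ)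
    (hM : KdimLE R α M) : KdimLE R α N := by
  rw [KdimLE] at hM ⊢
  intro h hh
  have hcom : Antitone (fun i => (h i).comap φ) := fun i j hij => Submodule.comap_mono (hh hij)
  refine ((hM _ hcom).subset ?_)
  intro i hi
  simp only [Set.mem_setOf_eq] at hi ⊢
  intro hgood
  apply hi
  have hres : ∀ x ∈ (h i).comap φ, φ x ∈ h i := fun x hx => hx
  set p : Submodule R ↥((h i).comap φ) :=
    Submodule.comap ((h i).comap φ).subtype ((h (i+1)).comap φ) with hp
  set P : Submodule R ↥(h i) := Submodule.comap (h i).subtype (h (i+1)) with hP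
  let ψ0 : ↥((h i).comap φ) →ₗ[R] (↥(h i) ⧸ P) := P.mkQ ∘ₗ (φ.restrict hres)
  have hker : p ≤ LinearMap.ker ψ0 := by
    intro x hx
    simp only [ψ0, LinearMap.mem_ker, LinearMap.comp_apply, Submodule.mkQ_apply,
      Submodule.Quotient.mk_eq_zero, hP, Submodule.mem_comap]
    exact hx
  let ψ : (↥((h i).comap φ) ⧸ p) →ₗ[R] (↥(h i) ⧸ P) := Submodule.liftQ p ψ0 hker
  have hbij : Function.Bijective ψ := by
    constructor
    · rw [← LinearMap.ker_eq_bot]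
      apply Submodule.ker_liftQ_eq_bot
      intro x hx
      simp only [ψ0, LinearMap.mem_ker, LinearMap.comp_apply, Submodule.mkQ_apply,
        Submodule.Quotient.mk_eq_zero, hP, Submodule.mem_comap, Submodule.subtype_apply,
        LinearMap.restrict_coe_apply] at hx
      exact hx
    · intro y
      obtain ⟨z, rfl⟩ := Submodule.Quotient.mk_surjective _ y
      obtain ⟨w, hw⟩ := hφ (z : N)
      have hwmem : w ∈ (h i).comap φ := by
        simp only [Submodule.mem_comap, hw]; exact z.2
      refine ⟨Submodule.Quotient.mk ⟨w, hwmem⟩, ?_⟩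
      simp only [ψ, Submodule.liftQ_apply, ψ0, LinearMap.comp_apply, Submodule.mkQ_apply]
      congr 1
      apply Subtype.ext
      rw [LinearMap.restrict_coe_apply]
      exact hw
  let e := LinearEquiv.ofBijective ψ hbij
  rcases hgood with h1 | ⟨γ, hγ, hk⟩
  · exact Or.inl (e.symm.injective.subsingleton)
  · exact Or.inr ⟨γ, hγ, kdimle_of_equiv γ _ _ e.symm hk⟩

/-- An extension of a subsingleton by a subsingleton is a subsingleton. -/
lemma subsingleton_ext (E : Type) [AddCommGroup E] [Module R E] (S : Submodule R E)
    (h1 : Subsingleton ↥S) (h2 : Subsingleton (E ⧸ S)) : Subsingleton E := by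
  constructor
  intro a b
  have ha : a - b ∈ S := by
    rw [← Submodule.Quotient.eq]
    exact h2.elim _ _
  have h3 : (⟨a - b, ha⟩ : ↥S) = ⟨0, S.zero_mem⟩ := h1.elim _ _
  have h4 := congrArg Subtype.val h3
  simpa [sub_eq_zero] using h4

/-- The extension lemma: an extension of a module of Krull dimension at most `α` by
another one again has Krull dimension at most `α`. -/
lemma kdimle_ext : ∀ (α : Ordinal) (E : Type) [AddCommGroup E] [Module R E]
    (S : Submodule R E), KdimLE R α ↥S → KdimLE R α (E ⧸ S) → KdimLE R α E := by
  intro α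
  induction α using Ordinal.induction with
  | h α IH =>
  intro E _ _ S hS hQ
  rw [KdimLE] at hS hQ ⊢
  intro f hf
  have hg : Antitone fun i => (f i).comap S.subtype :=
    fun i j hij => Submodule.comap_mono (hf hij)
  have hh : Antitone fun i => (f i).map S.mkQ :=
    fun i j hij => Submodule.map_mono (hf hij)
  refine (((hS _ hg).union (hQ _ hh)).subset ?_)
  intro i hi
  simp only [Set.mem_setOf_eq, Set.mem_union] at hi ⊢
  by_contra hcon
  push_neg at hcon
  obtain ⟨hgood1, hgood2⟩ := hcon
  apply hi
  set A := f i with hA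
  set B := f (i+1) with hB
  have hBA : B ≤ A := hf (Nat.le_succ i)
  set p : Submodule R ↥A := Submodule.comap A.subtype B with hp
  set HP : Submodule R ↥(A.map S.mkQ) :=
    Submodule.comap (A.map S.mkQ).subtype (B.map S.mkQ) with hHP
  have hres : ∀ x ∈ A, S.mkQ x ∈ A.map S.mkQ := fun x hx => Submodule.mem_map_of_mem hx
  let π0 : ↥A →ₗ[R] (↥(A.map S.mkQ) ⧸ HP) := HP.mkQ ∘ₗ (S.mkQ.restrict hres)
  have hker : p ≤ LinearMap.ker π0 := by
    intro x hx
    simp only [π0, LinearMap.mem_ker, LinearMap.comp_apply, Submodule.mkQ_apply,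
      Submodule.Quotient.mk_eq_zero, hHP, Submodule.mem_comap]
    exact Submodule.mem_map_of_mem hx
  let π : (↥A ⧸ p) →ₗ[R] (↥(A.map S.mkQ) ⧸ HP) := Submodule.liftQ p π0 hker
  have hπsurj : Function.Surjective π := by
    intro y
    obtain ⟨z, rfl⟩ := Submodule.Quotient.mk_surjective _ y
    obtain ⟨w, hw, hwz⟩ := z.2
    refine ⟨Submodule.Quotient.mk ⟨w, hw⟩, ?_⟩
    simp only [π, Submodule.liftQ_apply, π0, LinearMap.comp_apply, Submodule.mkQ_apply]
    congr 1
    apply Subtype.ext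
    rw [LinearMap.restrict_coe_apply]
    exact hwz
  set T : Submodule R (↥A ⧸ p) := (Submodule.comap A.subtype S).map p.mkQ with hT
  have hkerT : LinearMap.ker π = T := by
    ext x
    obtain ⟨a, rfl⟩ := Submodule.Quotient.mk_surjective _ x
    simp only [LinearMap.mem_ker, π, Submodule.liftQ_apply, π0, LinearMap.comp_apply,
      Submodule.mkQ_apply, Submodule.Quotient.mk_eq_zero, hHP, Submodule.mem_comap, hT,
      Submodule.mem_map, Submodule.subtype_apply, LinearMap.restrict_coe_apply]
    constructor
    · intro hmem
      obtain ⟨b, hb, hba⟩ := hmem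
      have hdiff : (a : E) - b ∈ S := by
        rw [← Submodule.Quotient.eq]
        exact hba.symm
      have hmemA : (a : E) - b ∈ A := A.sub_mem a.2 (hBA hb)
      refine ⟨⟨(a : E) - b, hmemA⟩, hdiff, ?_⟩
      rw [Submodule.Quotient.eq]
      have heq : ((⟨(a : E) - b, hmemA⟩ : ↥A) - a : ↥A) = ⟨-b, A.neg_mem (hBA hb)⟩ := by
        apply Subtype.ext; simp
      rw [heq]
      show (⟨-b, A.neg_mem (hBA hb)⟩ : ↥A) ∈ p
      simp only [hp, Submodule.mem_comap, Submodule.subtype_apply]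
      exact B.neg_mem hb
    · rintro ⟨s, hs, hsa⟩
      rw [Submodule.Quotient.eq] at hsa
      have hsa' : (s : E) - (a : E) ∈ B := hsa
      have hb : (a : E) - (s : E) ∈ B := by
        have := B.neg_mem hsa'
        simpa using this
      refine ⟨(a : E) - (s : E), hb, ?_⟩
      rw [Submodule.Quotient.eq]
      have heq2 : (a : E) - (s : E) - (a : E) = -(s : E) := by abel
      rw [heq2]
      exact S.neg_mem hs
  -- surjection from the `S`-chain factor onto `↥T`
  set gA : Submodule R ↥S := Submodule.comap S.subtype A with hgA
  set gB : Submodule R ↥S := Submodule.comap S.subtype B with hgB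
  have hres2 : ∀ x ∈ gA, S.subtype x ∈ A := fun x hx => hx
  have hmemT : ∀ x : ↥gA, (p.mkQ ∘ₗ (S.subtype.restrict hres2)) x ∈ T := by
    intro x
    refine Submodule.mem_map_of_mem ?_
    simp only [Submodule.mem_comap, Submodule.subtype_apply, LinearMap.restrict_coe_apply]
    exact (x : ↥S).2
  let ρ0 : ↥gA →ₗ[R] ↥T := LinearMap.codRestrict T (p.mkQ ∘ₗ (S.subtype.restrict hres2)) hmemT
  have hkerρ : Submodule.comap gA.subtype gB ≤ LinearMap.ker ρ0 := by
    intro x hx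
    have hxB : ((x : ↥S) : E) ∈ B := hx
    simp only [LinearMap.mem_ker, ρ0]
    apply Subtype.ext
    rw [LinearMap.codRestrict_apply]
    simp only [LinearMap.comp_apply, Submodule.mkQ_apply, Submodule.Quotient.mk_eq_zero,
      ZeroMemClass.coe_zero]
    show (S.subtype.restrict hres2) x ∈ p
    simp only [hp, Submodule.mem_comap, Submodule.subtype_apply, LinearMap.restrict_coe_apply]
    exact hxB
  let ρ : (↥gA ⧸ Submodule.comap gA.subtype gB) →ₗ[R] ↥T := Submodule.liftQ _ ρ0 hkerρ
  have hρ : Function.Surjective ρ := by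
    rintro ⟨t, ht⟩
    obtain ⟨a, ha, hat⟩ := ht
    have haS : (a : E) ∈ S := ha
    refine ⟨Submodule.Quotient.mk (⟨⟨(a : E), haS⟩, a.2⟩ : ↥gA), ?_⟩
    apply Subtype.ext
    simp only [ρ, Submodule.liftQ_apply, ρ0, LinearMap.codRestrict_apply, LinearMap.comp_apply,
      Submodule.mkQ_apply]
    rw [← hat]
    congr 1
  have e2 : ((↥A ⧸ p) ⧸ T) ≃ₗ[R] (↥(A.map S.mkQ) ⧸ HP) :=
    (Submodule.quotEquivOfEq T (LinearMap.ker π) hkerT.symm).trans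
      (π.quotKerEquivOfSurjective hπsurj)
  have GT : Subsingleton ↥T ∨ ∃ γ : Ordinal, ∃ _ : γ < α, KdimLE R γ ↥T := by
    rcases hgood1 with h1 | ⟨γ, hγ, hk⟩
    · exact Or.inl (hρ.subsingleton)
    · exact Or.inr ⟨γ, hγ, kdimle_of_surjective γ _ _ ρ hρ hk⟩
  have GQT : Subsingleton ((↥A ⧸ p) ⧸ T) ∨
      ∃ γ : Ordinal, ∃ _ : γ < α, KdimLE R γ ((↥A ⧸ p) ⧸ T) := by
    rcases hgood2 with h1 | ⟨γ, hγ, hk⟩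
    · exact Or.inl (e2.injective.subsingleton)
    · exact Or.inr ⟨γ, hγ, kdimle_of_equiv γ _ _ e2 hk⟩
  rcases GT with h1 | ⟨γ1, hγ1, hk1⟩
  · rcases GQT with h2 | ⟨γ2, hγ2, hk2⟩
    · exact Or.inl (subsingleton_ext _ T h1 h2)
    · exact Or.inr ⟨γ2, hγ2, IH γ2 hγ2 _ T (kdimle_of_subsingleton γ2 _) hk2⟩
  · rcases GQT with h2 | ⟨γ2, hγ2, hk2⟩
    · exact Or.inr ⟨γ1, hγ1, IH γ1 hγ1 _ T hk1 (kdimle_of_subsingleton γ1 _)⟩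
    · exact Or.inr ⟨max γ1 γ2, max_lt hγ1 hγ2, IH _ (max_lt hγ1 hγ2) _ T
        (kdimle_mono (le_max_left _ _) _ hk1) (kdimle_mono (le_max_right _ _) _ hk2)⟩

end Aux

/-- A module is `α`-small if it is zero or has Krull dimension `< α`. -/
def KSmall (R : Type) [Ring R] (α : Ordinal) (X : Type) [AddCommGroup X]
    [Module R X] : Prop :=
  Subsingleton X ∨ ∃ β : Ordinal, ∃ _ : β < α, KdimLE R β X

section SmallLemmas

variable {R : Type} [Ring R] {α : Ordinal}

lemma ksmall_of_subsingleton {X : Type} [AddCommGroup X] [Module R X] [h : Subsingleton X] :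
    KSmall R α X := Or.inl h

lemma ksmall_of_surjective {X Y : Type} [AddCommGroup X] [Module R X] [AddCommGroup Y]
    [Module R Y] (f : X →ₗ[R] Y) (hf : Function.Surjective f) (h : KSmall R α X) :
    KSmall R α Y := by
  rcases h with h1 | ⟨γ, hγ, hk⟩
  · exact Or.inl (hf.subsingleton)
  · exact Or.inr ⟨γ, hγ, kdimle_of_surjective γ _ _ f hf hk⟩

lemma ksmall_of_injective {X Y : Type} [AddCommGroup X] [Module R X] [AddCommGroup Y]
    [Module R Y] (f : Y →ₗ[R] X) (hf : Function.Injective f) (h : KSmall R α X) :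
    KSmall R α Y := by
  rcases h with h1 | ⟨γ, hγ, hk⟩
  · exact Or.inl (hf.subsingleton)
  · exact Or.inr ⟨γ, hγ, kdimle_of_injective γ _ _ f hf hk⟩

lemma ksmall_ext (E : Type) [AddCommGroup E] [Module R E] (S : Submodule R E)
    (h1 : KSmall R α ↥S) (h2 : KSmall R α (E ⧸ S)) : KSmall R α E := by
  rcases h1 with hs1 | ⟨γ1, hγ1, hk1⟩
  · rcases h2 with hs2 | ⟨γ2, hγ2, hk2⟩
    · exact Or.inl (subsingleton_ext E S hs1 hs2)
    · exact Or.inr ⟨γ2, hγ2, kdimle_ext γ2 E S (kdimle_of_subsingleton γ2 _) hk2⟩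
  · rcases h2 with hs2 | ⟨γ2, hγ2, hk2⟩
    · exact Or.inr ⟨γ1, hγ1, kdimle_ext γ1 E S hk1 (kdimle_of_subsingleton γ1 _)⟩
    · exact Or.inr ⟨max γ1 γ2, max_lt hγ1 hγ2, kdimle_ext _ E S
        (kdimle_mono (le_max_left _ _) _ hk1) (kdimle_mono (le_max_right _ _) _ hk2)⟩

/-- Surjection between subquotient factors. -/
lemma fac_surj {E : Type} [AddCommGroup E] [Module R E] (A B A' B' : Submodule R E)
    (h1 : A ≤ A') (h2 : B ≤ B') (h3 : A' ≤ A ⊔ B') :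
    ∃ f : (↥A ⧸ Submodule.comap A.subtype B) →ₗ[R] (↥A' ⧸ Submodule.comap A'.subtype B'),
      Function.Surjective f := by
  let f0 : ↥A →ₗ[R] (↥A' ⧸ Submodule.comap A'.subtype B') :=
    (Submodule.comap A'.subtype B').mkQ ∘ₗ Submodule.inclusion h1
  have hker : Submodule.comap A.subtype B ≤ LinearMap.ker f0 := by
    intro x hx
    simp only [f0, LinearMap.mem_ker, LinearMap.comp_apply, Submodule.mkQ_apply,
      Submodule.Quotient.mk_eq_zero, Submodule.mem_comap, Submodule.subtype_apply,
      Submodule.coe_inclusion]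
    exact h2 hx
  refine ⟨Submodule.liftQ _ f0 hker, ?_⟩
  intro y
  obtain ⟨a', rfl⟩ := Submodule.Quotient.mk_surjective _ y
  obtain ⟨w, hw, v, hv, hwv⟩ := Submodule.mem_sup.mp (h3 a'.2)
  refine ⟨Submodule.Quotient.mk (⟨w, hw⟩ : ↥A), ?_⟩
  simp only [Submodule.liftQ_apply, f0, LinearMap.comp_apply, Submodule.mkQ_apply]
  rw [Submodule.Quotient.eq]
  simp only [Submodule.mem_comap, Submodule.subtype_apply]
  have hcoe : ((Submodule.inclusion h1 (⟨w, hw⟩ : ↥A) - a' : ↥A') : E) = w - (a' : E) := rfl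
  rw [hcoe, ← hwv]
  have : w - (w + v) = -v := by abel
  rw [this]
  exact B'.neg_mem hv

/-- Surjection from a factor onto the image submodule in the quotient. -/
lemma map_surj {E : Type} [AddCommGroup E] [Module R E] (A B : Submodule R E) :
    ∃ f : (↥A ⧸ Submodule.comap A.subtype B) →ₗ[R] ↥(A.map B.mkQ),
      Function.Surjective f := by
  have hmem : ∀ x : ↥A, (B.mkQ ∘ₗ A.subtype) x ∈ A.map B.mkQ := fun x =>
    Submodule.mem_map_of_mem x.2
  let f0 : ↥A →ₗ[R] ↥(A.map B.mkQ) := LinearMap.codRestrict _ (B.mkQ ∘ₗ A.subtype) hmem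
  have hker : Submodule.comap A.subtype B ≤ LinearMap.ker f0 := by
    intro x hx
    simp only [f0, LinearMap.mem_ker]
    apply Subtype.ext
    rw [LinearMap.codRestrict_apply]
    simp only [LinearMap.comp_apply, Submodule.mkQ_apply, Submodule.Quotient.mk_eq_zero,
      Submodule.subtype_apply, ZeroMemClass.coe_zero]
    exact hx
  refine ⟨Submodule.liftQ _ f0 hker, ?_⟩
  rintro ⟨t, ht⟩
  obtain ⟨a, ha, hat⟩ := ht
  refine ⟨Submodule.Quotient.mk (⟨a, ha⟩ : ↥A), ?_⟩
  apply Subtype.ext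
  simp only [Submodule.liftQ_apply, f0, LinearMap.codRestrict_apply, LinearMap.comp_apply,
    Submodule.mkQ_apply, Submodule.subtype_apply]
  exact hat

end SmallLemmas


/-- Stafford's lemma: if `R` is a left Noetherian ring and `M` a non-zero finitely
generated completely faithful left `R`-module with `Kdim M < Kdim R`, then `M` contains
a cyclic submodule `N` with `Kdim (M/N) < Kdim M`. -/
theorem stafford_cyclic_submodule (R : Type) [Ring R] [IsNoetherianRing R]
    (M : Type) [AddCommGroup M] [Module R M] [Nontrivial M] [Module.Finite R M]
    (hcf : ∀ N : Submodule R M, N ≠ ⊤ →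
      ∀ P : Submodule R (M ⧸ N), P ≠ ⊥ → ∀ r : R, (∀ x ∈ P, r • x = 0) → r = 0)
    (α β : Ordinal) (hM : HasKdim R α M) (hR : HasKdim R β R) (hlt : α < β) :
    ∃ N : Submodule R M, (∃ x : M, N = Submodule.span R {x}) ∧
      (Subsingleton (M ⧸ N) ∨ ∃ γ : Ordinal, γ < α ∧ KdimLE R γ (M ⧸ N)) := by
  classical
  by_contra hcon
  have CE : ∀ x : M, ¬ KSmall R α (M ⧸ Submodule.span R {x}) := by
    intro x hs
    apply hcon
    refine ⟨Submodule.span R {x}, ⟨x, rfl⟩, ?_⟩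
    rcases hs with h | ⟨γ, hγ, hk⟩
    · exact Or.inl h
    · exact Or.inr ⟨γ, hγ, hk⟩
  have hRbad : ¬ KdimLE R α R := hR.2 α hlt
  haveI : IsNoetherian R M := isNoetherian_of_isNoetherianRing_of_finite R M
  have hmaxP : ∀ s : Set (Submodule R M), s.Nonempty → ∃ W ∈ s, ∀ I ∈ s, ¬ W < I :=
    set_has_maximal_iff_noetherian.mpr inferInstance
  set F : Submodule R M → Set (Submodule R M) :=
    fun C => {N | N < C ∧ ¬ KSmall R α (↥C ⧸ Submodule.comap C.subtype N)} with hFdef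
  choose nextW hmem hmax using fun C (h : (F C).Nonempty) => hmaxP (F C) h
  set stepf : Submodule R M → Submodule R M :=
    fun C => if h : (F C).Nonempty then nextW C h else ⊥ with hstepf
  set W : ℕ → Submodule R M := fun k => stepf^[k] ⊤ with hWdef
  have W0 : W 0 = ⊤ := rfl
  have Wsucc : ∀ k, W (k+1) = if h : (F (W k)).Nonempty then nextW (W k) h else ⊥ := by
    intro k
    show stepf^[k+1] ⊤ = _
    rw [Function.iterate_succ_apply']
  have key : ∀ k, (F (W k)).Nonempty := by
    intro k
    induction k using Nat.strong_induction_on with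
    | _ k IHk =>
    have hWmem : ∀ j, j < k → W (j+1) ∈ F (W j) := by
      intro j hj
      rw [Wsucc j, dif_pos (IHk j hj)]
      exact hmem _ (IHk j hj)
    have hWmax : ∀ j, j < k → ∀ I ∈ F (W j), ¬ W (j+1) < I := by
      intro j hj
      rw [Wsucc j, dif_pos (IHk j hj)]
      exact hmax _ (IHk j hj)
    have hstrict : ∀ j, j < k → W (j+1) < W j := fun j hj => (hWmem j hj).1
    have hdesc : ∀ i j : ℕ, i ≤ j → j ≤ k → W j ≤ W i := by
      intro i j hij hjk
      induction j, hij using Nat.le_induction with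
      | base => exact le_rfl
      | succ n hn IH2 =>
        exact le_trans (hstrict n (by omega)).le (IH2 (by omega))
    have htrans : ∃ x : M, ∀ i, i < k → ¬ (W i ⊓ Submodule.span R {x} ≤ W (i+1)) := by
      have main : ∀ m, m ≤ k →
          ∃ x : M, ∀ i, i < m → ¬ (W i ⊓ Submodule.span R {x} ≤ W (i+1)) := by
        intro m
        induction m with
        | zero => exact fun _ => ⟨0, fun i hi => absurd hi (by omega)⟩
        | succ m IHm =>
          intro hm
          obtain ⟨x, hx⟩ := IHm (by omega)
          by_cases hcase : ¬ (W m ⊓ Submodule.span R {x} ≤ W (m+1))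
          · refine ⟨x, fun i hi => ?_⟩
            rcases Nat.lt_succ_iff_lt_or_eq.mp hi with h | h
            · exact hx i h
            · subst h; exact hcase
          · rw [not_not] at hcase
            set L : Submodule R R := (W m).comap (LinearMap.toSpanSingleton R M x) with hL
            by_cases hLbot : L = ⊥
            · exfalso
              apply hRbad
              have hinj : Function.Injective (LinearMap.toSpanSingleton R M x) := by
                rw [← LinearMap.ker_eq_bot]
                refine le_antisymm (le_trans ?_ hLbot.le) bot_le
                intro s hs
                simp only [LinearMap.mem_ker] at hs
                simp only [hL, Submodule.mem_comap, hs]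
                exact (W m).zero_mem
              exact kdimle_of_injective α R M _ hinj hM.1
            · obtain ⟨r, hrL, hr0⟩ := (Submodule.ne_bot_iff L).mp hLbot
              have hrxm : r • x ∈ W m := by
                simpa only [hL, Submodule.mem_comap, LinearMap.toSpanSingleton_apply] using hrL
              have hmk : m < k := by omega
              have hmlt : W (m+1) < W m := hstrict m hmk
              have hWtop : W (m+1) ≠ ⊤ := by
                intro h
                rw [h] at hmlt
                exact not_top_lt hmlt
              have hPneb : (W m).map (W (m+1)).mkQ ≠ ⊥ := by
                obtain ⟨w, hwm, hwn⟩ := SetLike.exists_of_lt hmlt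
                rw [Submodule.ne_bot_iff]
                refine ⟨Submodule.Quotient.mk w, Submodule.mem_map_of_mem hwm, ?_⟩
                rw [ne_eq, Submodule.Quotient.mk_eq_zero]
                exact hwn
              have hδ : ∃ δ ∈ W m, r • δ ∉ W (m+1) := by
                by_contra hall
                push_neg at hall
                apply hr0
                refine hcf (W (m+1)) hWtop _ hPneb r ?_
                rintro y ⟨δ, hδm, rfl⟩
                show r • Submodule.Quotient.mk δ = 0
                rw [← Submodule.Quotient.mk_smul, Submodule.Quotient.mk_eq_zero]
                exact hall δ hδm
              obtain ⟨δ, hδm, hδn⟩ := hδ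
              refine ⟨x + δ, fun i hi => ?_⟩
              rcases Nat.lt_succ_iff_lt_or_eq.mp hi with hilt | hieq
              · have hxi := hx i hilt
                rw [SetLike.not_le_iff_exists] at hxi ⊢
                obtain ⟨w, ⟨hw1, hw2⟩, hwn⟩ := hxi
                obtain ⟨s, rfl⟩ := Submodule.mem_span_singleton.mp hw2
                have hsδm : s • δ ∈ W m := (W m).smul_mem s hδm
                have hsδ : s • δ ∈ W (i+1) := hdesc (i+1) m (by omega) (by omega) hsδm
                refine ⟨s • (x + δ), ⟨?_, ?_⟩, ?_⟩
                · rw [smul_add]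
                  exact (W i).add_mem hw1 (hdesc i m (by omega) (by omega) hsδm)
                · exact Submodule.smul_mem _ s (Submodule.mem_span_singleton_self _)
                · rw [smul_add]
                  intro hmem2
                  apply hwn
                  have heq : s • x = s • x + s • δ - s • δ := by abel
                  rw [heq]
                  exact (W (i+1)).sub_mem hmem2 hsδ
              · subst hieq
                intro hle
                have hrx : r • x ∈ W (i+1) := hcase
                  ⟨hrxm, Submodule.smul_mem _ r (Submodule.mem_span_singleton_self _)⟩
                have hrxδ : r • (x + δ) ∈ W (i+1) := by
                  apply hle
                  constructor
                  · rw [smul_add]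
                    exact (W i).add_mem hrxm ((W i).smul_mem r hδm)
                  · exact Submodule.smul_mem _ r (Submodule.mem_span_singleton_self _)
                apply hδn
                have heq : r • δ = r • (x + δ) - r • x := by rw [smul_add]; abel
                rw [heq]
                exact (W (i+1)).sub_mem hrxδ hrx
      exact main k le_rfl
    obtain ⟨x, hx⟩ := htrans
    set U : ℕ → Submodule R M := fun j => W j ⊔ Submodule.span R {x} with hU
    have hUdesc : ∀ j, j < k → U (j+1) ≤ U j := fun j hj =>
      sup_le_sup_right (hstrict j hj).le _
    have hUsmall : ∀ j, j ≤ k → KSmall R α (M ⧸ U j) := by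
      intro j
      induction j with
      | zero =>
        intro _
        left
        rw [Submodule.Quotient.subsingleton_iff]
        show W 0 ⊔ Submodule.span R {x} = ⊤
        rw [W0, top_sup_eq]
      | succ j IHj =>
        intro hjk
        have hjk' : j < k := by omega
        have IH := IHj (by omega)
        set N2 : Submodule R M := W (j+1) ⊔ (W j ⊓ Submodule.span R {x}) with hN2
        have hsmallfac : KSmall R α (↥(W j) ⧸ Submodule.comap (W j).subtype N2) := by
          by_cases hN2e : N2 = W j
          · left
            rw [hN2e, Submodule.comap_subtype_self]
            exact Submodule.Quotient.subsingleton_iff.mpr rfl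
          · have hlt1 : N2 < W j :=
              lt_of_le_of_ne (sup_le (hstrict j hjk').le inf_le_left) hN2e
            have hlt2 : W (j+1) < N2 := by
              refine lt_of_le_of_ne le_sup_left ?_
              intro he
              apply hx j hjk'
              rw [he, hN2]
              exact le_sup_right
            by_contra hns
            exact hWmax j hjk' N2 ⟨hlt1, hns⟩ hlt2
        obtain ⟨f1, hf1⟩ := fac_surj (W j) N2 (U j) (U (j+1)) le_sup_left
          (sup_le le_sup_left (le_trans inf_le_right le_sup_right))
          (sup_le_sup_left le_sup_right _)
        have hUfac := ksmall_of_surjective f1 hf1 hsmallfac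
        obtain ⟨f2, hf2⟩ := map_surj (U j) (U (j+1))
        refine ksmall_ext _ ((U j).map (U (j+1)).mkQ) (ksmall_of_surjective f2 hf2 hUfac) ?_
        have e3 := Submodule.quotientQuotientEquivQuotient (U (j+1)) (U j) (hUdesc j hjk')
        exact ksmall_of_injective e3.toLinearMap e3.injective IH
    have hbot : ¬ KSmall R α (↥(W k) ⧸ Submodule.comap (W k).subtype
        (W k ⊓ Submodule.span R {x})) := by
      intro hsm
      apply CE x
      obtain ⟨f1, hf1⟩ := fac_surj (W k) (W k ⊓ Submodule.span R {x}) (U k)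
        (Submodule.span R {x}) le_sup_left inf_le_right le_rfl
      obtain ⟨f2, hf2⟩ := map_surj (U k) (Submodule.span R {x})
      refine ksmall_ext _ ((U k).map (Submodule.span R {x}).mkQ)
        (ksmall_of_surjective f2 hf2 (ksmall_of_surjective f1 hf1 hsm)) ?_
      have e3 := Submodule.quotientQuotientEquivQuotient (Submodule.span R {x}) (U k)
        le_sup_right
      exact ksmall_of_injective e3.toLinearMap e3.injective (hUsmall k le_rfl)
    refine ⟨W k ⊓ Submodule.span R {x}, ?_, hbot⟩
    refine lt_of_le_of_ne inf_le_left ?_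
    intro he
    apply hbot
    left
    rw [he, Submodule.comap_subtype_self]
    exact Submodule.Quotient.subsingleton_iff.mpr rfl
  have hanti : Antitone W := by
    apply antitone_nat_of_succ_le
    intro k
    rw [Wsucc k, dif_pos (key k)]
    exact (hmem _ (key k)).1.le
  have hbad : ∀ i : ℕ,
      ¬ KSmall R α (↥(W i) ⧸ Submodule.comap (W i).subtype (W (i+1))) := by
    intro i
    have h1 : W (i+1) ∈ F (W i) := by
      rw [Wsucc i, dif_pos (key i)]
      exact hmem _ (key i)
    exact h1.2
  have hKM := hM.1
  rw [KdimLE] at hKM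
  have hfin := hKM W hanti
  have huniv : {i : ℕ | ¬ (Subsingleton (↥(W i) ⧸ (Submodule.comap (W i).subtype (W (i + 1)))) ∨
      ∃ γ : Ordinal, ∃ _ : γ < α,
        KdimLE R γ (↥(W i) ⧸ (Submodule.comap (W i).subtype (W (i + 1)))))} = Set.univ :=
    Set.eq_univ_of_forall (fun i => hbad i)
  rw [huniv] at hfin
  exact Set.infinite_univ hfin
end

section
/- Let R be a left Noetherian almost simple ring with left Krull dimension at least 1, and let dim be a Sylvester module rank function on R. If M is a finitely generated left R-module of finite length that is Z(R)-torsionfree (i.e., cm ≠ 0 for all non-zero c ∈ Z(R) and non-zero m ∈ M), then dim(M) = 0. -/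
section Lemmas

variable (R : Type) [Ring R]

lemma kdimLE_zero_of_artinian [IsArtinian R R] : KdimLE R 0 R := by
  rw [KdimLE]
  intro f hf
  obtain ⟨n, hn⟩ := IsArtinian.monotone_stabilizes (R := R) (M := R)
    ⟨f, fun a b h => hf h⟩
  apply Set.Finite.subset (Set.finite_Iio n)
  intro i hi
  simp only [Set.mem_setOf_eq] at hi
  by_contra hlt
  simp only [Set.mem_Iio, not_lt] at hlt
  apply hi
  left
  have hfi : f i = f (i + 1) :=
    (hn i hlt).symm.trans (hn (i + 1) (hlt.trans (Nat.le_succ i)))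
  rw [Submodule.Quotient.subsingleton_iff]
  ext x
  simp only [Submodule.mem_comap, Submodule.coe_subtype, Submodule.mem_top, iff_true]
  exact hfi ▸ x.2

variable (S : Type) [AddCommGroup S] [Module R S] [IsSimpleModule R S]

/-- finite-case Jacobson density -/
lemma density_surj : ∀ (k : ℕ) (s : Fin k → S),
    LinearIndependent (Module.End R S) s →
      Function.Surjective
        (LinearMap.pi fun i => LinearMap.toSpanSingleton R S (s i) : R →ₗ[R] (Fin k → S)) := by
  classical
  intro k
  induction k with
  | zero => exact fun s _ y => ⟨0, funext fun i => i.elim0⟩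
  | succ k ih =>
    intro s hs
    set s0 : S := s 0 with hs0
    set st : Fin k → S := Fin.tail s with hst
    rw [← Fin.cons_self_tail s, linearIndependent_fin_cons] at hs
    obtain ⟨hsti, hnot⟩ := hs
    set φt : R →ₗ[R] (Fin k → S) :=
      LinearMap.pi fun i => LinearMap.toSpanSingleton R S (st i) with hφt
    have hsurjt : Function.Surjective φt := ih st hsti
    set K := LinearMap.ker φt with hK
    set ψ : R →ₗ[R] S := LinearMap.toSpanSingleton R S s0 with hψ
    rcases eq_bot_or_eq_top (Submodule.map ψ K) with hbot | htop
    · exfalso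
      apply hnot
      have hker : K ≤ LinearMap.ker ψ := by
        intro r hr
        have : ψ r ∈ Submodule.map ψ K := ⟨r, hr, rfl⟩
        rw [hbot, Submodule.mem_bot] at this
        simpa [LinearMap.mem_ker] using this
      set e := φt.quotKerEquivOfSurjective hsurjt with he
      set θ : (Fin k → S) →ₗ[R] S :=
        (Submodule.liftQ K ψ hker).comp (e.symm : (Fin k → S) →ₗ[R] (R ⧸ K)) with hθ
      have hθφ : ∀ r : R, θ (φt r) = ψ r := by
        intro r
        have h1 : e.symm (φt r) = Submodule.Quotient.mk r := by
          rw [LinearEquiv.symm_apply_eq]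
          rfl
        simp [hθ, h1]
      have key : s0 = θ st := by
        have : φt 1 = st := by
          funext i
          simp [hφt, LinearMap.toSpanSingleton_apply]
        rw [← this, hθφ 1]
        simp [hψ, LinearMap.toSpanSingleton_apply]
      have key' : s 0 = θ st := key
      rw [key']
      have hsum : st = ∑ i : Fin k, Pi.single i (st i) := by
        funext j
        rw [Finset.sum_apply]
        simp [Pi.single_apply]
      nth_rewrite 1 [hsum]
      rw [map_sum]
      apply Submodule.sum_mem
      intro i _
      have : θ (Pi.single i (st i)) =
          (θ.comp (LinearMap.single R (fun _ => S) i) : Module.End R S) • st i := rfl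
      rw [this]
      exact Submodule.smul_mem _ _ (Submodule.subset_span ⟨i, rfl⟩)
    · intro y
      obtain ⟨r, hr⟩ := hsurjt (Fin.tail y)
      have hmem : y 0 - r • s0 ∈ Submodule.map ψ K := by rw [htop]; trivial
      obtain ⟨a, haK, ha⟩ := hmem
      refine ⟨r + a, funext fun i => ?_⟩
      have happ : ∀ (x : R) (i : Fin (k+1)),
          (LinearMap.pi fun i => LinearMap.toSpanSingleton R S (s i) : R →ₗ[R] _) x i
            = x • s i := fun x i => rfl
      rw [happ]
      refine Fin.cases ?_ (fun j => ?_) i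
      · have : ψ a = y 0 - r • s0 := ha
        rw [add_smul]
        simp only [hψ, LinearMap.toSpanSingleton_apply] at this
        rw [← hs0, this]
        abel
      · have h1 : a • st j = 0 := by
          have := congrFun (LinearMap.mem_ker.mp haK) j
          simpa [hφt, LinearMap.toSpanSingleton_apply] using this
        have h2 : r • st j = y j.succ := by
          have := congrFun hr j
          simpa [hφt, LinearMap.toSpanSingleton_apply, Fin.tail] using this
        have hsj : s j.succ = st j := rfl
        rw [hsj, add_smul, h1, h2, add_zero]

lemma end_not_finite (hkdim : ¬ KdimLE R 0 R)
    (hfaith : ∀ r : R, (∀ x : S, r • x = 0) → r = 0) :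
    ¬ Module.Finite (Module.End R S) S := by
  intro hfin
  obtain ⟨n, f, hf⟩ := Module.Finite.exists_fin (R := Module.End R S) (M := S)
  haveI : IsFiniteLength R S := by
    haveI : IsSimpleModule R (S ⧸ (⊥ : Submodule R S)) :=
      IsSimpleModule.congr (Submodule.quotEquivOfEqBot ⊥ rfl)
    exact .of_simple_quotient (N := ⊥) .of_subsingleton
  haveI : IsArtinian R S := (isFiniteLength_iff_isNoetherian_isArtinian.mp this).2
  set g : R →ₗ[R] (Fin n → S) :=
    LinearMap.pi fun i => LinearMap.toSpanSingleton R S (f i) with hg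
  have hginj : Function.Injective g := by
    rw [← LinearMap.ker_eq_bot]
    rw [Submodule.eq_bot_iff]
    intro r hr
    apply hfaith
    intro x
    have hx : x ∈ Submodule.span (Module.End R S) (Set.range f) := hf ▸ Submodule.mem_top
    induction hx using Submodule.span_induction with
    | mem z hz =>
      obtain ⟨i, rfl⟩ := hz
      exact congrFun (LinearMap.mem_ker.mp hr) i
    | zero => exact smul_zero r
    | add a b _ _ ha hb => rw [smul_add, ha, hb, add_zero]
    | smul d a _ ha =>
      have hda : d • a = d a := rfl
      rw [hda, ← LinearMap.map_smul, ha, map_zero]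
  haveI : IsArtinian R R := isArtinian_of_injective g hginj
  exact hkdim (kdimLE_zero_of_artinian R)

lemma dim_simple_faithful [IsNoetherianRing R] (hkdim : ¬ KdimLE R 0 R)
    (dim : SylvesterModuleRank R)
    (hfaith : ∀ r : R, (∀ x : S, r • x = 0) → r = 0) : dim.d S = 0 := by
  classical
  haveI : Nontrivial S := IsSimpleModule.nontrivial R S
  haveI hSfin : Module.Finite R S := by
    obtain ⟨x, hx⟩ := exists_ne (0 : S)
    have hspan : Submodule.span R {x} = ⊤ := by
      rcases eq_bot_or_eq_top (Submodule.span R {x}) with h | h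
      · exact absurd (h ▸ Submodule.mem_span_singleton_self x)
          (by simp [hx])
      · exact h
    exact ⟨⟨{x}, by simpa using hspan⟩⟩
  have hfp : ∀ (T : Type) [AddCommGroup T] [Module R T] [Module.Finite R T],
      Module.FinitePresentation R T := fun T _ _ _ =>
    Module.finitePresentation_of_finite R T
  -- d (Fin k → S) = k * d S
  have hdk : ∀ k : ℕ, dim.d (Fin k → S) = k * dim.d S := by
    intro k
    induction k with
    | zero =>
      haveI : Subsingleton (Fin 0 → S) := ⟨fun a b => funext fun i => i.elim0⟩
      rw [dim.d_congr (Fin 0 → S) PUnit (hfp _) (LinearEquiv.ofSubsingleton _ _), dim.d_bot]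
      simp
    | succ k ihk =>
      have e : (Fin (k+1) → S) ≃ₗ[R] S × (Fin k → S) :=
        { (Fin.consEquiv fun _ => S).symm with
          map_add' := fun a b => rfl
          map_smul' := fun c a => rfl }
      rw [dim.d_congr _ _ (hfp _) e, dim.d_add S (Fin k → S) (hfp _) (hfp _), ihk]
      push_cast
      ring
  have hk1 : ∀ k : ℕ, dim.d (Fin k → S) ≤ 1 := by
    intro k
    have hex : ∃ s : Fin k → S, LinearIndependent (Module.End R S) s := by
      have hnf := end_not_finite R S hkdim hfaith
      set b := Module.Basis.ofVectorSpace (Module.End R S) S with hb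
      haveI : Infinite ↥(Module.Basis.ofVectorSpaceIndex (Module.End R S) S) := by
        rw [← not_finite_iff_infinite]
        intro hfin
        exact hnf (Module.Finite.of_basis b)
      set emb : Fin k ↪ ↥(Module.Basis.ofVectorSpaceIndex (Module.End R S) S) :=
        (Fin.valEmbedding).trans (Infinite.natEmbedding _)
      exact ⟨b ∘ emb, b.linearIndependent.comp emb emb.injective⟩
    obtain ⟨s, hs⟩ := hex
    have hsurj := density_surj R S k s hs
    set φ : R →ₗ[R] (Fin k → S) :=
      LinearMap.pi fun i => LinearMap.toSpanSingleton R S (s i) with hφ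
    set K := LinearMap.ker φ with hKdef
    haveI : Module.Finite R ↥K := Module.Finite.iff_fg.mpr (IsNoetherian.noetherian K)
    have hexact : Function.Exact K.subtype φ := by
      rw [LinearMap.exact_iff]
      exact (Submodule.range_subtype K).symm
    have hle := (dim.d_exact ↥K R (Fin k → S) (hfp _) (hfp _) (hfp _)
      K.subtype φ hexact hsurj).1
    calc dim.d (Fin k → S) ≤ dim.d R := hle
    _ = 1 := dim.d_self
  have h0 : 0 ≤ dim.d S := dim.d_nonneg S (hfp S)
  by_contra hne
  have hpos : 0 < dim.d S := lt_of_le_of_ne h0 (Ne.symm hne)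
  obtain ⟨n, hn⟩ := exists_nat_gt (1 / dim.d S)
  have h1 := hk1 n
  rw [hdk n] at h1
  rw [div_lt_iff₀ hpos] at hn
  linarith

end Lemmas

set_option maxHeartbeats 1000000 in
lemma aux_finlength (R : Type) [Ring R] [IsNoetherianRing R]
    (halmost : ∀ I : TwoSidedIdeal R, I ≠ ⊥ →
      ∃ c : R, c ∈ I ∧ c ≠ 0 ∧ c ∈ Set.center R)
    (hkdim : ¬ KdimLE R 0 R)
    (dim : SylvesterModuleRank R) :
    ∀ (M : Type) [AddCommGroup M] [Module R M], IsFiniteLength R M →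
      (∀ c ∈ Set.center R, c ≠ 0 → ∀ m : M, m ≠ 0 → c • m ≠ 0) →
        dim.d M = 0 := by
  classical
  have hfp : ∀ (T : Type) [AddCommGroup T] [Module R T] [Module.Finite R T],
      Module.FinitePresentation R T := fun T _ _ _ =>
    Module.finitePresentation_of_finite R T
  intro M _ _ hlen
  induction hlen with
  | @of_subsingleton M _ _ _ =>
    intro _
    haveI : Module.Finite R M := ⟨⟨∅, by
      rw [eq_top_iff]
      intro x _
      have : x = 0 := Subsingleton.elim x 0
      simp [this]⟩⟩
    rw [dim.d_congr M PUnit (hfp _) (LinearEquiv.ofSubsingleton _ _), dim.d_bot]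
  | @of_simple_quotient M _ _ N _ hN ih =>
    intro htf
    have hfl : IsFiniteLength R M := .of_simple_quotient hN
    obtain ⟨hnoeth, hart⟩ := isFiniteLength_iff_isNoetherian_isArtinian.mp hfl
    haveI := hnoeth; haveI := hart
    haveI : Module.Finite R M := ⟨IsNoetherian.noetherian ⊤⟩
    haveI : Module.Finite R ↥N := Module.Finite.iff_fg.mpr (IsNoetherian.noetherian N)
    haveI : Module.Finite R (M ⧸ N) := Module.Finite.of_surjective N.mkQ
      (Submodule.mkQ_surjective N)
    -- torsionfreeness of N
    have htfN : ∀ c ∈ Set.center R, c ≠ 0 → ∀ m : ↥N, m ≠ 0 → c • m ≠ 0 := by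
      intro c hc hc0 m hm hcm
      refine htf c hc hc0 (m : M) (by simpa using hm) ?_
      have := congrArg (Subtype.val) hcm
      simpa using this
    have hdN : dim.d ↥N = 0 := ih htfN
    -- the quotient is faithful
    have hfaith : ∀ r : R, (∀ x : M ⧸ N, r • x = 0) → r = 0 := by
      by_contra hnot
      push_neg at hnot
      obtain ⟨r, hrkill, hr0⟩ := hnot
      set I : TwoSidedIdeal R := TwoSidedIdeal.mk'
        {r : R | ∀ x : M ⧸ N, r • x = 0}
        (fun x => by simp)
        (fun {a b} ha hb x => by rw [add_smul, ha x, hb x, add_zero])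
        (fun {a} ha x => by rw [neg_smul, ha x, neg_zero])
        (fun {a b} hb x => by rw [mul_smul, hb x, smul_zero])
        (fun {a b} ha x => by rw [mul_smul, ha (b • x)]) with hI
      have hmem : ∀ z : R, z ∈ I ↔ ∀ x : M ⧸ N, z • x = 0 := fun z =>
        TwoSidedIdeal.mem_mk' _ _ _ _ _ _ z
      have hIne : I ≠ ⊥ := by
        intro hbot
        apply hr0
        have : r ∈ I := (hmem r).mpr hrkill
        rwa [hbot, TwoSidedIdeal.mem_bot] at this
      obtain ⟨c, hcI, hc0, hcZ⟩ := halmost I hIne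
      have hckill := (hmem c).mp hcI
      -- multiplication by c is an injective endomorphism of M
      set cm : M →ₗ[R] M :=
        { toFun := fun m => c • m
          map_add' := fun a b => smul_add c a b
          map_smul' := fun t m => by
            simp only [RingHom.id_apply, smul_smul]
            rw [hcZ.comm t] } with hcm
      have hinj : Function.Injective cm := by
        intro a b hab
        by_contra hne
        have : a - b ≠ 0 := sub_ne_zero.mpr hne
        refine htf c hcZ hc0 (a - b) this ?_
        have : cm (a - b) = 0 := by rw [map_sub, hab, sub_self]
        simpa [hcm] using this
      have hsurj : Function.Surjective cm :=
        IsArtinian.surjective_of_injective_endomorphism cm hinj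
      -- N is proper
      haveI : Nontrivial (M ⧸ N) := IsSimpleModule.nontrivial R (M ⧸ N)
      have hNtop : N ≠ ⊤ := by
        intro h
        have := Submodule.Quotient.subsingleton_iff.mpr h
        exact not_subsingleton (M ⧸ N) this
      obtain ⟨x, hxN⟩ : ∃ x : M, x ∉ N := by
        by_contra h
        push_neg at h
        exact hNtop (eq_top_iff.mpr fun y _ => h y)
      obtain ⟨m, hm⟩ := hsurj x
      apply hxN
      have : c • (N.mkQ m) = 0 := hckill _
      rw [← map_smul] at this
      have : c • m ∈ N := (Submodule.Quotient.mk_eq_zero N).mp this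
      rwa [show x = c • m from hm.symm]
    have hdQ : dim.d (M ⧸ N) = 0 :=
      dim_simple_faithful R (M ⧸ N) hkdim dim hfaith
    have fp1 : Module.FinitePresentation R ↥N := hfp _
    have fp2 : Module.FinitePresentation R M := hfp _
    have fp3 : Module.FinitePresentation R (M ⧸ N) := hfp _
    have hle := (dim.d_exact ↥N M (M ⧸ N) fp1 fp2 fp3
      N.subtype N.mkQ
      (LinearMap.exact_iff.mpr ((Submodule.ker_mkQ N).trans (Submodule.range_subtype N).symm))
      (Submodule.mkQ_surjective N)).2
    rw [hdN, hdQ] at hle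
    have h0 : 0 ≤ dim.d M := dim.d_nonneg M (hfp _)
    linarith

/-- Let `R` be a left Noetherian almost simple ring (every non-zero two-sided ideal
contains a non-zero central element) with left Krull dimension at least `1`, and let
`dim` be a Sylvester module rank function on `R`. If `M` is a finitely generated
`Z(R)`-torsionfree left `R`-module of finite length, then `dim M = 0`. -/
theorem almost_simple_torsionfree_rank_zero (R : Type) [Ring R] [IsNoetherianRing R]
    (halmost : ∀ I : TwoSidedIdeal R, I ≠ ⊥ →
      ∃ c : R, c ∈ I ∧ c ≠ 0 ∧ c ∈ Set.center R)
    (hkdim : ¬ KdimLE R 0 R)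
    (dim : SylvesterModuleRank R)
    (M : Type) [AddCommGroup M] [Module R M] [Module.Finite R M]
    (hlen : IsFiniteLength R M)
    (htf : ∀ c ∈ Set.center R, c ≠ 0 → ∀ m : M, m ≠ 0 → c • m ≠ 0) :
    dim.d M = 0 :=
  aux_finlength R halmost hkdim dim M hlen htf
end

section
/- Let D be a division ring, τ an automorphism of D of infinite inner order (no positive power of τ is an inner automorphism), and R = D[t^{±1}; τ] the skew Laurent polynomial ring. Then the center of R equals K^τ, the subfield of elements of K = Z(D) fixed by τ. -/
/-- Let `D` be a division ring and `τ` an automorphism of `D` of infinite inner order.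
The skew Laurent polynomial ring `R = D[t^{±1}; τ]` is axiomatized by a ring embedding
`φ : D → R` and a unit `t` with `t · φ d = φ (τ d) · t`, such that every element of `R`
is uniquely a finite sum `Σ φ (a i) * t ^ i` over `i : ℤ`. Then the center of `R` is
`φ '' K^τ`, where `K^τ` is the set of `τ`-fixed elements of the center of `D`. -/
theorem center_skewLaurent_of_infinite_inner_order
    (D R : Type) [DivisionRing D] [Ring R] (τ : RingAut D) (φ : D →+* R) (t : Rˣ)
    (hcomm : ∀ d : D, (t : R) * φ d = φ (τ d) * (t : R))
    (hbasis : ∀ x : R, ∃! a : ℤ →₀ D,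
      x = a.sum fun i c => φ c * ((t ^ i : Rˣ) : R))
    (hinf : ∀ m : ℕ, 0 < m → ¬ ∃ u : Dˣ, ∀ d : D, (τ ^ m) d = (u⁻¹ : Dˣ) * d * u) :
    Set.center R = φ '' {c : D | c ∈ Set.center D ∧ τ c = c} := by
  classical
  -- R is nontrivial
  haveI hνR : Nontrivial R := by
    by_contra h
    rw [not_nontrivial_iff_subsingleton] at h
    obtain ⟨c0, -, hu⟩ := hbasis 0
    have h1 := hu (Finsupp.single 0 1) (Subsingleton.elim _ _)
    have h2 := hu 0 (Subsingleton.elim _ _)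
    exact one_ne_zero (Finsupp.single_eq_zero.mp (h1.trans h2.symm))
  have hφinj : Function.Injective φ := φ.injective
  -- uniqueness of representation
  have hrep : ∀ a b : ℤ →₀ D,
      (a.sum fun i c => φ c * ((t ^ i : Rˣ) : R)) =
      (b.sum fun i c => φ c * ((t ^ i : Rˣ) : R)) → a = b := by
    intro a b hab
    obtain ⟨c0, -, hu⟩ := hbasis (a.sum fun i c => φ c * ((t ^ i : Rˣ) : R))
    exact (hu a rfl).trans (hu b hab).symm
  -- commutation of powers of t with φ d
  have hneg : ∀ d : D, ((t⁻¹ : Rˣ) : R) * φ d = φ (τ⁻¹ d) * ((t⁻¹ : Rˣ) : R) := by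
    intro d
    have h1 := hcomm (τ⁻¹ d)
    rw [show τ (τ⁻¹ d) = d from τ.apply_symm_apply d] at h1
    have h2 : (↑t⁻¹ : R) * ((↑t : R) * φ (τ⁻¹ d)) * ↑t⁻¹ = ↑t⁻¹ * (φ d * ↑t) * ↑t⁻¹ := by
      rw [h1]
    symm
    simpa [mul_assoc] using h2
  have key : ∀ (i : ℤ) (d : D),
      ((t ^ i : Rˣ) : R) * φ d = φ ((τ ^ i) d) * ((t ^ i : Rˣ) : R) := by
    intro i
    induction i using Int.induction_on with
    | zero =>
      intro d
      rw [zpow_zero, zpow_zero]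
      show ((1 : Rˣ) : R) * φ d = φ d * ((1 : Rˣ) : R)
      simp
    | succ n ih =>
      intro d
      have e1 : (t ^ ((n : ℤ) + 1) : Rˣ) = t ^ (n : ℤ) * t := zpow_add_one t n
      have e2 : (τ ^ ((n : ℤ) + 1)) d = (τ ^ (n : ℤ)) (τ d) := by
        rw [zpow_add_one]; rfl
      rw [e1, e2, Units.val_mul, mul_assoc, hcomm d, ← mul_assoc, ih (τ d), mul_assoc]
    | pred n ih =>
      intro d
      have e1 : (t ^ (-(n : ℤ) - 1) : Rˣ) = t ^ (-(n : ℤ)) * t⁻¹ := zpow_sub_one t _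
      have e2 : (τ ^ (-(n : ℤ) - 1)) d = (τ ^ (-(n : ℤ))) (τ⁻¹ d) := by
        rw [zpow_sub_one]; rfl
      rw [e1, e2, Units.val_mul, mul_assoc, hneg d, ← mul_assoc, ih (τ⁻¹ d), mul_assoc]
  ext z
  constructor
  · -- z central ⇒ z = φ c with c fixed central
    intro hz
    have hzc : ∀ g : R, g * z = z * g := Semigroup.mem_center_iff.mp hz
    obtain ⟨a, hzr, -⟩ := hbasis z
    have main : ∀ (d : D) (i : ℤ), a i * (τ ^ i) d = d * a i := by
      intro d i
      set b : ℤ →₀ D := Finsupp.onFinset a.support (fun j => a j * (τ ^ j) d)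
        (fun j h => Finsupp.mem_support_iff.mpr fun h0 => h (by simp [h0])) with hb
      set c' : ℤ →₀ D := Finsupp.onFinset a.support (fun j => d * a j)
        (fun j h => Finsupp.mem_support_iff.mpr fun h0 => h (by simp [h0])) with hc'
      have e1 : z * φ d = ∑ j ∈ a.support, φ (a j * (τ ^ j) d) * ((t ^ j : Rˣ) : R) := by
        rw [hzr, Finsupp.sum, Finset.sum_mul]
        refine Finset.sum_congr rfl fun j _ => ?_
        rw [mul_assoc, key j d, ← mul_assoc, ← map_mul]
      have e2 : φ d * z = ∑ j ∈ a.support, φ (d * a j) * ((t ^ j : Rˣ) : R) := by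
        rw [hzr, Finsupp.sum, Finset.mul_sum]
        refine Finset.sum_congr rfl fun j _ => ?_
        rw [← mul_assoc, ← map_mul]
      have e3 : (b.sum fun i c => φ c * ((t ^ i : Rˣ) : R)) =
          ∑ j ∈ a.support, φ (a j * (τ ^ j) d) * ((t ^ j : Rˣ) : R) :=
        Finsupp.sum_of_support_subset _ Finsupp.support_onFinset_subset _
          (fun j _ => by simp)
      have e4 : (c'.sum fun i c => φ c * ((t ^ i : Rˣ) : R)) =
          ∑ j ∈ a.support, φ (d * a j) * ((t ^ j : Rˣ) : R) :=
        Finsupp.sum_of_support_subset _ Finsupp.support_onFinset_subset _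
          (fun j _ => by simp)
      have hbc : b = c' := hrep _ _ (by rw [e3, e4, ← e1, ← e2, hzc (φ d)])
      exact DFunLike.congr_fun hbc i
    have hz0 : ∀ i : ℤ, i ≠ 0 → a i = 0 := by
      intro i hi
      by_contra hq
      have hτ : ∀ d : D, (τ ^ i) d = (a i)⁻¹ * d * a i := fun d => by
        rw [mul_assoc, ← main d i, inv_mul_cancel_left₀ hq]
      rcases lt_or_gt_of_ne hi with hlt | hpos
      · -- i < 0
        set m := (-i).toNat with hm
        have hm0 : 0 < m := by omega
        have hmi : (m : ℤ) = -i := by omega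
        refine hinf m hm0 ⟨(Units.mk0 (a i) hq)⁻¹, fun d => ?_⟩
        have h1 : (τ ^ i) ((τ ^ (m : ℤ)) d) = d := by
          have hone : (τ ^ i) * (τ ^ (m : ℤ)) = 1 := by
            rw [← zpow_add, hmi]; simp
          calc (τ ^ i) ((τ ^ (m : ℤ)) d) = ((τ ^ i) * (τ ^ (m : ℤ))) d := rfl
            _ = d := by rw [hone]; rfl
        have h2 := hτ ((τ ^ (m : ℤ)) d)
        rw [h1] at h2
        set X := (τ ^ (m : ℤ)) d with hX
        have h3 : X = a i * d * (a i)⁻¹ := by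
          rw [h2]
          simp [mul_assoc, mul_inv_cancel₀ hq, inv_mul_cancel₀ hq,
            mul_inv_cancel_left₀ hq, inv_mul_cancel_left₀ hq]
        have h4 : (τ ^ m) d = X := by rw [hX, zpow_natCast]
        rw [h4, h3]
        simp
      · -- i > 0
        set m := i.toNat with hm
        have hm0 : 0 < m := by omega
        have hmi : (m : ℤ) = i := by omega
        refine hinf m hm0 ⟨Units.mk0 (a i) hq, fun d => ?_⟩
        have h4 : (τ ^ m) d = (τ ^ i) d := by rw [← zpow_natCast, hmi]
        rw [h4, hτ d]
        simp
    have ha : a = Finsupp.single 0 (a 0) := by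
      ext j
      by_cases hj : j = 0
      · subst hj; simp
      · rw [hz0 j hj, Finsupp.single_eq_of_ne' (Ne.symm hj)]
    have hz' : z = φ (a 0) := by
      rw [hzr, ha, Finsupp.sum_single_index (by simp)]
      simp
    refine ⟨a 0, ⟨?_, ?_⟩, hz'.symm⟩
    · refine Semigroup.mem_center_iff.mpr fun d => ?_
      have := main d 0
      simpa using this.symm
    · have h1 : (t : R) * z = z * (t : R) := hzc t
      rw [hz', hcomm (a 0)] at h1
      have h2 : φ (τ (a 0)) = φ (a 0) := by
        have := congrArg (· * ((t⁻¹ : Rˣ) : R)) h1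
        simpa [mul_assoc] using this
      exact hφinj h2
  · -- φ c with c fixed central ⇒ central
    rintro ⟨c, ⟨hcen, hfix⟩, rfl⟩
    have hinvfix : τ⁻¹ c = c := by
      calc τ⁻¹ c = τ⁻¹ (τ c) := by rw [hfix]
        _ = c := τ.symm_apply_apply c
    have hfixz : ∀ i : ℤ, (τ ^ i) c = c := by
      intro i
      induction i using Int.induction_on with
      | zero => rw [zpow_zero]; rfl
      | succ n ih =>
        have e2 : (τ ^ ((n : ℤ) + 1)) c = (τ ^ (n : ℤ)) (τ c) := by
          rw [zpow_add_one]; rfl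
        rw [e2, hfix, ih]
      | pred n ih =>
        have e2 : (τ ^ (-(n : ℤ) - 1)) c = (τ ^ (-(n : ℤ))) (τ⁻¹ c) := by
          rw [zpow_sub_one]; rfl
        rw [e2, hinvfix, ih]
    refine Semigroup.mem_center_iff.mpr fun x => ?_
    obtain ⟨a, hx, -⟩ := hbasis x
    rw [hx, Finsupp.sum_mul, Finsupp.mul_sum]
    refine Finsupp.sum_congr fun i _ => ?_
    rw [mul_assoc, key i c, hfixz i, ← mul_assoc, ← map_mul,
      Semigroup.mem_center_iff.mp hcen (a i), map_mul, mul_assoc]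
end

section
/- Let D be a division ring, τ an automorphism of D, R = D[t^{±1}; τ], and let I be a non-zero proper two-sided ideal of R. Then there exists a non-constant polynomial p ∈ Z(R) ∩ D[t;τ] with non-zero constant term such that I = Rp; moreover I is a maximal two-sided ideal if and only if p is irreducible as an element of the commutative ring S = Z(R) ∩ D[t;τ]. -/
@[simp] lemma SLauxOneApply {D : Type} [DivisionRing D] (d : D) : (1 : RingAut D) d = d := rfl

section
variable {D R : Type} [DivisionRing D] [Ring R] (τ : RingAut D) (φ : D →+* R) (t : Rˣ)

/-- monomial -/
def SLM (i : ℤ) (c : D) : R := φ c * ((t ^ i : Rˣ) : R)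

variable (hcomm : ∀ d : D, (t : R) * φ d = φ (τ d) * (t : R))
  (hbasis : ∀ x : R, ∃! a : ℤ →₀ D, x = a.sum fun i c => φ c * ((t ^ i : Rˣ) : R))

noncomputable def SLrep (x : R) : ℤ →₀ D := (hbasis x).choose

lemma SLrep_spec (x : R) : x = (SLrep φ t hbasis x).sum fun i c => φ c * ((t ^ i : Rˣ) : R) :=
  (hbasis x).choose_spec.1

lemma SLrep_unique {x : R} {a : ℤ →₀ D}
    (h : x = a.sum fun i c => φ c * ((t ^ i : Rˣ) : R)) : SLrep φ t hbasis x = a := by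
  exact ((hbasis x).choose_spec.2 a h).symm

lemma SLM_zero (i : ℤ) : SLM φ t i 0 = 0 := by simp [SLM]

lemma SLM_add (i : ℤ) (c c' : D) : SLM φ t i (c + c') = SLM φ t i c + SLM φ t i c' := by
  simp [SLM, add_mul]

lemma SLrep_monomial (i : ℤ) (c : D) : SLrep φ t hbasis (SLM φ t i c) = Finsupp.single i c := by
  refine SLrep_unique φ t hbasis ?_
  rw [Finsupp.sum_single_index (by simp)]
  rfl

lemma SLrep_zero : SLrep φ t hbasis 0 = 0 := by
  simpa [SLM] using SLrep_monomial φ t hbasis 0 0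

lemma SLrep_add (x y : R) :
    SLrep φ t hbasis (x + y) = SLrep φ t hbasis x + SLrep φ t hbasis y := by
  refine SLrep_unique φ t hbasis ?_
  rw [Finsupp.sum_add_index' (by simp) (by intro i b₁ b₂; simp [add_mul])]
  exact congrArg₂ (· + ·) (SLrep_spec φ t hbasis x) (SLrep_spec φ t hbasis y)

lemma SLrep_injective {x y : R} (h : SLrep φ t hbasis x = SLrep φ t hbasis y) : x = y := by
  rw [SLrep_spec φ t hbasis x, SLrep_spec φ t hbasis y, h]

lemma SLrep_eq_zero_iff {x : R} : SLrep φ t hbasis x = 0 ↔ x = 0 :=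
  ⟨fun h => SLrep_injective φ t hbasis (h.trans (SLrep_zero φ t hbasis).symm),
   fun h => h ▸ SLrep_zero φ t hbasis⟩

/-- coefficient functional as an AddMonoidHom -/
noncomputable def SLcoeff (k : ℤ) : R →+ D where
  toFun x := SLrep φ t hbasis x k
  map_zero' := by simp only [SLrep_zero]; rfl
  map_add' x y := by simp only [SLrep_add]; rfl

lemma tinv_comm (hcomm : ∀ d : D, (t : R) * φ d = φ (τ d) * (t : R)) (d : D) :
    ((t⁻¹ : Rˣ) : R) * φ d = φ ((τ⁻¹ : RingAut D) d) * ((t⁻¹ : Rˣ) : R) := by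
  have h := hcomm ((τ⁻¹ : RingAut D) d)
  rw [show τ ((τ⁻¹ : RingAut D) d) = d from τ.apply_symm_apply d] at h
  calc (↑t⁻¹ : R) * φ d = ↑t⁻¹ * (φ d * ↑t) * ↑t⁻¹ := by
        rw [mul_assoc, mul_assoc, Units.mul_inv, mul_one]
    _ = ↑t⁻¹ * (↑t * φ ((τ⁻¹ : RingAut D) d)) * ↑t⁻¹ := by rw [h]
    _ = φ ((τ⁻¹ : RingAut D) d) * ↑t⁻¹ := by
        rw [← mul_assoc (↑t⁻¹ : R) (↑t : R), Units.inv_mul, one_mul]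

lemma tzpow_comm (hcomm : ∀ d : D, (t : R) * φ d = φ (τ d) * (t : R)) (i : ℤ) (d : D) :
    ((t ^ i : Rˣ) : R) * φ d = φ ((τ ^ i) d) * ((t ^ i : Rˣ) : R) := by
  induction i using Int.induction_on generalizing d with
  | zero => simp only [zpow_zero, Units.val_one, one_mul, mul_one]; rfl
  | succ n ih =>
      have h1 : (t ^ ((n : ℤ) + 1) : Rˣ) = t ^ (n : ℤ) * t := by rw [zpow_add_one]
      have h2 : (τ ^ ((n:ℤ)+1)) d = (τ ^ (n:ℤ)) (τ d) := by rw [zpow_add_one]; rfl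
      rw [h1, Units.val_mul, h2, ← mul_assoc, mul_assoc _ _ (φ d), hcomm, ← mul_assoc,
        ih (τ d), mul_assoc]
  | pred n ih =>
      have h1 : (t ^ (-(n : ℤ) - 1) : Rˣ) = t ^ (-(n : ℤ)) * t⁻¹ := by rw [zpow_sub_one]
      have h2 : (τ ^ (-(n:ℤ)-1)) d = (τ ^ (-(n:ℤ))) ((τ⁻¹ : RingAut D) d) := by
        rw [zpow_sub_one]; rfl
      rw [h1, Units.val_mul, h2, ← mul_assoc, mul_assoc _ _ (φ d), tinv_comm τ φ t hcomm,
        ← mul_assoc, ih ((τ⁻¹ : RingAut D) d), mul_assoc]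

lemma SLM_mul_SLM (hcomm : ∀ d : D, (t : R) * φ d = φ (τ d) * (t : R)) (i j : ℤ) (a b : D) :
    (φ a * ((t ^ i : Rˣ) : R)) * (φ b * ((t ^ j : Rˣ) : R))
      = φ (a * (τ ^ i) b) * ((t ^ (i + j) : Rˣ) : R) := by
  rw [mul_assoc, ← mul_assoc (((t ^ i : Rˣ) : R)), tzpow_comm τ φ t hcomm, map_mul,
    mul_assoc, mul_assoc, ← Units.val_mul, ← zpow_add]


lemma SLrep_phi (d : D) : SLrep φ t hbasis (φ d) = Finsupp.single 0 d := by
  have : φ d = SLM φ t 0 d := by simp [SLM]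
  rw [this, SLrep_monomial]

lemma SLrep_tz (j : ℤ) : SLrep φ t hbasis ((t ^ j : Rˣ) : R) = Finsupp.single j 1 := by
  have : ((t ^ j : Rˣ) : R) = SLM φ t j 1 := by simp [SLM]
  rw [this, SLrep_monomial]

include hcomm hbasis

lemma SLcoeff_monomial_mul (i : ℤ) (c : D) (y : R) (k : ℤ) :
    SLcoeff φ t hbasis k (φ c * ((t ^ i : Rˣ) : R) * y)
      = c * (τ ^ i) (SLcoeff φ t hbasis (k - i) y) := by
  set a := SLrep φ t hbasis y with ha
  set f : ℤ ↪ ℤ := ⟨fun j => i + j, fun u v h => by simpa using h⟩ with hf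
  set b : ℤ →₀ D := Finsupp.embDomain f
    (a.mapRange (fun z => c * (τ ^ i) z) (by simp)) with hb
  have hyb : φ c * ((t ^ i : Rˣ) : R) * y = b.sum fun j z => φ z * ((t ^ j : Rˣ) : R) := by
    conv_lhs => rw [SLrep_spec φ t hbasis y, ← ha, Finsupp.mul_sum]
    rw [hb, Finsupp.sum_embDomain, Finsupp.sum_mapRange_index (by simp)]
    exact Finsupp.sum_congr fun j _ => SLM_mul_SLM τ φ t hcomm i j c (a j)
  have hrep : SLrep φ t hbasis (φ c * ((t ^ i : Rˣ) : R) * y) = b :=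
    SLrep_unique φ t hbasis hyb
  show SLrep φ t hbasis (φ c * ((t ^ i : Rˣ) : R) * y) k = _
  have hk : k = f (k - i) := by show k = i + (k - i); omega
  conv_lhs => rw [hrep, hk]
  rw [Finsupp.embDomain_apply_self, Finsupp.mapRange_apply]
  rfl

lemma SLcoeff_mul (x y : R) (k : ℤ) :
    SLcoeff φ t hbasis k (x * y)
      = (SLrep φ t hbasis x).sum fun i c => c * (τ ^ i) (SLcoeff φ t hbasis (k - i) y) := by
  conv_lhs => rw [SLrep_spec φ t hbasis x, Finsupp.sum_mul]
  rw [map_finsuppSum]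
  exact Finsupp.sum_congr fun i _ => SLcoeff_monomial_mul τ φ t hcomm hbasis i _ y k

lemma SLcoeff_phi_mul (d : D) (y : R) (k : ℤ) :
    SLcoeff φ t hbasis k (φ d * y) = d * SLcoeff φ t hbasis k y := by
  have h := SLcoeff_monomial_mul τ φ t hcomm hbasis 0 d y k
  simp only [zpow_zero, Units.val_one, mul_one, sub_zero, SLauxOneApply] at h
  exact h

lemma SLcoeff_mul_phi (y : R) (d : D) (k : ℤ) :
    SLcoeff φ t hbasis k (y * φ d) = SLcoeff φ t hbasis k y * (τ ^ k) d := by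
  rw [SLcoeff_mul τ φ t hcomm hbasis]
  unfold Finsupp.sum
  rw [Finset.sum_eq_single k]
  · show SLrep φ t hbasis y k * _ = _
    rw [show SLcoeff φ t hbasis (k - k) (φ d) = d by
      show SLrep φ t hbasis (φ d) (k - k) = d
      rw [SLrep_phi φ t hbasis]; simp]
    rfl
  · intro i _ hik
    show SLrep φ t hbasis y i * (τ ^ i) ((SLcoeff φ t hbasis (k - i)) (φ d)) = 0
    rw [show SLcoeff φ t hbasis (k - i) (φ d) = 0 by
      show SLrep φ t hbasis (φ d) (k - i) = 0
      rw [SLrep_phi φ t hbasis]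
      exact Finsupp.single_eq_of_ne (by omega)]
    simp
  · intro hk
    rw [Finsupp.notMem_support_iff.mp hk]
    simp

lemma SLcoeff_mul_tz (y : R) (j k : ℤ) :
    SLcoeff φ t hbasis k (y * ((t ^ j : Rˣ) : R)) = SLcoeff φ t hbasis (k - j) y := by
  rw [SLcoeff_mul τ φ t hcomm hbasis]
  unfold Finsupp.sum
  rw [Finset.sum_eq_single (k - j)]
  · show SLrep φ t hbasis y (k - j) * _ = _
    rw [show SLcoeff φ t hbasis (k - (k - j)) ((t ^ j : Rˣ) : R) = 1 by
      show SLrep φ t hbasis ((t ^ j : Rˣ) : R) (k - (k - j)) = 1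
      rw [SLrep_tz φ t hbasis, show k - (k - j) = j by omega]; simp]
    simp; rfl
  · intro i _ hik
    show SLrep φ t hbasis y i * (τ ^ i) ((SLcoeff φ t hbasis (k - i)) ((t ^ j : Rˣ) : R)) = 0
    rw [show SLcoeff φ t hbasis (k - i) ((t ^ j : Rˣ) : R) = 0 by
      show SLrep φ t hbasis ((t ^ j : Rˣ) : R) (k - i) = 0
      rw [SLrep_tz φ t hbasis]
      exact Finsupp.single_eq_of_ne (by omega)]
    simp
  · intro hk
    rw [Finsupp.notMem_support_iff.mp hk]
    simp

lemma SLcoeff_conj (y : R) (k : ℤ) :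
    SLcoeff φ t hbasis k ((t : R) * y * ((t⁻¹ : Rˣ) : R)) = τ (SLcoeff φ t hbasis k y) := by
  have h1 : ((t⁻¹ : Rˣ) : R) = ((t ^ (-1 : ℤ) : Rˣ) : R) := by simp
  have h2 : (t : R) * y = φ 1 * ((t ^ (1:ℤ) : Rˣ) : R) * y := by simp
  rw [h1, SLcoeff_mul_tz τ φ t hcomm hbasis, h2,
    SLcoeff_monomial_mul τ φ t hcomm hbasis]
  simp only [one_mul, zpow_one]
  rw [show k - -1 - 1 = k by omega]

noncomputable def SLsup (x : R) : ℤ := WithBot.unbotD 0 ((SLrep φ t hbasis x).support.max)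
noncomputable def SLinf (x : R) : ℤ := WithTop.untopD 0 ((SLrep φ t hbasis x).support.min)

omit hcomm in
lemma SLsupp_nonempty {x : R} (hx : x ≠ 0) : (SLrep φ t hbasis x).support.Nonempty := by
  rw [Finsupp.support_nonempty_iff]
  exact fun h => hx (SLrep_eq_zero_iff φ t hbasis |>.mp h)

omit hcomm in
lemma SLsup_eq {x : R} (hx : x ≠ 0) :
    SLsup φ t hbasis x = (SLrep φ t hbasis x).support.max' (SLsupp_nonempty φ t hbasis hx) := by
  rw [SLsup, ← Finset.coe_max' (SLsupp_nonempty φ t hbasis hx)]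
  rfl

omit hcomm in
lemma SLinf_eq {x : R} (hx : x ≠ 0) :
    SLinf φ t hbasis x = (SLrep φ t hbasis x).support.min' (SLsupp_nonempty φ t hbasis hx) := by
  rw [SLinf, ← Finset.coe_min' (SLsupp_nonempty φ t hbasis hx)]
  rfl

omit hcomm in
lemma SLsup_coeff_ne_zero {x : R} (hx : x ≠ 0) :
    SLcoeff φ t hbasis (SLsup φ t hbasis x) x ≠ 0 := by
  rw [SLsup_eq φ t hbasis hx]
  exact Finsupp.mem_support_iff.mp (Finset.max'_mem _ _)

omit hcomm in
lemma SLinf_coeff_ne_zero {x : R} (hx : x ≠ 0) :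
    SLcoeff φ t hbasis (SLinf φ t hbasis x) x ≠ 0 := by
  rw [SLinf_eq φ t hbasis hx]
  exact Finsupp.mem_support_iff.mp (Finset.min'_mem _ _)

omit hcomm in
lemma le_SLsup {x : R} (hx : x ≠ 0) {k : ℤ} (hk : SLcoeff φ t hbasis k x ≠ 0) :
    k ≤ SLsup φ t hbasis x := by
  rw [SLsup_eq φ t hbasis hx]
  exact Finset.le_max' _ _ (Finsupp.mem_support_iff.mpr hk)

omit hcomm in
lemma SLinf_le {x : R} (hx : x ≠ 0) {k : ℤ} (hk : SLcoeff φ t hbasis k x ≠ 0) :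
    SLinf φ t hbasis x ≤ k := by
  rw [SLinf_eq φ t hbasis hx]
  exact Finset.min'_le _ _ (Finsupp.mem_support_iff.mpr hk)

omit hcomm in
lemma SLcoeff_eq_zero_of_sup_lt {x : R} (hx : x ≠ 0) {k : ℤ}
    (hk : SLsup φ t hbasis x < k) : SLcoeff φ t hbasis k x = 0 := by
  by_contra h
  exact absurd (le_SLsup φ t hbasis hx h) (by omega)

omit hcomm in
lemma SLcoeff_eq_zero_of_lt_inf {x : R} (hx : x ≠ 0) {k : ℤ}
    (hk : k < SLinf φ t hbasis x) : SLcoeff φ t hbasis k x = 0 := by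
  by_contra h
  exact absurd (SLinf_le φ t hbasis hx h) (by omega)

lemma SLcoeff_mul_top {x y : R} (hx : x ≠ 0) (hy : y ≠ 0) :
    SLcoeff φ t hbasis (SLsup φ t hbasis x + SLsup φ t hbasis y) (x * y)
      = SLcoeff φ t hbasis (SLsup φ t hbasis x) x
        * (τ ^ (SLsup φ t hbasis x)) (SLcoeff φ t hbasis (SLsup φ t hbasis y) y) := by
  rw [SLcoeff_mul τ φ t hcomm hbasis]
  unfold Finsupp.sum
  rw [Finset.sum_eq_single (SLsup φ t hbasis x)]
  · show SLrep φ t hbasis x _ * _ = _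
    rw [show SLsup φ t hbasis x + SLsup φ t hbasis y - SLsup φ t hbasis x
        = SLsup φ t hbasis y by omega]
    rfl
  · intro i hi hine
    have hile : i ≤ SLsup φ t hbasis x :=
      le_SLsup φ t hbasis hx (Finsupp.mem_support_iff.mp hi)
    show SLrep φ t hbasis x i * (τ ^ i)
      ((SLcoeff φ t hbasis (SLsup φ t hbasis x + SLsup φ t hbasis y - i)) y) = 0
    rw [SLcoeff_eq_zero_of_sup_lt φ t hbasis hy (by omega)]
    simp
  · intro hmem
    exact absurd (by rw [SLsup_eq φ t hbasis hx]; exact Finset.max'_mem _ _) hmem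

lemma SLcoeff_mul_bot {x y : R} (hx : x ≠ 0) (hy : y ≠ 0) :
    SLcoeff φ t hbasis (SLinf φ t hbasis x + SLinf φ t hbasis y) (x * y)
      = SLcoeff φ t hbasis (SLinf φ t hbasis x) x
        * (τ ^ (SLinf φ t hbasis x)) (SLcoeff φ t hbasis (SLinf φ t hbasis y) y) := by
  rw [SLcoeff_mul τ φ t hcomm hbasis]
  unfold Finsupp.sum
  rw [Finset.sum_eq_single (SLinf φ t hbasis x)]
  · show SLrep φ t hbasis x _ * _ = _
    rw [show SLinf φ t hbasis x + SLinf φ t hbasis y - SLinf φ t hbasis x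
        = SLinf φ t hbasis y by omega]
    rfl
  · intro i hi hine
    have hile : SLinf φ t hbasis x ≤ i :=
      SLinf_le φ t hbasis hx (Finsupp.mem_support_iff.mp hi)
    show SLrep φ t hbasis x i * (τ ^ i)
      ((SLcoeff φ t hbasis (SLinf φ t hbasis x + SLinf φ t hbasis y - i)) y) = 0
    rw [SLcoeff_eq_zero_of_lt_inf φ t hbasis hy (by omega)]
    simp
  · intro hmem
    exact absurd (by rw [SLinf_eq φ t hbasis hx]; exact Finset.min'_mem _ _) hmem

lemma SLmul_ne_zero {x y : R} (hx : x ≠ 0) (hy : y ≠ 0) : x * y ≠ 0 := by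
  intro h
  have h2 := SLcoeff_mul_top τ φ t hcomm hbasis hx hy
  rw [h, map_zero] at h2
  exact mul_ne_zero (SLsup_coeff_ne_zero φ t hbasis hx)
    ((map_ne_zero_iff _ (τ ^ (SLsup φ t hbasis x)).injective).mpr
      (SLsup_coeff_ne_zero φ t hbasis hy)) h2.symm

lemma SLcoeff_mul_eq_zero_of_gt {x y : R} (hx : x ≠ 0) (hy : y ≠ 0) {k : ℤ}
    (hk : SLsup φ t hbasis x + SLsup φ t hbasis y < k) : SLcoeff φ t hbasis k (x * y) = 0 := by
  rw [SLcoeff_mul τ φ t hcomm hbasis]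
  unfold Finsupp.sum
  apply Finset.sum_eq_zero
  intro i hi
  have hile : i ≤ SLsup φ t hbasis x :=
    le_SLsup φ t hbasis hx (Finsupp.mem_support_iff.mp hi)
  show SLrep φ t hbasis x i * (τ ^ i) ((SLcoeff φ t hbasis (k - i)) y) = 0
  rw [SLcoeff_eq_zero_of_sup_lt φ t hbasis hy (by omega)]
  simp

lemma SLcoeff_mul_eq_zero_of_lt {x y : R} (hx : x ≠ 0) (hy : y ≠ 0) {k : ℤ}
    (hk : k < SLinf φ t hbasis x + SLinf φ t hbasis y) : SLcoeff φ t hbasis k (x * y) = 0 := by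
  rw [SLcoeff_mul τ φ t hcomm hbasis]
  unfold Finsupp.sum
  apply Finset.sum_eq_zero
  intro i hi
  have hile : SLinf φ t hbasis x ≤ i :=
    SLinf_le φ t hbasis hx (Finsupp.mem_support_iff.mp hi)
  show SLrep φ t hbasis x i * (τ ^ i) ((SLcoeff φ t hbasis (k - i)) y) = 0
  rw [SLcoeff_eq_zero_of_lt_inf φ t hbasis hy (by omega)]
  simp

lemma SLsup_mul {x y : R} (hx : x ≠ 0) (hy : y ≠ 0) :
    SLsup φ t hbasis (x * y) = SLsup φ t hbasis x + SLsup φ t hbasis y := by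
  have hxy := SLmul_ne_zero τ φ t hcomm hbasis hx hy
  refine le_antisymm ?_ ?_
  · by_contra h
    exact SLsup_coeff_ne_zero φ t hbasis hxy
      (SLcoeff_mul_eq_zero_of_gt τ φ t hcomm hbasis hx hy (by omega))
  · apply le_SLsup φ t hbasis hxy
    rw [SLcoeff_mul_top τ φ t hcomm hbasis hx hy]
    exact mul_ne_zero (SLsup_coeff_ne_zero φ t hbasis hx)
      ((map_ne_zero_iff _ (τ ^ (SLsup φ t hbasis x)).injective).mpr
        (SLsup_coeff_ne_zero φ t hbasis hy))

lemma SLinf_mul {x y : R} (hx : x ≠ 0) (hy : y ≠ 0) :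
    SLinf φ t hbasis (x * y) = SLinf φ t hbasis x + SLinf φ t hbasis y := by
  have hxy := SLmul_ne_zero τ φ t hcomm hbasis hx hy
  refine le_antisymm ?_ ?_
  · apply SLinf_le φ t hbasis hxy
    rw [SLcoeff_mul_bot τ φ t hcomm hbasis hx hy]
    exact mul_ne_zero (SLinf_coeff_ne_zero φ t hbasis hx)
      ((map_ne_zero_iff _ (τ ^ (SLinf φ t hbasis x)).injective).mpr
        (SLinf_coeff_ne_zero φ t hbasis hy))
  · by_contra h
    exact SLinf_coeff_ne_zero φ t hbasis hxy
      (SLcoeff_mul_eq_zero_of_lt τ φ t hcomm hbasis hx hy (by omega))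

omit hcomm in
lemma SLrep_one : SLrep φ t hbasis (1 : R) = Finsupp.single 0 1 := by
  have : (1 : R) = φ 1 := (map_one φ).symm
  rw [this, SLrep_phi]

omit hcomm in
lemma SLone_ne_zero : (1 : R) ≠ 0 := by
  intro h
  have h1 := SLrep_one φ t hbasis
  rw [h, SLrep_zero] at h1
  have := Finsupp.single_eq_zero.mp h1.symm
  exact one_ne_zero this

omit hcomm in
lemma SLinf_le_SLsup {x : R} (hx : x ≠ 0) : SLinf φ t hbasis x ≤ SLsup φ t hbasis x :=
  SLinf_le φ t hbasis hx (SLsup_coeff_ne_zero φ t hbasis hx)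

omit hcomm in
lemma SLconst {x : R} (h : ∀ k : ℤ, k ≠ 0 → SLcoeff φ t hbasis k x = 0) :
    x = φ (SLcoeff φ t hbasis 0 x) := by
  apply SLrep_injective φ t hbasis
  rw [SLrep_phi]
  ext k
  by_cases hk : k = 0
  · subst hk; rw [Finsupp.single_eq_same]; rfl
  · rw [Finsupp.single_eq_of_ne hk]
    exact h k hk

omit hcomm in
lemma SLsup_phi {d : D} (hd : d ≠ 0) : SLsup φ t hbasis (φ d) = 0 := by
  have hne : φ d ≠ 0 := by
    intro h
    have := SLrep_phi φ t hbasis d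
    rw [h, SLrep_zero] at this
    exact hd (Finsupp.single_eq_zero.mp this.symm)
  refine le_antisymm ?_ ?_
  · by_contra h
    have h0 : SLcoeff φ t hbasis (SLsup φ t hbasis (φ d)) (φ d) = 0 := by
      show SLrep φ t hbasis (φ d) _ = 0
      rw [SLrep_phi]
      exact Finsupp.single_eq_of_ne (by omega)
    exact SLsup_coeff_ne_zero φ t hbasis hne h0
  · apply le_SLsup φ t hbasis hne
    show SLrep φ t hbasis (φ d) 0 ≠ 0
    rw [SLrep_phi, Finsupp.single_eq_same]
    exact hd

omit hcomm in
lemma SLinf_phi {d : D} (hd : d ≠ 0) : SLinf φ t hbasis (φ d) = 0 := by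
  have hne : φ d ≠ 0 := by
    intro h
    have := SLrep_phi φ t hbasis d
    rw [h, SLrep_zero] at this
    exact hd (Finsupp.single_eq_zero.mp this.symm)
  refine le_antisymm ?_ ?_
  · apply SLinf_le φ t hbasis hne
    show SLrep φ t hbasis (φ d) 0 ≠ 0
    rw [SLrep_phi, Finsupp.single_eq_same]
    exact hd
  · by_contra h
    have h0 : SLcoeff φ t hbasis (SLinf φ t hbasis (φ d)) (φ d) = 0 := by
      show SLrep φ t hbasis (φ d) _ = 0
      rw [SLrep_phi]
      exact Finsupp.single_eq_of_ne (by omega)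
    exact SLinf_coeff_ne_zero φ t hbasis hne h0

lemma SLgen (I : TwoSidedIdeal R) (hbot : I ≠ ⊥) (htop : I ≠ ⊤) :
    ∃ p : R, p ∈ I ∧ p ∈ Set.center R ∧
      SLcoeff φ t hbasis 0 p = 1 ∧
      (∀ k : ℤ, k < 0 → SLcoeff φ t hbasis k p = 0) ∧
      p ≠ 0 ∧ SLinf φ t hbasis p = 0 ∧
      1 ≤ SLsup φ t hbasis p ∧
      (∀ y : R, y ∈ I ↔ ∃ r : R, y = r * p) := by
  classical
  -- a nonzero element of I
  have hex : ∃ x : R, x ∈ I ∧ x ≠ 0 := by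
    by_contra h
    push_neg at h
    refine hbot (TwoSidedIdeal.ext fun y => ?_)
    constructor
    · intro hy
      exact show y = 0 from h y hy
    · intro hy
      rw [show y = 0 from hy]
      exact I.zero_mem
  -- minimal span
  set P : ℕ → Prop := fun n => ∃ x : R, x ∈ I ∧ x ≠ 0 ∧
    (SLsup φ t hbasis x - SLinf φ t hbasis x).toNat = n with hPdef
  have hP : ∃ n, P n := by
    obtain ⟨x, hxI, hx⟩ := hex
    exact ⟨_, x, hxI, hx, rfl⟩
  obtain ⟨x, hxI, hx0, hxspan⟩ := Nat.find_spec hP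
  set n := Nat.find hP with hn
  have hminspan : ∀ y : R, y ∈ I → y ≠ 0 →
      (n : ℤ) ≤ SLsup φ t hbasis y - SLinf φ t hbasis y := by
    intro y hyI hy
    have h1 : n ≤ (SLsup φ t hbasis y - SLinf φ t hbasis y).toNat :=
      Nat.find_min' hP ⟨y, hyI, hy, rfl⟩
    have h2 := SLinf_le_SLsup φ t hbasis hy
    omega
  -- normalize
  set μ := SLinf φ t hbasis x with hμ
  set c := SLcoeff φ t hbasis μ x with hc
  have hcne : c ≠ 0 := SLinf_coeff_ne_zero φ t hbasis hx0
  set p := φ c⁻¹ * (x * ((t ^ (-μ) : Rˣ) : R)) with hp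
  have hpI : p ∈ I := I.mul_mem_left _ _ (I.mul_mem_right _ _ hxI)
  have hpc : ∀ k : ℤ, SLcoeff φ t hbasis k p = c⁻¹ * SLcoeff φ t hbasis (k + μ) x := by
    intro k
    rw [hp, SLcoeff_phi_mul τ φ t hcomm hbasis, SLcoeff_mul_tz τ φ t hcomm hbasis,
      sub_neg_eq_add]
  have hp0 : SLcoeff φ t hbasis 0 p = 1 := by
    rw [hpc, zero_add, ← hc, inv_mul_cancel₀ hcne]
  have hpne : p ≠ 0 := by
    intro h
    rw [h, map_zero] at hp0
    exact zero_ne_one hp0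
  have hpneg : ∀ k : ℤ, k < 0 → SLcoeff φ t hbasis k p = 0 := by
    intro k hk
    rw [hpc, SLcoeff_eq_zero_of_lt_inf φ t hbasis hx0 (by omega), mul_zero]
  have hpinf : SLinf φ t hbasis p = 0 := by
    refine le_antisymm (SLinf_le φ t hbasis hpne (by rw [hp0]; exact one_ne_zero)) ?_
    by_contra h
    push_neg at h
    exact SLinf_coeff_ne_zero φ t hbasis hpne (hpneg _ h)
  have hpsup : SLsup φ t hbasis p = SLsup φ t hbasis x - μ := by
    refine le_antisymm ?_ ?_
    · by_contra h
      push_neg at h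
      refine SLsup_coeff_ne_zero φ t hbasis hpne ?_
      rw [hpc, SLcoeff_eq_zero_of_sup_lt φ t hbasis hx0 (by omega), mul_zero]
    · apply le_SLsup φ t hbasis hpne
      rw [hpc, sub_add_cancel]
      exact mul_ne_zero (inv_ne_zero hcne) (SLsup_coeff_ne_zero φ t hbasis hx0)
  have hNn : SLsup φ t hbasis p = (n : ℤ) := by
    have h2 := SLinf_le_SLsup φ t hbasis hx0
    omega
  clear hp
  clear_value p
  -- minimality in vanishing form
  have hmin0 : ∀ y : R, y ∈ I → (∀ k : ℤ, k ≤ 0 → SLcoeff φ t hbasis k y = 0) →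
      (∀ k : ℤ, SLsup φ t hbasis p < k → SLcoeff φ t hbasis k y = 0) → y = 0 := by
    intro y hyI hlo hhi
    by_contra hy
    have h1 : 1 ≤ SLinf φ t hbasis y := by
      by_contra h
      push_neg at h
      exact SLinf_coeff_ne_zero φ t hbasis hy (hlo _ (by omega))
    have h2 : SLsup φ t hbasis y ≤ SLsup φ t hbasis p := by
      by_contra h
      push_neg at h
      exact SLsup_coeff_ne_zero φ t hbasis hy (hhi _ h)
    have h3 := hminspan y hyI hy
    omega
  -- commutes with φ d
  have hφp : ∀ d : D, p * φ d = φ d * p := by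
    intro d
    have hq : p * φ d - φ d * p = 0 := by
      refine hmin0 _ (I.sub_mem (I.mul_mem_right _ _ hpI) (I.mul_mem_left _ _ hpI)) ?_ ?_
      · intro k hk
        rw [map_sub, SLcoeff_mul_phi τ φ t hcomm hbasis, SLcoeff_phi_mul τ φ t hcomm hbasis]
        rcases lt_or_eq_of_le hk with h | h
        · rw [hpneg k h, zero_mul, mul_zero, sub_zero]
        · subst h
          rw [hp0, one_mul, mul_one, zpow_zero, SLauxOneApply, sub_self]
      · intro k hk
        rw [map_sub, SLcoeff_mul_phi τ φ t hcomm hbasis, SLcoeff_phi_mul τ φ t hcomm hbasis,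
          SLcoeff_eq_zero_of_sup_lt φ t hbasis hpne hk, zero_mul, mul_zero, sub_zero]
    exact sub_eq_zero.mp hq
  -- commutes with t
  have htp : (t : R) * p = p * (t : R) := by
    have hq : (t : R) * p * ((t⁻¹ : Rˣ) : R) - p = 0 := by
      refine hmin0 _ (I.sub_mem (I.mul_mem_right _ _ (I.mul_mem_left _ _ hpI)) hpI) ?_ ?_
      · intro k hk
        rw [map_sub, SLcoeff_conj τ φ t hcomm hbasis]
        rcases lt_or_eq_of_le hk with h | h
        · rw [hpneg k h, map_zero, sub_zero]
        · subst h
          rw [hp0, map_one, sub_self]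
      · intro k hk
        rw [map_sub, SLcoeff_conj τ φ t hcomm hbasis,
          SLcoeff_eq_zero_of_sup_lt φ t hbasis hpne hk, map_zero, sub_zero]
    have hq2 := sub_eq_zero.mp hq
    have h3 := congrArg (· * (t : R)) hq2
    rw [mul_assoc, Units.inv_mul, mul_one] at h3
    exact h3
  have hinvp : ((t⁻¹ : Rˣ) : R) * p = p * ((t⁻¹ : Rˣ) : R) := by
    have h1 : ((t⁻¹ : Rˣ) : R) * ((t : R) * p) * ((t⁻¹ : Rˣ) : R)
        = ((t⁻¹ : Rˣ) : R) * (p * (t : R)) * ((t⁻¹ : Rˣ) : R) := by rw [htp]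
    rw [← mul_assoc, Units.inv_mul, one_mul] at h1
    rw [mul_assoc ((t⁻¹ : Rˣ) : R) (p * (t : R)), mul_assoc p (t : R),
      Units.mul_inv, mul_one] at h1
    exact h1.symm
  have htzp : ∀ i : ℤ, ((t ^ i : Rˣ) : R) * p = p * ((t ^ i : Rˣ) : R) := by
    intro i
    induction i using Int.induction_on with
    | zero => rw [zpow_zero, Units.val_one, one_mul, mul_one]
    | succ i ih =>
        rw [zpow_add_one, Units.val_mul, mul_assoc, htp, ← mul_assoc, ih, mul_assoc]
    | pred i ih =>
        rw [zpow_sub_one, Units.val_mul, mul_assoc, hinvp, ← mul_assoc, ih, mul_assoc]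
  have hcen : p ∈ Set.center R := by
    rw [Semigroup.mem_center_iff]
    intro g
    have hmono : ∀ (i : ℤ) (cc : D), (φ cc * ((t ^ i : Rˣ) : R)) * p
        = p * (φ cc * ((t ^ i : Rˣ) : R)) := by
      intro i cc
      rw [mul_assoc, htzp i, ← mul_assoc, ← hφp cc, mul_assoc]
    calc g * p = ((SLrep φ t hbasis g).sum fun i cc => φ cc * ((t ^ i : Rˣ) : R)) * p := by
          conv_lhs => rw [SLrep_spec φ t hbasis g]
      _ = (SLrep φ t hbasis g).sum fun i cc => (φ cc * ((t ^ i : Rˣ) : R)) * p := by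
          rw [Finsupp.sum_mul]
      _ = (SLrep φ t hbasis g).sum fun i cc => p * (φ cc * ((t ^ i : Rˣ) : R)) :=
          Finsupp.sum_congr fun i _ => hmono i _
      _ = p * ((SLrep φ t hbasis g).sum fun i cc => φ cc * ((t ^ i : Rˣ) : R)) := by
          rw [Finsupp.mul_sum]
      _ = p * g := by conv_rhs => rw [SLrep_spec φ t hbasis g]
  -- p is not 1 (otherwise I = ⊤)
  have hNpos : 1 ≤ SLsup φ t hbasis p := by
    by_contra h
    push_neg at h
    have hsup0 : SLsup φ t hbasis p = 0 := by
      have := SLinf_le_SLsup φ t hbasis hpne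
      omega
    have hp1 : p = 1 := by
      have := SLconst φ t hbasis (x := p) (fun k hk => by
        rcases lt_or_gt_of_ne hk with h1 | h1
        · exact hpneg k h1
        · exact SLcoeff_eq_zero_of_sup_lt φ t hbasis hpne (by omega))
      rw [hp0, map_one] at this
      exact this
    exact htop (TwoSidedIdeal.eq_top I (hp1 ▸ hpI))
  -- division algorithm
  have hdvd : ∀ m : ℕ, ∀ y : R, y ∈ I → (∀ k : ℤ, k < 0 → SLcoeff φ t hbasis k y = 0) →
      (∀ k : ℤ, (m : ℤ) < k → SLcoeff φ t hbasis k y = 0) → ∃ r : R, y = r * p := by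
    intro m
    induction m using Nat.strong_induction_on with
    | _ m ih =>
    intro y hyI hneg hup
    by_cases hy : y = 0
    · exact ⟨0, by rw [hy, zero_mul]⟩
    have hsy_le : SLsup φ t hbasis y ≤ (m : ℤ) := by
      by_contra h
      push_neg at h
      exact SLsup_coeff_ne_zero φ t hbasis hy (hup _ h)
    have hinfy : 0 ≤ SLinf φ t hbasis y := by
      by_contra h
      push_neg at h
      exact SLinf_coeff_ne_zero φ t hbasis hy (hneg _ h)
    have hspan := hminspan y hyI hy
    have hNy : SLsup φ t hbasis p ≤ SLsup φ t hbasis y := by omega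
    set j := SLsup φ t hbasis y - SLsup φ t hbasis p with hj
    have hvne : (τ ^ j) (SLcoeff φ t hbasis (SLsup φ t hbasis p) p) ≠ 0 :=
      (map_ne_zero_iff _ (τ ^ j).injective).mpr (SLsup_coeff_ne_zero φ t hbasis hpne)
    set e := SLcoeff φ t hbasis (SLsup φ t hbasis y) y
      * ((τ ^ j) (SLcoeff φ t hbasis (SLsup φ t hbasis p) p))⁻¹ with he
    set z := φ e * ((t ^ j : Rˣ) : R) * p with hzdef
    have hzI : z ∈ I := I.mul_mem_left _ _ hpI
    have hzc : ∀ k : ℤ, SLcoeff φ t hbasis k z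
        = e * (τ ^ j) (SLcoeff φ t hbasis (k - j) p) := by
      intro k
      rw [hzdef, SLcoeff_monomial_mul τ φ t hcomm hbasis]
    have htopc : SLcoeff φ t hbasis (SLsup φ t hbasis y) z
        = SLcoeff φ t hbasis (SLsup φ t hbasis y) y := by
      rw [hzc, show SLsup φ t hbasis y - j = SLsup φ t hbasis p by omega, he,
        mul_assoc, inv_mul_cancel₀ hvne, mul_one]
    set y' := y - z with hy'def
    have hy'I : y' ∈ I := I.sub_mem hyI hzI
    have hneg' : ∀ k : ℤ, k < 0 → SLcoeff φ t hbasis k y' = 0 := by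
      intro k hk
      rw [hy'def, map_sub, hneg k hk, hzc, hpneg _ (by omega), map_zero, mul_zero, sub_zero]
    have hup' : ∀ k : ℤ, SLsup φ t hbasis y - 1 < k → SLcoeff φ t hbasis k y' = 0 := by
      intro k hk
      rw [hy'def, map_sub]
      by_cases hks : k = SLsup φ t hbasis y
      · rw [hks, htopc, sub_self]
      · rw [SLcoeff_eq_zero_of_sup_lt φ t hbasis hy (by omega), hzc,
          SLcoeff_eq_zero_of_sup_lt φ t hbasis hpne (by omega), map_zero, mul_zero, sub_zero]
    have hm' : (SLsup φ t hbasis y - 1).toNat < m := by omega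
    have hcast : ((SLsup φ t hbasis y - 1).toNat : ℤ) = SLsup φ t hbasis y - 1 := by omega
    obtain ⟨r, hr⟩ := ih _ hm' y' hy'I hneg' (fun k hk => hup' k (by omega))
    refine ⟨r + φ e * ((t ^ j : Rˣ) : R), ?_⟩
    rw [add_mul, ← hr, ← hzdef, hy'def]
    abel
  -- membership characterization
  have hmem : ∀ y : R, y ∈ I ↔ ∃ r : R, y = r * p := by
    intro y
    constructor
    · intro hyI
      by_cases hy : y = 0
      · exact ⟨0, by rw [hy, zero_mul]⟩
      set μy := SLinf φ t hbasis y with hμy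
      set w := y * ((t ^ (-μy) : Rˣ) : R) with hwdef
      have hwI : w ∈ I := I.mul_mem_right _ _ hyI
      have hwc : ∀ k : ℤ, SLcoeff φ t hbasis k w = SLcoeff φ t hbasis (k + μy) y := by
        intro k
        rw [hwdef, SLcoeff_mul_tz τ φ t hcomm hbasis, sub_neg_eq_add]
      have hinfsup := SLinf_le_SLsup φ t hbasis hy
      have hneg : ∀ k : ℤ, k < 0 → SLcoeff φ t hbasis k w = 0 := by
        intro k hk
        rw [hwc, SLcoeff_eq_zero_of_lt_inf φ t hbasis hy (by omega)]
      have hup : ∀ k : ℤ, (((SLsup φ t hbasis y - μy).toNat : ℤ)) < k →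
          SLcoeff φ t hbasis k w = 0 := by
        intro k hk
        rw [hwc, SLcoeff_eq_zero_of_sup_lt φ t hbasis hy (by omega)]
      obtain ⟨r, hr⟩ := hdvd _ w hwI hneg hup
      refine ⟨r * ((t ^ μy : Rˣ) : R), ?_⟩
      calc y = y * 1 := (mul_one y).symm
        _ = y * (((t ^ (-μy) : Rˣ) : R) * ((t ^ μy : Rˣ) : R)) := by
            rw [← Units.val_mul, ← zpow_add, neg_add_cancel, zpow_zero, Units.val_one]
        _ = w * ((t ^ μy : Rˣ) : R) := by rw [hwdef, ← mul_assoc]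
        _ = (r * p) * ((t ^ μy : Rˣ) : R) := by rw [hr]
        _ = r * (p * ((t ^ μy : Rˣ) : R)) := by rw [mul_assoc]
        _ = r * (((t ^ μy : Rˣ) : R) * p) := by rw [htzp μy]
        _ = (r * ((t ^ μy : Rˣ) : R)) * p := by rw [mul_assoc]
    · rintro ⟨r, rfl⟩
      exact I.mul_mem_left r p hpI
  exact ⟨p, hpI, hcen, hp0, hpneg, hpne, hpinf, hNpos, hmem⟩

omit hcomm in
lemma SLsup_one : SLsup φ t hbasis (1 : R) = 0 := by
  rw [← map_one φ]
  exact SLsup_phi φ t hbasis one_ne_zero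

omit hcomm in
lemma SLinf_one : SLinf φ t hbasis (1 : R) = 0 := by
  rw [← map_one φ]
  exact SLinf_phi φ t hbasis one_ne_zero

end

/-- Let `D` be a division ring, `τ` an automorphism of `D`, and `R = D[t^{±1}; τ]` the
skew Laurent polynomial ring, axiomatized by a ring embedding `φ : D → R` and a unit `t`
with `t · φ d = φ (τ d) · t` and unique representation of elements as finite sums
`Σ φ (a i) * t ^ i`, `i : ℤ`. Let `I` be a non-zero proper two-sided ideal of `R`. Then
there is a non-constant `p` in `S = Z(R) ∩ D[t;τ]` (i.e. a central element supported in
non-negative degrees) with non-zero constant term such that `I = R p`; moreover, `I` is a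
maximal two-sided ideal if and only if `p` is irreducible in `S`, i.e. `p` is not a
product of two non-constant elements of `S`. -/
theorem twoSidedIdeal_skewLaurent
    (D R : Type) [DivisionRing D] [Ring R] (τ : RingAut D) (φ : D →+* R) (t : Rˣ)
    (hcomm : ∀ d : D, (t : R) * φ d = φ (τ d) * (t : R))
    (hbasis : ∀ x : R, ∃! a : ℤ →₀ D,
      x = a.sum fun i c => φ c * ((t ^ i : Rˣ) : R))
    (I : TwoSidedIdeal R) (hbot : I ≠ ⊥) (htop : I ≠ ⊤) :
    ∃ (p : R) (a : ℤ →₀ D),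
      p = (a.sum fun i c => φ c * ((t ^ i : Rˣ) : R)) ∧
      p ∈ Set.center R ∧
      (∀ i : ℤ, i < 0 → a i = 0) ∧
      a 0 ≠ 0 ∧
      (∃ i : ℤ, i ≠ 0 ∧ a i ≠ 0) ∧
      (I : Set R) = {x : R | ∃ r : R, x = r * p} ∧
      (IsCoatom I ↔ ¬ ∃ r q : R,
        (r ∈ Set.center R ∧ ∃ ar : ℤ →₀ D, (∀ i : ℤ, i < 0 → ar i = 0) ∧
          r = ar.sum fun i c => φ c * ((t ^ i : Rˣ) : R)) ∧
        (q ∈ Set.center R ∧ ∃ aq : ℤ →₀ D, (∀ i : ℤ, i < 0 → aq i = 0) ∧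
          q = aq.sum fun i c => φ c * ((t ^ i : Rˣ) : R)) ∧
        (¬ ∃ d : D, r = φ d) ∧ (¬ ∃ d : D, q = φ d) ∧ p = r * q) := by
  classical
  obtain ⟨p, hpI, hpcen, hp0, hpneg, hpne, hpinf, hpsup1, hpmem⟩ :=
    SLgen τ φ t hcomm hbasis I hbot htop
  refine ⟨p, SLrep φ t hbasis p, SLrep_spec φ t hbasis p, hpcen,
    fun i hi => hpneg i hi,
    fun h => one_ne_zero (hp0.symm.trans h),
    ⟨SLsup φ t hbasis p, by omega, SLsup_coeff_ne_zero φ t hbasis hpne⟩,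
    Set.ext fun x => by rw [SetLike.mem_coe]; exact hpmem x, ?_⟩
  constructor
  · -- coatom → irreducible
    rintro hco ⟨r, q, ⟨hrcen, ar, harneg, harsum⟩, ⟨hqcen, aq, haqneg, haqsum⟩,
      hrnc, hqnc, hpeq⟩
    have hrrep : SLrep φ t hbasis r = ar := SLrep_unique φ t hbasis harsum
    have hqrep : SLrep φ t hbasis q = aq := SLrep_unique φ t hbasis haqsum
    have hrneg : ∀ k : ℤ, k < 0 → SLcoeff φ t hbasis k r = 0 := by
      intro k hk
      show SLrep φ t hbasis r k = 0
      rw [hrrep]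
      exact harneg k hk
    have hqneg : ∀ k : ℤ, k < 0 → SLcoeff φ t hbasis k q = 0 := by
      intro k hk
      show SLrep φ t hbasis q k = 0
      rw [hqrep]
      exact haqneg k hk
    have hrne : r ≠ 0 := fun h => hpne (by rw [hpeq, h, zero_mul])
    have hqne : q ≠ 0 := fun h => hpne (by rw [hpeq, h, mul_zero])
    have hrinf0 : 0 ≤ SLinf φ t hbasis r := by
      by_contra h
      push_neg at h
      exact SLinf_coeff_ne_zero φ t hbasis hrne (hrneg _ h)
    have hqinf0 : 0 ≤ SLinf φ t hbasis q := by
      by_contra h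
      push_neg at h
      exact SLinf_coeff_ne_zero φ t hbasis hqne (hqneg _ h)
    have hinfadd : SLinf φ t hbasis r + SLinf φ t hbasis q = 0 := by
      have h1 := SLinf_mul τ φ t hcomm hbasis hrne hqne
      rw [← hpeq, hpinf] at h1
      omega
    have hsupadd : SLsup φ t hbasis r + SLsup φ t hbasis q = SLsup φ t hbasis p := by
      have h1 := SLsup_mul τ φ t hcomm hbasis hrne hqne
      rw [← hpeq] at h1
      omega
    have hrsup1 : 1 ≤ SLsup φ t hbasis r := by
      by_contra h
      push_neg at h
      have h1 := SLinf_le_SLsup φ t hbasis hrne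
      refine hrnc ⟨SLcoeff φ t hbasis 0 r, SLconst φ t hbasis fun k hk => ?_⟩
      rcases lt_or_gt_of_ne hk with h2 | h2
      · exact hrneg k h2
      · exact SLcoeff_eq_zero_of_sup_lt φ t hbasis hrne (by omega)
    have hqsup1 : 1 ≤ SLsup φ t hbasis q := by
      by_contra h
      push_neg at h
      have h1 := SLinf_le_SLsup φ t hbasis hqne
      refine hqnc ⟨SLcoeff φ t hbasis 0 q, SLconst φ t hbasis fun k hk => ?_⟩
      rcases lt_or_gt_of_ne hk with h2 | h2
      · exact hqneg k h2
      · exact SLcoeff_eq_zero_of_sup_lt φ t hbasis hqne (by omega)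
    have hrq : q * r = r * q := Semigroup.mem_center_iff.mp hrcen q
    set J : TwoSidedIdeal R := TwoSidedIdeal.mk' {x : R | ∃ s : R, x = s * r}
      ⟨0, (zero_mul r).symm⟩
      (by rintro x y ⟨s1, rfl⟩ ⟨s2, rfl⟩; exact ⟨s1 + s2, (add_mul s1 s2 r).symm⟩)
      (by rintro x ⟨s1, rfl⟩; exact ⟨-s1, (neg_mul s1 r).symm⟩)
      (by rintro x y ⟨s1, rfl⟩; exact ⟨x * s1, (mul_assoc x s1 r).symm⟩)
      (by
        rintro x y ⟨s1, rfl⟩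
        refine ⟨s1 * y, ?_⟩
        rw [mul_assoc, ← Semigroup.mem_center_iff.mp hrcen y, ← mul_assoc]) with hJ
    have hJmem : ∀ x : R, x ∈ J ↔ ∃ s : R, x = s * r := by
      intro x
      rw [hJ, TwoSidedIdeal.mem_mk']
      rfl
    have hIJ : I ≤ J := by
      rw [TwoSidedIdeal.le_iff]
      intro x hx
      rw [SetLike.mem_coe] at hx ⊢
      obtain ⟨s, hs⟩ := (hpmem x).mp hx
      refine (hJmem x).mpr ⟨s * q, ?_⟩
      rw [hs, hpeq, ← hrq, ← mul_assoc]
    have hne1 : I ≠ J := by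
      intro h
      have hrJ : r ∈ J := (hJmem r).mpr ⟨1, (one_mul r).symm⟩
      rw [← h] at hrJ
      obtain ⟨s, hs⟩ := (hpmem r).mp hrJ
      have hsne : s ≠ 0 := fun h0 => hrne (by rw [hs, h0, zero_mul])
      have h1 := SLsup_mul τ φ t hcomm hbasis hsne hpne
      rw [← hs] at h1
      have h2 := SLinf_mul τ φ t hcomm hbasis hsne hpne
      rw [← hs] at h2
      have h3 := SLinf_le_SLsup φ t hbasis hsne
      omega
    have hJtop : J ≠ ⊤ := by
      intro h
      have h1J : (1 : R) ∈ J := by rw [h]; exact TwoSidedIdeal.mem_top R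
      obtain ⟨s, hs⟩ := (hJmem 1).mp h1J
      have hsne : s ≠ 0 := by
        intro h0
        rw [h0, zero_mul] at hs
        exact SLone_ne_zero φ t hbasis hs
      have h1 := SLsup_mul τ φ t hcomm hbasis hsne hrne
      rw [← hs, SLsup_one φ t hbasis] at h1
      have h2 := SLinf_mul τ φ t hcomm hbasis hsne hrne
      rw [← hs, SLinf_one φ t hbasis] at h2
      have h3 := SLinf_le_SLsup φ t hbasis hsne
      omega
    exact hJtop (hco.2 J (lt_of_le_of_ne hIJ hne1))
  · -- irreducible → coatom
    intro hnf
    refine ⟨htop, ?_⟩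
    intro J hIJ
    by_contra hJtop
    have hJbot : J ≠ ⊥ := by
      intro h
      rw [h] at hIJ
      exact not_lt_bot hIJ
    obtain ⟨p', hp'J, hp'cen, hp'0, hp'neg, hp'ne, hp'inf, hp'sup, hp'mem⟩ :=
      SLgen τ φ t hcomm hbasis J hJbot hJtop
    have hpJ : p ∈ J := TwoSidedIdeal.le_iff.mp hIJ.le hpI
    obtain ⟨s, hs⟩ := (hp'mem p).mp hpJ
    have hsne : s ≠ 0 := fun h => hpne (by rw [hs, h, zero_mul])
    have hscen : s ∈ Set.center R := by
      rw [Semigroup.mem_center_iff]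
      intro g
      have h1 : (g * s) * p' = (s * g) * p' := by
        calc (g * s) * p' = g * (s * p') := mul_assoc g s p'
          _ = g * p := by rw [← hs]
          _ = p * g := Semigroup.mem_center_iff.mp hpcen g
          _ = (s * p') * g := by rw [hs]
          _ = s * (p' * g) := mul_assoc s p' g
          _ = s * (g * p') := by rw [← Semigroup.mem_center_iff.mp hp'cen g]
          _ = (s * g) * p' := (mul_assoc s g p').symm
      by_contra hgs
      exact SLmul_ne_zero τ φ t hcomm hbasis (sub_ne_zero_of_ne hgs) hp'ne
        (by rw [sub_mul, h1, sub_self])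
    have hinfs : SLinf φ t hbasis s = 0 := by
      have h1 := SLinf_mul τ φ t hcomm hbasis hsne hp'ne
      rw [← hs, hpinf, hp'inf] at h1
      omega
    have hsneg : ∀ k : ℤ, k < 0 → SLcoeff φ t hbasis k s = 0 := fun k hk =>
      SLcoeff_eq_zero_of_lt_inf φ t hbasis hsne (by omega)
    have hsnc : ¬ ∃ d : D, s = φ d := by
      rintro ⟨d, hsd⟩
      have hdne : d ≠ 0 := fun h0 => hsne (by rw [hsd, h0, map_zero])
      have hp'eq : p' = φ d⁻¹ * p := by
        rw [hs, hsd, ← mul_assoc, ← map_mul, inv_mul_cancel₀ hdne, map_one, one_mul]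
      have hp'I : p' ∈ I := hp'eq ▸ I.mul_mem_left (φ d⁻¹) p hpI
      have hJI : J ≤ I := by
        rw [TwoSidedIdeal.le_iff]
        intro x hx
        rw [SetLike.mem_coe] at hx ⊢
        obtain ⟨u, hu⟩ := (hp'mem x).mp hx
        rw [hu]
        exact I.mul_mem_left u p' hp'I
      exact hIJ.not_ge hJI
    have hp'nc : ¬ ∃ d : D, p' = φ d := by
      rintro ⟨d, hd⟩
      have hdne : d ≠ 0 := fun h0 => hp'ne (by rw [hd, h0, map_zero])
      have := SLsup_phi φ t hbasis hdne
      rw [← hd] at this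
      omega
    exact hnf ⟨s, p', ⟨hscen, SLrep φ t hbasis s, fun i hi => hsneg i hi,
      SLrep_spec φ t hbasis s⟩,
      ⟨hp'cen, SLrep φ t hbasis p', fun i hi => hp'neg i hi, SLrep_spec φ t hbasis p'⟩,
      hsnc, hp'nc, hs⟩
end

section
/- Let K be a field, n a positive integer, R = K[t]/(t^n), and let rk be any Sylvester matrix rank function on R. Define b_k = rk(t^k+(t^n)) − rk(t^{k+1}+(t^n)) for 0 ≤ k ≤ n−1, and set c_k = k(b_{k−1} − b_k) for 1 ≤ k ≤ n−1 and c_n = n·b_{n−1}. Then all c_k ≥ 0, Σ_{k=1}^n c_k = 1, and rk(t^i+(t^n)) = Σ_{k=i}^n c_k·(k−i)/k for every 0 ≤ i ≤ n−1. -/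
variable {R : Type} [Ring R] (rk : SylvesterMatrixRank R)

lemma mul_fin_one' (a b : R) : !![a] * !![b] = !![a*b] := by
  ext i j
  fin_cases i; fin_cases j; simp [Matrix.mul_apply]

lemma blkdiag (a b : R) :
    ((Matrix.fromBlocks !![a] 0 0 !![b]).submatrix finSumFinEquiv.symm finSumFinEquiv.symm)
      = !![a, 0; 0, b] := by
  ext i j
  fin_cases i <;> fin_cases j <;>
    simp [Matrix.fromBlocks, finSumFinEquiv, Fin.addCases]

lemma blk2 (a b c : R) :
    ((Matrix.fromBlocks !![a] !![c] 0 !![b]).submatrix finSumFinEquiv.symm finSumFinEquiv.symm)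
      = !![a, c; 0, b] := by
  ext i j
  fin_cases i <;> fin_cases j <;>
    simp [Matrix.fromBlocks, finSumFinEquiv, Fin.addCases]

lemma rkl (P Q : Matrix (Fin 2) (Fin 2) R) (h : Q * P = 1) (M : Matrix (Fin 2) (Fin 2) R) :
    rk.rk (P * M) = rk.rk M := by
  refine le_antisymm (rk.rk_mul_right _ _) ?_
  have := rk.rk_mul_right Q (P * M)
  rwa [← mul_assoc, h, one_mul] at this

lemma rkr (P Q : Matrix (Fin 2) (Fin 2) R) (h : P * Q = 1) (M : Matrix (Fin 2) (Fin 2) R) :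
    rk.rk (M * P) = rk.rk M := by
  refine le_antisymm (rk.rk_mul_left _ _) ?_
  have := rk.rk_mul_left (M * P) Q
  rwa [mul_assoc, h, mul_one] at this

lemma rkneg (x : R) : rk.rk !![-x] = rk.rk !![x] := by
  have h1 : (!![(-1 : R)] * !![x]) = !![-x] := by rw [mul_fin_one', neg_one_mul]
  have h2 : (!![(-1 : R)] * !![-x]) = !![x] := by rw [mul_fin_one', neg_one_mul, neg_neg]
  refine le_antisymm ?_ ?_
  · calc rk.rk !![-x] = rk.rk (!![(-1:R)] * !![x]) := by rw [h1]
      _ ≤ rk.rk !![x] := rk.rk_mul_right _ _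
  · calc rk.rk !![x] = rk.rk (!![(-1:R)] * !![-x]) := by rw [h2]
      _ ≤ rk.rk !![-x] := rk.rk_mul_right _ _

lemma key (a b c : R) :
    rk.rk !![a*b] + rk.rk !![b*c] ≤ rk.rk !![b] + rk.rk !![a*b*c] := by
  have hdiag : rk.rk !![a*b*c, 0; 0, b] = rk.rk !![a*b*c] + rk.rk !![b] := by
    rw [← blkdiag]; exact rk.rk_diag _ _
  have e1 : (!![1, a; 0, 1] : Matrix (Fin 2) (Fin 2) R) * !![a*b*c, 0; 0, b]
      = !![a*b*c, a*b; 0, b] := by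
    ext i j; fin_cases i <;> fin_cases j <;>
      simp [Matrix.mul_apply, Fin.sum_univ_two]
  have i1 : (!![1, -a; 0, 1] : Matrix (Fin 2) (Fin 2) R) * !![1, a; 0, 1] = 1 := by
    ext i j; fin_cases i <;> fin_cases j <;>
      simp [Matrix.mul_apply, Fin.sum_univ_two, Matrix.one_apply]
  have e2 : (!![a*b*c, a*b; 0, b] : Matrix (Fin 2) (Fin 2) R) * !![1, 0; -c, 1]
      = !![0, a*b; -(b*c), b] := by
    ext i j; fin_cases i <;> fin_cases j <;>
      simp [Matrix.mul_apply, Fin.sum_univ_two]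
  have i2 : (!![1, 0; -c, 1] : Matrix (Fin 2) (Fin 2) R) * !![1, 0; c, 1] = 1 := by
    ext i j; fin_cases i <;> fin_cases j <;>
      simp [Matrix.mul_apply, Fin.sum_univ_two, Matrix.one_apply]
  have e3 : (!![0, 1; 1, 0] : Matrix (Fin 2) (Fin 2) R) * !![0, a*b; -(b*c), b]
      = !![-(b*c), b; 0, a*b] := by
    ext i j; fin_cases i <;> fin_cases j <;>
      simp [Matrix.mul_apply, Fin.sum_univ_two]
  have i3 : (!![0, 1; 1, 0] : Matrix (Fin 2) (Fin 2) R) * !![0, 1; 1, 0] = 1 := by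
    ext i j; fin_cases i <;> fin_cases j <;>
      simp [Matrix.mul_apply, Fin.sum_univ_two, Matrix.one_apply]
  have htri : rk.rk !![-(b*c)] + rk.rk !![a*b] ≤ rk.rk !![-(b*c), b; 0, a*b] := by
    have := rk.rk_triangle !![-(b*c)] !![a*b] !![b]
    rwa [blk2] at this
  have c1 : rk.rk !![a*b*c, a*b; 0, b] = rk.rk !![a*b*c, 0; 0, b] := by
    rw [← e1]; exact rkl rk _ _ i1 _
  have c2 : rk.rk !![0, a*b; -(b*c), b] = rk.rk !![a*b*c, a*b; 0, b] := by
    rw [← e2]; exact rkr rk _ _ i2 _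
  have c3 : rk.rk !![-(b*c), b; 0, a*b]
      = rk.rk !![0, a*b; -(b*c), b] := by
    rw [← e3]; exact rkl rk _ _ i3 _
  calc rk.rk !![a*b] + rk.rk !![b*c]
      = rk.rk !![-(b*c)] + rk.rk !![a*b] := by rw [rkneg]; ring
    _ ≤ rk.rk !![-(b*c), b; 0, a*b] := htri
    _ = rk.rk !![a*b*c] + rk.rk !![b] := by rw [c3, c2, c1, hdiag]
    _ = rk.rk !![b] + rk.rk !![a*b*c] := by ring

lemma realpart (n : ℕ) (hn : 1 ≤ n) (r b c : ℕ → ℝ)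
    (hr0 : r 0 = 1) (hrn : r n = 0) (hrpos : ∀ i, 0 ≤ r i)
    (hconv : ∀ i, r (i+1) + r (i+1) ≤ r i + r (i+2))
    (hb : ∀ k, b k = r k - r (k+1))
    (hc : ∀ k : ℕ, 1 ≤ k → k ≤ n - 1 → c k = k * (b (k - 1) - b k))
    (hcn : c n = n * b (n - 1)) :
    (∀ k : ℕ, 1 ≤ k → k ≤ n → 0 ≤ c k) ∧
    (∑ k ∈ Finset.Icc 1 n, c k = 1) ∧
    (∀ i : ℕ, i ≤ n - 1 →
      r i = ∑ k ∈ Finset.Icc 1 n, if i ≤ k then c k * (((k : ℝ) - i) / k) else 0) := by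
  have hbmono : ∀ k, b (k+1) ≤ b k := by
    intro k
    have := hconv k
    rw [hb, hb]
    linarith
  have hblast : 0 ≤ b (n-1) := by
    have h1 : n - 1 + 1 = n := by omega
    rw [hb, h1, hrn]
    have := hrpos (n-1)
    linarith
  set S : ℕ → ℝ := fun i => ∑ k ∈ Finset.Icc 1 n, if i ≤ k then c k * (((k : ℝ) - i) / k) else 0
    with hS
  have hstep : ∀ i, i + 1 ≤ n → S i = S (i+1) + b i := by
    intro i hi
    have hsub : S i - S (i+1) = ∑ k ∈ Finset.Icc 1 n, (if i+1 ≤ k then c k / k else 0) := by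
      rw [hS]
      simp only
      rw [← Finset.sum_sub_distrib]
      refine Finset.sum_congr rfl fun k hk => ?_
      simp only [Finset.mem_Icc] at hk
      have hk0 : (k : ℝ) ≠ 0 := by
        have : (0:ℝ) < k := by exact_mod_cast hk.1
        linarith
      by_cases h2 : i + 1 ≤ k
      · rw [if_pos h2, if_pos (by omega : i ≤ k), if_pos h2]
        push_cast
        field_simp
        ring
      · by_cases h3 : i ≤ k
        · have hki : k = i := by omega
          rw [hki]
          simp
        · simp [h2, h3]
    have hfil : (Finset.Icc 1 n).filter (fun k => i+1 ≤ k) = Finset.Icc (i+1) n := by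
      ext x
      simp only [Finset.mem_filter, Finset.mem_Icc]
      omega
    rw [← Finset.sum_filter, hfil] at hsub
    rw [← Finset.Ico_add_one_right_eq_Icc, Finset.sum_Ico_succ_top hi] at hsub
    have hmid : ∑ k ∈ Finset.Ico (i+1) n, c k / k = b i - b (n-1) := by
      have h1 : ∀ k ∈ Finset.Ico (i+1) n, c k / k = b (k-1) - b k := by
        intro k hk
        simp only [Finset.mem_Ico] at hk
        have hk0 : (k : ℝ) ≠ 0 := by
          have : (0:ℝ) < k := by exact_mod_cast (by omega : 0 < k)
          linarith
        rw [hc k (by omega) (by omega), mul_div_cancel_left₀ _ hk0]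
      rw [Finset.sum_congr rfl h1, Finset.sum_Ico_eq_sum_range]
      have h2 : ∀ j ∈ Finset.range (n - (i+1)),
          b (i+1+j-1) - b (i+1+j) = b (i+j) - b (i+(j+1)) := by
        intro j _
        congr 2 <;> omega
      rw [Finset.sum_congr rfl h2, Finset.sum_range_sub' (fun m => b (i+m))]
      congr 2
      omega
    have hlast : c n / n = b (n-1) := by
      have hn0 : (n : ℝ) ≠ 0 := by
        have : (0:ℝ) < n := by exact_mod_cast hn
        linarith
      rw [hcn, mul_div_cancel_left₀ _ hn0]
    rw [hmid, hlast] at hsub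
    linarith
  have key : ∀ d i, i + d = n → S i = r i := by
    intro d
    induction d with
    | zero =>
      intro i hi
      have hin : i = n := by omega
      rw [hin, hrn, hS]
      refine Finset.sum_eq_zero fun k hk => ?_
      simp only [Finset.mem_Icc] at hk
      split_ifs with h
      · have hkn : k = n := by omega
        rw [hkn]
        simp
      · rfl
    | succ d ih =>
      intro i hi
      have h1 : (i+1) + d = n := by omega
      have h2 := ih (i+1) h1
      have h3 := hstep i (by omega)
      have h4 := hb i
      rw [h3, h2]
      linarith
  refine ⟨?_, ?_, ?_⟩
  · intro k h1 h2
    rcases eq_or_lt_of_le h2 with h | h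
    · rw [h, hcn]
      exact mul_nonneg (Nat.cast_nonneg _) hblast
    · rw [hc k h1 (by omega)]
      have h5 := hbmono (k-1)
      rw [(by omega : k - 1 + 1 = k)] at h5
      have : (0:ℝ) ≤ k := by positivity
      nlinarith
  · have h0 := key n 0 (by omega)
    rw [hS] at h0
    simp only at h0
    rw [hr0] at h0
    rw [← h0]
    refine Finset.sum_congr rfl fun k hk => ?_
    simp only [Finset.mem_Icc] at hk
    have hk0 : (k : ℝ) ≠ 0 := by
      have : (0:ℝ) < k := by exact_mod_cast hk.1
      linarith
    rw [if_pos (Nat.zero_le k)]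
    push_cast
    field_simp
    ring
  · intro i hi
    exact (key (n - i) i (by omega)).symm

open Polynomial in
/-- Let `K` be a field, `n ≥ 1`, `R = K[t]/(t^n)` and `rk` any Sylvester matrix rank
function on `R`. With `b k = rk (t^k) - rk (t^(k+1))`, `c k = k * (b (k-1) - b k)` for
`1 ≤ k ≤ n-1` and `c n = n * b (n-1)`, all the `c k` (for `1 ≤ k ≤ n`) are non-negative,
they add up to `1`, and `rk (t^i) = Σ_{k=i}^{n} c k * (k - i)/k` for all `0 ≤ i ≤ n-1`. -/
theorem rank_convex_combination (K : Type) [Field K] (n : ℕ) (hn : 1 ≤ n)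
    (rk : SylvesterMatrixRank (AdjoinRoot (X ^ n : K[X])))
    (b c : ℕ → ℝ)
    (hb : ∀ k : ℕ, b k = rk.rk !![(AdjoinRoot.root (X ^ n : K[X])) ^ k]
      - rk.rk !![(AdjoinRoot.root (X ^ n : K[X])) ^ (k + 1)])
    (hc : ∀ k : ℕ, 1 ≤ k → k ≤ n - 1 → c k = k * (b (k - 1) - b k))
    (hcn : c n = n * b (n - 1)) :
    (∀ k : ℕ, 1 ≤ k → k ≤ n → 0 ≤ c k) ∧
    (∑ k ∈ Finset.Icc 1 n, c k = 1) ∧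
    (∀ i : ℕ, i ≤ n - 1 →
      rk.rk !![(AdjoinRoot.root (X ^ n : K[X])) ^ i] =
        ∑ k ∈ Finset.Icc 1 n, if i ≤ k then c k * (((k : ℝ) - i) / k) else 0) := by
  set t : AdjoinRoot (X ^ n : K[X]) := AdjoinRoot.root (X ^ n : K[X]) with ht
  set r : ℕ → ℝ := fun i => rk.rk !![t ^ i] with hr
  have hr0 : r 0 = 1 := by
    have h1 : (!![(t ^ 0 : AdjoinRoot (X ^ n : K[X]))]) = 1 := by
      ext i j
      fin_cases i; fin_cases j
      simp [Matrix.one_apply]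
    show rk.rk !![t ^ 0] = 1
    rw [h1, rk.rk_one]
  have htn : t ^ n = 0 := by
    rw [ht, ← AdjoinRoot.mk_X, ← map_pow, AdjoinRoot.mk_self]
  have hrn : r n = 0 := by
    have h1 : (!![(t ^ n : AdjoinRoot (X ^ n : K[X]))]) = 0 := by
      rw [htn]
      ext i j
      fin_cases i; fin_cases j
      simp
    show rk.rk !![t ^ n] = 0
    rw [h1, rk.rk_zero]
  have hrpos : ∀ i, 0 ≤ r i := fun i => rk.rk_nonneg _
  have hconv : ∀ i, r (i+1) + r (i+1) ≤ r i + r (i+2) := by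
    intro i
    have hkey := key rk t (t ^ i) t
    have e1 : t * t ^ i = t ^ (i+1) := (pow_succ' t i).symm
    have e2 : t ^ i * t = t ^ (i+1) := (pow_succ t i).symm
    have e3 : t * t ^ i * t = t ^ (i+2) := by
      rw [e1, ← pow_succ]
    rw [e3, e1, e2] at hkey
    exact hkey
  have hb' : ∀ k, b k = r k - r (k+1) := hb
  exact realpart n hn r b c hr0 hrn hrpos hconv hb' hc hcn
end
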